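/- arXiv:1311.0332 — 8 statements merged into one kernel-verified Lean document; each statement's English description precedes it below -/
import Mathlib

section
/- For all positive integers n and k, Σ over pairs (σ,v) with n dividing σ and v even of p(n,σ,v,k), minus Σ over pairs (σ,v) with n dividing σ and v odd of p(n,σ,v,k), equals n^{k−1}·φ(n), where φ is Euler's totient function. -/
open Finset Polynomial in
theorem lemA (n : ℕ) (hn : 1 < n) (η : ℂ) (hη : IsPrimitiveRoot η n) :
    ∏ j ∈ Finset.Ico 1 n, (1 - η ^ j) = n := by
  have h0 : (0:ℕ) < n := by omega
  have key : (X ^ n - C (1:ℂ)) = ∏ i ∈ Finset.range n, (X - C (η ^ i)) := by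
    simpa using X_pow_sub_C_eq_prod hη h0 (one_pow n)
  have hsplit : ∏ i ∈ Finset.range n, (X - C (η ^ i))
      = (X - C 1) * ∏ i ∈ Finset.Ico 1 n, (X - C (η ^ i)) := by
    rw [Finset.range_eq_Ico, show Finset.Ico 0 n = insert 0 (Finset.Ico 1 n) by
      ext x; simp; omega, Finset.prod_insert (by simp)]
    simp
  have hgeom : (∑ i ∈ Finset.range n, (X:ℂ[X]) ^ i) * (X - 1) = X ^ n - 1 := geom_sum_mul _ _
  have hP : (∑ i ∈ Finset.range n, (X:ℂ[X]) ^ i) = ∏ i ∈ Finset.Ico 1 n, (X - C (η ^ i)) := by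
    have hX1 : (X - (1:ℂ[X])) ≠ 0 := X_sub_C_ne_zero 1
    apply mul_right_cancel₀ hX1
    rw [hgeom]
    rw [show (X^n - 1 : ℂ[X]) = X ^ n - C 1 by simp, key, hsplit]
    simp only [map_one]; ring
  have := congrArg (Polynomial.eval 1) hP
  simpa [Polynomial.eval_prod] using this.symm

theorem lemB (n : ℕ) (hn : 0 < n) (η : ℂ) (hη : IsPrimitiveRoot η n) (σ : ℕ) :
    ∑ d ∈ Finset.range n, η ^ (d * σ) = if n ∣ σ then (n:ℂ) else 0 := by
  simp_rw [pow_mul']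
  by_cases h : n ∣ σ
  · rw [if_pos h]
    have : η ^ σ = 1 := by
      obtain ⟨c, rfl⟩ := h
      rw [pow_mul, hη.pow_eq_one, one_pow]
    simp [this]
  · rw [if_neg h]
    have hne : η ^ σ ≠ 1 := fun hc => h ((hη.pow_eq_one_iff_dvd σ).mp hc)
    rw [geom_sum_eq hne]
    rw [← pow_mul, mul_comm σ n, pow_mul, hη.pow_eq_one, one_pow, sub_self, zero_div]

theorem lemC (n k : ℕ) (hn : 1 < n) (η : ℂ) (hη : IsPrimitiveRoot η n) (d : ℕ) :
    ∏ j ∈ Finset.Ico 1 n, (1 - η ^ (d * j)) = if n.Coprime d then (n:ℂ) else 0 := by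
  by_cases h : n.Coprime d
  · rw [if_pos h]
    have hd : IsPrimitiveRoot (η ^ d) n := hη.pow_of_coprime d h.symm
    simp_rw [pow_mul]
    exact lemA n hn _ hd
  · rw [if_neg h]
    set g := Nat.gcd n d with hg
    have hg1 : 1 < g := by
      rcases Nat.lt_or_ge g 2 with h2 | h2
      · interval_cases g
        · exact absurd (Nat.eq_zero_of_gcd_eq_zero_left hg.symm) (by omega)
        · exact absurd hg.symm h
      · omega
    have hgn : g ∣ n := Nat.gcd_dvd_left n d
    have hgd : g ∣ d := Nat.gcd_dvd_right n d
    refine Finset.prod_eq_zero (i := n / g) ?_ ?_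
    · simp only [Finset.mem_Ico]
      constructor
      · exact Nat.one_le_div_iff (by omega) |>.mpr (Nat.le_of_dvd (by omega) hgn)
      · exact Nat.div_lt_self (by omega) hg1
    · have : η ^ (d * (n / g)) = 1 := by
        have heq : d * (n / g) = n * (d / g) := by
          obtain ⟨c, hc⟩ := hgd
          obtain ⟨m, hm⟩ := hgn
          rw [hm, hc]
          rw [Nat.mul_div_cancel_left m (by omega), Nat.mul_div_cancel_left c (by omega)]
          ring
        rw [heq, pow_mul, hη.pow_eq_one, one_pow]
      rw [this, sub_self]

theorem lemT (n k : ℕ) (hn : 1 < n) (hk : 0 < k) :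
    ∑ A ∈ ((Finset.Ico 1 n) ×ˢ (Finset.range k)).powerset,
      (if n ∣ ∑ e ∈ A, e.1 then ((-1 : ℤ)) ^ A.card else 0)
    = (n:ℤ) ^ (k-1) * (Nat.totient n : ℤ) := by
  have h0 : (0:ℕ) < n := by omega
  have hη := Complex.isPrimitiveRoot_exp n h0.ne'
  set η := Complex.exp (2 * Real.pi * Complex.I / n) with hηdef
  set S := (Finset.Ico 1 n) ×ˢ (Finset.range k) with hS
  set T : ℤ := ∑ A ∈ S.powerset, (if n ∣ ∑ e ∈ A, e.1 then ((-1 : ℤ)) ^ A.card else 0) with hT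
  have key : (n:ℂ) * (T:ℂ) = (Nat.totient n : ℂ) * (n:ℂ)^k := by
    have step1 : (n:ℂ) * (T:ℂ)
        = ∑ d ∈ Finset.range n, ∑ A ∈ S.powerset, ((-1:ℂ)) ^ A.card * η ^ (d * ∑ e ∈ A, e.1) := by
      rw [Finset.sum_comm, hT]
      push_cast
      rw [Finset.mul_sum]
      refine Finset.sum_congr rfl fun A _ => ?_
      rw [← Finset.mul_sum, lemB n h0 η hη]
      by_cases h : n ∣ ∑ e ∈ A, e.1 <;> simp [h] <;> ring
    have step2 : ∀ d, ∑ A ∈ S.powerset, ((-1:ℂ)) ^ A.card * η ^ (d * ∑ e ∈ A, e.1)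
        = (∏ j ∈ Finset.Ico 1 n, (1 - η ^ (d * j)))^k := by
      intro d
      have hps := Finset.prod_sub (fun _ : ℕ × ℕ => (1:ℂ)) (fun e => η ^ (d * e.1)) S
      simp only [Finset.prod_const_one, mul_one] at hps
      have : ∀ A ∈ S.powerset, ((-1:ℂ)) ^ A.card * η ^ (d * ∑ e ∈ A, e.1)
          = (-1:ℂ) ^ A.card * ∏ e ∈ A, η ^ (d * e.1) := by
        intro A _
        rw [Finset.prod_pow_eq_pow_sum, Finset.mul_sum]
      rw [Finset.sum_congr rfl this, ← hps, hS, Finset.prod_product]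
      rw [← Finset.prod_pow]
      refine Finset.prod_congr rfl fun j _ => ?_
      simp
    simp_rw [step1, step2, lemC n k hn η hη]
    have : ∀ d ∈ Finset.range n, (if n.Coprime d then (n:ℂ) else 0)^k
        = (if n.Coprime d then (n:ℂ)^k else 0) := by
      intro d _
      by_cases h : n.Coprime d <;> simp [h, zero_pow hk.ne']
    rw [Finset.sum_congr rfl this, ← Finset.sum_filter, Finset.sum_const, Nat.totient]
    simp [nsmul_eq_mul]
  have hkk : (n:ℂ)^k = (n:ℂ) * (n:ℂ)^(k-1) := by
    conv_lhs => rw [show k = (k-1) + 1 by omega]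
    ring
  rw [hkk] at key
  have hn0 : (n:ℂ) ≠ 0 := Nat.cast_ne_zero.mpr h0.ne'
  have : (T:ℂ) = ((Nat.totient n : ℂ)) * (n:ℂ)^(k-1) :=
    mul_left_cancel₀ hn0 (key.trans (by ring))
  have : (T:ℂ) = (((n:ℤ)^(k-1) * (Nat.totient n : ℤ) : ℤ) : ℂ) := by
    rw [this]; push_cast; ring
  exact_mod_cast this

/-- `p n σ v k` is the number of ways `σ` can be written as a sum of `v` elements chosen
from the multiset in which every integer between `1` and `n-1` appears exactly `k` times:
we count subsets `A` of `{1,…,n-1} × {0,…,k-1}` (the second coordinate labelling copies)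
of size `v` whose first coordinates sum to `σ`. -/
def p (n σ v k : ℕ) : ℕ :=
  (((Finset.Ico 1 n) ×ˢ (Finset.range k)).powerset.filter
    (fun A => A.card = v ∧ ∑ e ∈ A, e.1 = σ)).card

-- basic bounds
theorem pbound (n k : ℕ) (A : Finset (ℕ × ℕ))
    (hA : A ∈ ((Finset.Ico 1 n) ×ˢ (Finset.range k)).powerset) :
    A.card ≤ n * k ∧ (∑ e ∈ A, e.1) ≤ n * k * n := by
  rw [Finset.mem_powerset] at hA
  have hcard : A.card ≤ n * k := by
    calc A.card ≤ ((Finset.Ico 1 n) ×ˢ (Finset.range k)).card := Finset.card_le_card hA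
    _ = (Finset.Ico 1 n).card * k := by rw [Finset.card_product, Finset.card_range]
    _ ≤ n * k := by
        have : (Finset.Ico 1 n).card ≤ n := by rw [Nat.card_Ico]; omega
        exact Nat.mul_le_mul_right k this
  refine ⟨hcard, ?_⟩
  calc (∑ e ∈ A, e.1) ≤ ∑ _e ∈ A, n := by
        refine Finset.sum_le_sum fun e he => ?_
        have := hA he
        rw [Finset.mem_product, Finset.mem_Ico] at this
        omega
    _ = A.card * n := by rw [Finset.sum_const, smul_eq_mul]
    _ ≤ n * k * n := Nat.mul_le_mul_right n hcard

theorem pzero (n σ v k : ℕ) (h : n * k < v ∨ n * k * n < σ) : p n σ v k = 0 := by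
  rw [p, Finset.card_eq_zero, Finset.filter_eq_empty_iff]
  intro A hA
  obtain ⟨h1, h2⟩ := pbound n k A hA
  rintro ⟨rfl, rfl⟩
  omega

theorem lemR (n k : ℕ) (hn : 0 < n) (hk : 0 < k) :
    (∑' σ : ℕ, ∑' v : ℕ, if n ∣ σ ∧ Even v then (p n σ v k : ℤ) else 0) -
      (∑' σ : ℕ, ∑' v : ℕ, if n ∣ σ ∧ Odd v then (p n σ v k : ℤ) else 0)
    = ∑ A ∈ ((Finset.Ico 1 n) ×ˢ (Finset.range k)).powerset,
      (if n ∣ ∑ e ∈ A, e.1 then ((-1 : ℤ)) ^ A.card else 0) := by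
  set N := n * k * n + 1 with hN
  set M := n * k + 1 with hM
  have hz : ∀ (P : ℕ → Prop) [DecidablePred P], ∀ σ v, (M ≤ v ∨ N ≤ σ) →
      (if n ∣ σ ∧ P v then (p n σ v k : ℤ) else 0) = 0 := by
    intro P _ σ v h
    have h0 : p n σ v k = 0 := pzero n σ v k (by omega)
    rw [h0]
    simp
  have htsum : ∀ (P : ℕ → Prop) [DecidablePred P],
      (∑' σ : ℕ, ∑' v : ℕ, if n ∣ σ ∧ P v then (p n σ v k : ℤ) else 0)
      = ∑ σ ∈ Finset.range N, ∑ v ∈ Finset.range M,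
          (if n ∣ σ ∧ P v then (p n σ v k : ℤ) else 0) := by
    intro P _
    have hin : ∀ σ, (∑' v : ℕ, if n ∣ σ ∧ P v then (p n σ v k : ℤ) else 0)
        = ∑ v ∈ Finset.range M, (if n ∣ σ ∧ P v then (p n σ v k : ℤ) else 0) := by
      intro σ
      refine tsum_eq_sum fun v hv => hz P σ v ?_
      rw [Finset.mem_range] at hv; omega
    simp_rw [hin]
    refine tsum_eq_sum fun σ hσ => ?_
    rw [Finset.mem_range] at hσ
    exact Finset.sum_eq_zero fun v _ => hz P σ v (by omega)
  rw [htsum Even, htsum Odd, ← Finset.sum_sub_distrib]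
  simp_rw [← Finset.sum_sub_distrib]
  have hpoint : ∀ σ v, ((if n ∣ σ ∧ Even v then (p n σ v k : ℤ) else 0)
      - (if n ∣ σ ∧ Odd v then (p n σ v k : ℤ) else 0))
      = (if n ∣ σ then ((-1:ℤ))^v else 0) * (p n σ v k : ℤ) := by
    intro σ v
    by_cases hd : n ∣ σ
    · rcases Nat.even_or_odd v with hv | hv
      · simp [hd, hv, Nat.not_odd_iff_even.mpr hv, hv.neg_one_pow]
      · simp [hd, hv, Nat.not_even_iff_odd.mpr hv, hv.neg_one_pow]
    · simp [hd]
  simp_rw [hpoint]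
  have hcast : ∀ σ v, (p n σ v k : ℤ)
      = ∑ A ∈ ((Finset.Ico 1 n) ×ˢ (Finset.range k)).powerset,
          (if A.card = v ∧ (∑ e ∈ A, e.1) = σ then (1:ℤ) else 0) := by
    intro σ v
    rw [p, Finset.card_filter]
    push_cast
    rfl
  simp_rw [hcast, Finset.mul_sum]
  have swap1 : ∀ σ ∈ Finset.range N, (∑ v ∈ Finset.range M,
        ∑ A ∈ ((Finset.Ico 1 n) ×ˢ (Finset.range k)).powerset,
          (if n ∣ σ then ((-1:ℤ))^v else 0) *
            (if A.card = v ∧ (∑ e ∈ A, e.1) = σ then (1:ℤ) else 0))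
      = ∑ A ∈ ((Finset.Ico 1 n) ×ˢ (Finset.range k)).powerset, ∑ v ∈ Finset.range M,
          (if n ∣ σ then ((-1:ℤ))^v else 0) *
            (if A.card = v ∧ (∑ e ∈ A, e.1) = σ then (1:ℤ) else 0) :=
    fun σ _ => Finset.sum_comm
  rw [Finset.sum_congr rfl swap1, Finset.sum_comm]
  refine Finset.sum_congr rfl fun A hA => ?_
  obtain ⟨h1, h2⟩ := pbound n k A hA
  have hc : A.card < M := by omega
  have hs : (∑ e ∈ A, e.1) < N := by omega
  simp [mul_ite, ite_and, Finset.sum_ite_eq, hc, hs]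

theorem statement1 (n k : ℕ) (hn : 0 < n) (hk : 0 < k) :
    (∑' σ : ℕ, ∑' v : ℕ, if n ∣ σ ∧ Even v then (p n σ v k : ℤ) else 0) -
      (∑' σ : ℕ, ∑' v : ℕ, if n ∣ σ ∧ Odd v then (p n σ v k : ℤ) else 0) =
    (n : ℤ) ^ (k - 1) * (Nat.totient n : ℤ) := by
  rw [lemR n k hn hk]
  by_cases h1 : n = 1
  · subst h1
    simp [Finset.Ico_self, Nat.totient_one]
  · exact lemT n k (by omega) hk
end

section
/- Let M be a non-empty finite set of positive integers and let n be a positive integer that does not divide any element of M. Then there exist finite sets X and Y of non-negative integers which are residue equivalent for M and not residue equivalent for {n}. -/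
/-- Finite sets `X` and `Y` of non-negative integers are residue equivalent for a set `M`
of positive integers if for every `m ∈ M` and every `r` with `0 ≤ r < m`, the number of
elements of `X` congruent to `r` mod `m` equals the number of elements of `Y` congruent
to `r` mod `m`. -/
def ResidueEquiv (X Y : Finset ℕ) (M : Set ℕ) : Prop :=
  ∀ m ∈ M, ∀ r < m,
    (X.filter (fun x => x % m = r)).card = (Y.filter (fun y => y % m = r)).card

lemma pow_mod_eq {ζ : ℂ} {n : ℕ} (hζ : ζ ^ n = 1) (x : ℕ) : ζ ^ x = ζ ^ (x % n) := by
  conv_lhs => rw [← Nat.div_add_mod x n]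
  rw [pow_add, pow_mul, hζ, one_pow, one_mul]

lemma sum_pow_eq_of_resmap {ζ : ℂ} {n : ℕ} (hζ : ζ ^ n = 1) {X Y : Finset ℕ}
    (h : X.val.map (· % n) = Y.val.map (· % n)) :
    ∑ x ∈ X, ζ ^ x = ∑ y ∈ Y, ζ ^ y := by
  have key : ∀ Z : Finset ℕ, ∑ x ∈ Z, ζ ^ x = ((Z.val.map (· % n)).map (fun r => ζ ^ r)).sum := by
    intro Z
    rw [Multiset.map_map, Finset.sum]
    exact congrArg Multiset.sum (Multiset.map_congr rfl (fun x _ => pow_mod_eq hζ x))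
  rw [key, key, h]

lemma count_eq_card_filter (Z : Finset ℕ) (m r : ℕ) :
    Multiset.count r (Z.val.map (· % m)) = (Z.filter (fun x => x % m = r)).card := by
  rw [Multiset.count_map, Finset.card_def, Finset.filter_val]
  congr 1
  exact Multiset.filter_congr (fun x _ => by constructor <;> (intro h; omega))

lemma my_disjUnion_val (s t : Finset ℕ) (h : Disjoint s t) :
    (s.disjUnion t h).val = s.val + t.val := rfl

lemma key {n : ℕ} (hn : 0 < n) {ζ : ℂ} (hζ1 : ∀ l : ℕ, ζ ^ l = 1 ↔ n ∣ l) :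
    ∀ M : Finset ℕ, M.Nonempty → (∀ m ∈ M, 0 < m) → (∀ m ∈ M, ¬ n ∣ m) →
    ∃ X Y : Finset ℕ, (∀ m ∈ M, X.val.map (· % m) = Y.val.map (· % m)) ∧
      ∑ x ∈ X, ζ ^ x ≠ ∑ y ∈ Y, ζ ^ y := by
  intro M
  induction M using Finset.cons_induction with
  | empty => intro h; exact absurd rfl h.ne_empty
  | cons m M' hm IH =>
    intro _ hpos hnd
    have hmpos : 0 < m := hpos m (Finset.mem_cons_self _ _)
    have hmnd : ¬ n ∣ m := hnd m (Finset.mem_cons_self _ _)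
    rcases M'.eq_empty_or_nonempty with hM' | hM'
    · -- base case: M = {m}; take X = {0}, Y = {m}
      subst hM'
      refine ⟨{0}, {m}, ?_, ?_⟩
      · intro m0 hm0
        rw [Finset.mem_cons] at hm0
        rcases hm0 with rfl | h
        · simp
        · exact absurd h (Finset.notMem_empty _)
      · simp only [Finset.sum_singleton, pow_zero]
        intro h
        exact hmnd ((hζ1 m).mp h.symm)
    · obtain ⟨X, Y, hres, hsum⟩ := IH hM' (fun a ha => hpos a (Finset.mem_cons_of_mem ha))
        (fun a ha => hnd a (Finset.mem_cons_of_mem ha))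
      set N := (X ∪ Y).sup id with hN
      set t := m * (1 + n * (N + 1)) with ht
      have htlarge : N < t := by
        have h1 : 1 * (1 + 1 * (N + 1)) ≤ m * (1 + n * (N + 1)) := by
          apply Nat.mul_le_mul hmpos
          have h2 : 1 * (N + 1) ≤ n * (N + 1) := Nat.mul_le_mul_right _ hn
          omega
        omega
      have hmdvd : m ∣ t := Dvd.intro _ rfl
      have hndt : ¬ n ∣ t := by
        intro h
        apply hmnd
        have h2 : n ∣ n * (m * (N + 1)) := Dvd.intro _ rfl
        have h3 : t = m + n * (m * (N + 1)) := by ring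
        rw [h3] at h
        exact (Nat.dvd_add_right h2).mp (by rwa [Nat.add_comm] at h)
      have hbound : ∀ z ∈ X ∪ Y, z < t := by
        intro z hz
        have : z ≤ N := Finset.le_sup (f := id) hz
        omega
      have e : ℕ ↪ ℕ := ⟨fun x => x + t, fun a b h => by simpa using h⟩
      have hdX : Disjoint X (Y.map ⟨fun x => x + t, show Function.Injective (fun x : ℕ => x + t) from fun a b h => by simpa using h⟩) := by
        rw [Finset.disjoint_left]
        intro a haX haM
        rw [Finset.mem_map] at haM
        obtain ⟨y, hy, rfl⟩ := haM
        have := hbound y (Finset.mem_union_right _ hy)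
        have := hbound (y + t) (Finset.mem_union_left _ haX)
        omega
      have hdY : Disjoint Y (X.map ⟨fun x => x + t, show Function.Injective (fun x : ℕ => x + t) from fun a b h => by simpa using h⟩) := by
        rw [Finset.disjoint_left]
        intro a haY haM
        rw [Finset.mem_map] at haM
        obtain ⟨x, hx, rfl⟩ := haM
        have := hbound x (Finset.mem_union_left _ hx)
        have := hbound (x + t) (Finset.mem_union_right _ haY)
        omega
      refine ⟨X.disjUnion _ hdX, Y.disjUnion _ hdY, ?_, ?_⟩
      · intro m0 hm0
        rw [my_disjUnion_val, my_disjUnion_val, Finset.map_val, Finset.map_val,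
          Multiset.map_add, Multiset.map_add, Multiset.map_map, Multiset.map_map]
        simp only [Function.Embedding.coeFn_mk]
        rw [Finset.mem_cons] at hm0
        rcases hm0 with rfl | hm0
        · -- mod m: shifting by t (a multiple of m) doesn't change residues
          have hshift : ∀ (Z : Finset ℕ),
              Z.val.map ((· % m0) ∘ (fun x => x + t)) = Z.val.map (· % m0) := by
            intro Z
            apply Multiset.map_congr rfl
            intro x _
            obtain ⟨c, hc⟩ := hmdvd
            show (x + t) % m0 = x % m0
            rw [hc, Nat.add_mul_mod_self_left]
          rw [hshift, hshift]
          rw [add_comm]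
        · -- mod m0 ∈ M': use IH
          have hIH := hres m0 hm0
          have hshift : ∀ (Z : Finset ℕ),
              Z.val.map ((· % m0) ∘ (fun x => x + t)) =
                (Z.val.map (· % m0)).map (fun s => (s + t) % m0) := by
            intro Z
            rw [Multiset.map_map]
            apply Multiset.map_congr rfl
            intro x _
            simp only [Function.comp_apply]
            exact (Nat.mod_add_mod x m0 t).symm
          rw [hshift, hshift, hIH]
      · rw [Finset.sum_disjUnion, Finset.sum_disjUnion, Finset.sum_map, Finset.sum_map]
        simp only [Function.Embedding.coeFn_mk, pow_add]
        rw [← Finset.sum_mul, ← Finset.sum_mul]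
        intro h
        have hζt : ζ ^ t ≠ 1 := fun hh => hndt ((hζ1 t).mp hh)
        have h2 : ((∑ x ∈ X, ζ ^ x) - ∑ y ∈ Y, ζ ^ y) * (1 - ζ ^ t) = 0 := by
          linear_combination h
        rcases mul_eq_zero.mp h2 with h3 | h3
        · exact hsum (sub_eq_zero.mp h3)
        · exact hζt (sub_eq_zero.mp h3).symm

lemma resmap_of_equiv {n : ℕ} (hn : 0 < n) {X Y : Finset ℕ}
    (h : ResidueEquiv X Y {n}) : X.val.map (· % n) = Y.val.map (· % n) := by
  ext a
  rw [count_eq_card_filter, count_eq_card_filter]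
  rcases Nat.lt_or_ge a n with ha | ha
  · exact h n rfl a ha
  · have hz : ∀ Z : Finset ℕ, Z.filter (fun x => x % n = a) = ∅ := by
      intro Z
      apply Finset.filter_false_of_mem
      intro x _
      have := Nat.mod_lt x hn
      omega
    rw [hz, hz]

theorem statement2 (M : Finset ℕ) (hne : M.Nonempty) (hpos : ∀ m ∈ M, 0 < m)
    (n : ℕ) (hn : 0 < n) (hnd : ∀ m ∈ M, ¬ n ∣ m) :
    ∃ X Y : Finset ℕ, ResidueEquiv X Y (M : Set ℕ) ∧ ¬ ResidueEquiv X Y {n} := by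
  have hζ : IsPrimitiveRoot (Complex.exp (2 * Real.pi * Complex.I / n)) n :=
    Complex.isPrimitiveRoot_exp n hn.ne'
  have hζ1 : ∀ l : ℕ, Complex.exp (2 * Real.pi * Complex.I / n) ^ l = 1 ↔ n ∣ l :=
    fun l => hζ.pow_eq_one_iff_dvd l
  obtain ⟨X, Y, hres, hsum⟩ := key hn hζ1 M hne hpos hnd
  refine ⟨X, Y, ?_, ?_⟩
  · intro m hm r hr
    have h := hres m (by exact_mod_cast hm)
    rw [← count_eq_card_filter, ← count_eq_card_filter, h]
  · intro h
    exact hsum (sum_pow_eq_of_resmap ((hζ1 n).mpr dvd_rfl) (resmap_of_equiv hn h))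
end

section
/- Let s be a base, M a finite set of positive integers, and n a positive integer that does not divide any element of M. Then there exist blocks u and v of digits in base s which are block equivalent for M and not block equivalent for {n}, and whose common length is a multiple of each element of M and of n. -/
/-- Number of occurrences of `z` in the finite sequence `w`. -/
def occCount {α : Type*} [DecidableEq α] {L : ℕ} (w : Fin L → α) (z : α) : ℕ :=
  (Finset.univ.filter (fun i => w i = z)).card

/-- `chunk w m` is `(w; m)`: the sequence of `L / m` consecutive blocks of length `m`
whose concatenation is the largest prefix of `w` whose length is a multiple of `m`. -/
def chunk {s L : ℕ} (w : Fin L → Fin s) (m : ℕ) : Fin (L / m) → (Fin m → Fin s) :=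
  fun i j => w ⟨i.val * m + j.val, by
    have h1 : i.val + 1 ≤ L / m := i.isLt
    have h2 : (i.val + 1) * m ≤ L / m * m := Nat.mul_le_mul_right m h1
    have h3 : L / m * m ≤ L := Nat.div_mul_le_self L m
    have h4 : i.val * m + m = (i.val + 1) * m := by ring
    have h5 : j.val < m := j.isLt
    omega⟩

open Finset

/-- counts agree along an involution matching values -/
lemma occCount_eq_of_invol {α : Type*} [DecidableEq α] {L : ℕ} (f g : Fin L → α)
    (π : Fin L → Fin L) (hπ : ∀ i, π (π i) = i) (hfg : ∀ i, f i = g (π i)) (z : α) :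
    occCount f z = occCount g z := by
  classical
  unfold occCount
  refine Finset.card_bij (fun i _ => π i) ?_ ?_ ?_
  · intro a ha
    simp only [mem_filter, mem_univ, true_and] at ha ⊢
    rw [← hfg]; exact ha
  · intro a _ b _ h
    have := congrArg π h; rwa [hπ, hπ] at this
  · intro b hb
    simp only [mem_filter, mem_univ, true_and] at hb
    exact ⟨π b, by simp only [mem_filter, mem_univ, true_and]; rw [hfg (π b), hπ]; exact hb,
      hπ b⟩

/-- the words used in the construction: segment `j` (of length `N`) carries a single `1`
at offset `f j`, provided the condition `c j` holds. -/
def myword (s ℓ N : ℕ) (hs : 1 < s) (c : ℕ → Prop) [DecidablePred c] (f : ℕ → ℕ) :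
    Fin ℓ → Fin s := fun p =>
  if c ((p : ℕ) / N) ∧ (p : ℕ) % N = f ((p : ℕ) / N) then ⟨1, hs⟩ else ⟨0, by omega⟩

lemma divmod_helper {d : ℕ} (hd : 0 < d) (a b t : ℕ) (hb : b < d) :
    (a * d + b = t ↔ a = t / d ∧ b = t % d) := by
  constructor
  · rintro rfl
    constructor
    · rw [Nat.mul_comm a d, Nat.add_comm, Nat.add_mul_div_left b a hd, Nat.div_eq_of_lt hb,
        Nat.zero_add]
    · rw [Nat.mul_comm a d, Nat.add_comm, Nat.add_mul_mod_self_left b d a, Nat.mod_eq_of_lt hb]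
  · rintro ⟨rfl, rfl⟩
    exact Nat.div_add_mod' t d

lemma chunk_myword {s ℓ N d : ℕ} (hs : 1 < s) (c : ℕ → Prop) [DecidablePred c] (f : ℕ → ℕ)
    (hdN : d ∣ N) (hd : 0 < d) (hN : 0 < N) (i : Fin (ℓ / d)) (r : Fin d) :
    chunk (myword s ℓ N hs c f) d i r =
      if c ((i : ℕ) / (N / d)) ∧ ((i : ℕ) % (N / d)) * d + (r : ℕ) = f ((i : ℕ) / (N / d))
      then ⟨1, hs⟩ else ⟨0, by omega⟩ := by
  set Nm := N / d with hNm
  have hNmd : Nm * d = N := Nat.div_mul_cancel hdN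
  have hNm0 : 0 < Nm := Nat.div_pos (Nat.le_of_dvd hN hdN) hd
  have hi : (i : ℕ) = (i : ℕ) / Nm * Nm + (i : ℕ) % Nm := (Nat.div_add_mod' _ _).symm
  set q := (i : ℕ) / Nm
  set x := (i : ℕ) % Nm
  have hx : x < Nm := Nat.mod_lt _ hNm0
  have hrem : x * d + (r : ℕ) < N := by
    have h1 : (x + 1) * d ≤ Nm * d := Nat.mul_le_mul_right d (by omega)
    have h2 : (x + 1) * d = x * d + d := Nat.succ_mul x d
    have h3 := r.isLt
    omega
  have hpos : (i : ℕ) * d + (r : ℕ) = (x * d + (r : ℕ)) + N * q := by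
    calc (i : ℕ) * d + (r : ℕ) = (q * Nm + x) * d + (r : ℕ) := by rw [← hi]
    _ = (x * d + (r : ℕ)) + (Nm * d) * q := by ring
    _ = (x * d + (r : ℕ)) + N * q := by rw [hNmd]
  have hdiv : ((i : ℕ) * d + (r : ℕ)) / N = q := by
    rw [hpos, Nat.add_mul_div_left _ _ hN, Nat.div_eq_of_lt hrem, Nat.zero_add]
  have hmod : ((i : ℕ) * d + (r : ℕ)) % N = x * d + (r : ℕ) := by
    rw [hpos, Nat.add_mul_mod_self_left, Nat.mod_eq_of_lt hrem]
  show myword s ℓ N hs c f ⟨(i : ℕ) * d + (r : ℕ), _⟩ = _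
  unfold myword
  simp only [hdiv, hmod]

/-- counts of an arbitrary block agree between two words when a segment-level
involution matches conditions and offsets mod `d`. -/
lemma perm_count {s ℓ N K d : ℕ} (hs : 1 < s) (c c' : ℕ → Prop) [DecidablePred c]
    [DecidablePred c'] (f : ℕ → ℕ)
    (hdN : d ∣ N) (hd : 0 < d) (hN : 0 < N) (hℓ : ℓ = K * N)
    (hfN : ∀ j, f j < N)
    (flip : ℕ → ℕ) (hflipK : ∀ j < K, flip j < K)
    (hflip2 : ∀ j < K, flip (flip j) = j)
    (hcc : ∀ j < K, (c' (flip j) ↔ c j))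
    (hff : ∀ j < K, f (flip j) % d = f j % d)
    (z : Fin d → Fin s) :
    occCount (chunk (myword s ℓ N hs c f) d) z =
      occCount (chunk (myword s ℓ N hs c' f) d) z := by
  classical
  set Nm := N / d with hNm
  have hNmd : Nm * d = N := Nat.div_mul_cancel hdN
  have hNm0 : 0 < Nm := Nat.div_pos (Nat.le_of_dvd hN hdN) hd
  have hLd : ℓ / d = K * Nm := by rw [hℓ, Nat.mul_div_assoc K hdN]
  have hfd : ∀ j, f j / d < Nm := fun j => by
    rw [Nat.div_lt_iff_lt_mul hd, hNmd]; exact hfN j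
  -- the within-segment transposition
  let τ : ℕ → ℕ → ℕ := fun j x =>
    if x = f j / d then f (flip j) / d else if x = f (flip j) / d then f j / d else x
  have hτlt : ∀ j x, x < Nm → τ j x < Nm := by
    intro j x hx
    simp only [τ]
    split_ifs <;> first | exact hfd _ | exact hx
  have hτinv : ∀ j < K, ∀ x, τ (flip j) (τ j x) = x := by
    intro j hj x
    have h2 : flip (flip j) = j := hflip2 j hj
    simp only [τ, h2]
    split_ifs <;> omega
  -- key div/mod facts
  have key : ∀ a b : ℕ, b < Nm → (a * Nm + b) / Nm = a ∧ (a * Nm + b) % Nm = b := by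
    intro a b hb
    constructor
    · rw [Nat.mul_comm a Nm, Nat.add_comm, Nat.add_mul_div_left b a hNm0,
        Nat.div_eq_of_lt hb, Nat.zero_add]
    · rw [Nat.mul_comm a Nm, Nat.add_comm, Nat.add_mul_mod_self_left b Nm a,
        Nat.mod_eq_of_lt hb]
  have hidx : ∀ i : Fin (ℓ / d), (i : ℕ) / Nm < K := by
    intro i
    have h : (i : ℕ) < K * Nm := lt_of_lt_of_le i.isLt (le_of_eq hLd)
    exact Nat.div_lt_of_lt_mul (by rw [Nat.mul_comm]; exact h)
  -- the chunk-index involution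
  let π : Fin (ℓ / d) → Fin (ℓ / d) := fun i =>
    ⟨flip ((i : ℕ) / Nm) * Nm + τ ((i : ℕ) / Nm) ((i : ℕ) % Nm), by
      apply lt_of_lt_of_le _ (le_of_eq hLd.symm)
      have h1 : flip ((i : ℕ) / Nm) < K := hflipK _ (hidx i)
      have h2 : τ ((i : ℕ) / Nm) ((i : ℕ) % Nm) < Nm := hτlt _ _ (Nat.mod_lt _ hNm0)
      calc flip ((i : ℕ) / Nm) * Nm + τ ((i : ℕ) / Nm) ((i : ℕ) % Nm)
          < flip ((i : ℕ) / Nm) * Nm + Nm := by omega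
        _ = (flip ((i : ℕ) / Nm) + 1) * Nm := by ring
        _ ≤ K * Nm := Nat.mul_le_mul_right Nm (by omega)⟩
  have hπdiv : ∀ i : Fin (ℓ / d), ((π i : Fin (ℓ / d)) : ℕ) / Nm = flip ((i : ℕ) / Nm) :=
    fun i => (key _ _ (hτlt _ _ (Nat.mod_lt _ hNm0))).1
  have hπmod : ∀ i : Fin (ℓ / d), ((π i : Fin (ℓ / d)) : ℕ) % Nm = τ ((i : ℕ) / Nm) ((i : ℕ) % Nm) :=
    fun i => (key _ _ (hτlt _ _ (Nat.mod_lt _ hNm0))).2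
  have hπinv : ∀ i, π (π i) = i := by
    intro i
    apply Fin.ext
    show flip (((π i : Fin (ℓ/d)) : ℕ) / Nm) * Nm + τ (((π i : Fin (ℓ/d)) : ℕ) / Nm) (((π i : Fin (ℓ/d)) : ℕ) % Nm) = (i : ℕ)
    rw [hπdiv, hπmod, hflip2 _ (hidx i), hτinv _ (hidx i)]
    rw [Nat.div_add_mod' (i : ℕ) Nm]
  apply occCount_eq_of_invol _ _ π hπinv
  intro i
  funext r
  rw [chunk_myword hs c f hdN hd hN, chunk_myword hs c' f hdN hd hN]
  simp only [← hNm]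
  set j := (i : ℕ) / Nm with hj
  set x := (i : ℕ) % Nm with hxx
  have hjK : j < K := hidx i
  rw [hπdiv, hπmod, ← hj, ← hxx]
  have hr : (r : ℕ) < d := r.isLt
  apply if_congr _ rfl rfl
  rw [hcc j hjK]
  have e1 : x * d + (r : ℕ) = f j ↔ x = f j / d ∧ (r : ℕ) = f j % d :=
    divmod_helper hd x (r : ℕ) (f j) hr
  have e2 : τ j x * d + (r : ℕ) = f (flip j) ↔ τ j x = f (flip j) / d ∧ (r : ℕ) = f (flip j) % d :=
    divmod_helper hd _ (r : ℕ) _ hr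
  rw [e1, e2, hff j hjK]
  have e3 : τ j x = f (flip j) / d ↔ x = f j / d := by
    simp only [τ]
    split_ifs with h1 h2
    · simp [h1]
    · constructor
      · intro h; omega
      · intro h; exact absurd h h1
    · constructor
      · intro h; exact absurd h h2
      · intro h; exact absurd h h1
  rw [e3]

/-- counting chunks equal to a one-at-`o` block -/
lemma count_single {s ℓ N K d : ℕ} (hs : 1 < s) (c : ℕ → Prop) [DecidablePred c] (f : ℕ → ℕ)
    (hdN : d ∣ N) (hd : 0 < d) (hN : 0 < N) (hℓ : ℓ = K * N) (hfN : ∀ j, f j < N)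
    (o : ℕ) (ho : o < d) :
    occCount (chunk (myword s ℓ N hs c f) d)
      (fun r => if (r : ℕ) = o then ⟨1, hs⟩ else ⟨0, by omega⟩) =
    ((Finset.range K).filter (fun j => c j ∧ f j % d = o)).card := by
  classical
  set Nm := N / d with hNm
  have hNmd : Nm * d = N := Nat.div_mul_cancel hdN
  have hNm0 : 0 < Nm := Nat.div_pos (Nat.le_of_dvd hN hdN) hd
  have hLd : ℓ / d = K * Nm := by rw [hℓ, Nat.mul_div_assoc K hdN]
  have hfd : ∀ j, f j / d < Nm := fun j => by
    rw [Nat.div_lt_iff_lt_mul hd, hNmd]; exact hfN j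
  have key : ∀ a b : ℕ, b < Nm → (a * Nm + b) / Nm = a ∧ (a * Nm + b) % Nm = b := by
    intro a b hb
    constructor
    · rw [Nat.mul_comm a Nm, Nat.add_comm, Nat.add_mul_div_left b a hNm0,
        Nat.div_eq_of_lt hb, Nat.zero_add]
    · rw [Nat.mul_comm a Nm, Nat.add_comm, Nat.add_mul_mod_self_left b Nm a,
        Nat.mod_eq_of_lt hb]
  have hidx : ∀ i : Fin (ℓ / d), (i : ℕ) / Nm < K := by
    intro i
    have h : (i : ℕ) < K * Nm := lt_of_lt_of_le i.isLt (le_of_eq hLd)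
    exact Nat.div_lt_of_lt_mul (by rw [Nat.mul_comm]; exact h)
  have hone : (⟨1, hs⟩ : Fin s) ≠ ⟨0, by omega⟩ := by
    intro h
    have := Fin.mk.injEq 1 hs 0 (by omega : (0:ℕ) < s)
    simp at h
  unfold occCount
  symm
  refine Finset.card_bij (fun j hj => (⟨j * Nm + f j / d, by
    apply lt_of_lt_of_le _ (le_of_eq hLd.symm)
    have hjK : j < K := by
      have := Finset.mem_filter.mp hj
      exact Finset.mem_range.mp this.1
    have h2 : f j / d < Nm := hfd j
    calc j * Nm + f j / d < j * Nm + Nm := by omega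
      _ = (j + 1) * Nm := by ring
      _ ≤ K * Nm := Nat.mul_le_mul_right Nm (by omega)⟩ : Fin (ℓ / d))) ?_ ?_ ?_
  · intro j hj
    obtain ⟨hjK, hcj, hfj⟩ : j ∈ Finset.range K ∧ c j ∧ f j % d = o := by
      have := Finset.mem_filter.mp hj; exact ⟨this.1, this.2.1, this.2.2⟩
    have hjK' : j < K := Finset.mem_range.mp hjK
    simp only [mem_filter, mem_univ, true_and]
    funext r
    rw [chunk_myword hs c f hdN hd hN]
    simp only [← hNm, Fin.val_mk]
    have hd1 := (key j (f j / d) (hfd j)).1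
    have hd2 := (key j (f j / d) (hfd j)).2
    rw [hd1, hd2]
    apply if_congr _ rfl rfl
    have e1 : f j / d * d + (r : ℕ) = f j ↔ f j / d = f j / d ∧ (r : ℕ) = f j % d :=
      divmod_helper hd _ _ _ r.isLt
    rw [e1, hfj]
    tauto
  · intro a ha b hb h
    have ha' : a < K := Finset.mem_range.mp (Finset.mem_filter.mp ha).1
    have hb' : b < K := Finset.mem_range.mp (Finset.mem_filter.mp hb).1
    have := congrArg (fun i : Fin (ℓ / d) => (i : ℕ) / Nm) h
    simpa [(key a (f a / d) (hfd a)).1, (key b (f b / d) (hfd b)).1] using this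
  · intro i hi
    simp only [mem_filter, mem_univ, true_and] at hi
    set j := (i : ℕ) / Nm with hj
    set x := (i : ℕ) % Nm with hx
    have hjK : j < K := hidx i
    have hval := congrFun hi ⟨o, ho⟩
    rw [chunk_myword hs c f hdN hd hN] at hval
    simp only [if_pos rfl] at hval
    have hcond : c j ∧ x * d + o = f j := by
      by_contra hcon
      rw [if_neg hcon] at hval
      exact hone hval.symm
    obtain ⟨hcj, hxo⟩ := hcond
    have := (divmod_helper hd x o (f j) ho).mp hxo
    refine ⟨j, Finset.mem_filter.mpr ⟨Finset.mem_range.mpr hjK, hcj, this.2.symm⟩, ?_⟩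
    apply Fin.ext
    show j * Nm + f j / d = (i : ℕ)
    rw [← this.1, hx, hj, Nat.div_add_mod' (i : ℕ) Nm]

theorem statement3 (s : ℕ) (hs : 2 ≤ s) (M : Finset ℕ) (hM : ∀ m ∈ M, 0 < m)
    (n : ℕ) (hn : 0 < n) (hnd : ∀ m ∈ M, ¬ n ∣ m) :
    ∃ (ℓ : ℕ) (u v : Fin ℓ → Fin s), 0 < ℓ ∧ (∀ m ∈ M, m ∣ ℓ) ∧ n ∣ ℓ ∧
      (∀ m ∈ M, ∀ z : Fin m → Fin s, occCount (chunk u m) z = occCount (chunk v m) z) ∧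
      ¬ (∀ z : Fin n → Fin s, occCount (chunk u n) z = occCount (chunk v n) z) := by
  classical
  have hs1 : 1 < s := hs
  set P : Finset (Finset ℕ) := M.powerset with hP
  set K := P.card with hK
  have hK0 : 0 < K := Finset.card_pos.mpr ⟨∅, Finset.empty_mem_powerset M⟩
  let E : {x // x ∈ P} ≃ Fin K := P.equivFin
  let Sn : ℕ → Finset ℕ := fun j => if h : j < K then (E.symm ⟨j, h⟩ : Finset ℕ) else ∅
  have hSnP : ∀ j < K, Sn j ∈ P := by
    intro j hj
    simp only [Sn, dif_pos hj]
    exact (E.symm ⟨j, hj⟩).2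
  have hSn_idx : ∀ (T : Finset ℕ) (hT : T ∈ P), Sn ((E ⟨T, hT⟩ : Fin K) : ℕ) = T := by
    intro T hT
    simp only [Sn, dif_pos (E ⟨T, hT⟩).isLt]
    have : (⟨((E ⟨T, hT⟩ : Fin K) : ℕ), (E ⟨T, hT⟩).isLt⟩ : Fin K) = E ⟨T, hT⟩ := Fin.eta _ _
    rw [this, Equiv.symm_apply_apply]
  have hSn_inj : ∀ j < K, ∀ j' < K, Sn j = Sn j' → j = j' := by
    intro j hj j' hj' h
    simp only [Sn, dif_pos hj, dif_pos hj'] at h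
    have h2 : (⟨j, hj⟩ : Fin K) = ⟨j', hj'⟩ := E.symm.injective (Subtype.ext h)
    exact congrArg Fin.val h2
  have hSn_surj : ∀ T ∈ P, ∃ j < K, Sn j = T := by
    intro T hT
    exact ⟨(E ⟨T, hT⟩ : Fin K), (E ⟨T, hT⟩).isLt, hSn_idx T hT⟩
  set N := n * ∏ m ∈ M, m with hNdef
  have hN : 0 < N := Nat.mul_pos hn (Finset.prod_pos hM)
  have hmN : ∀ m ∈ M, m ∣ N := fun m hm => Dvd.dvd.mul_left (Finset.dvd_prod_of_mem _ hm) n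
  have hnN : n ∣ N := dvd_mul_right n _
  set ℓ := K * N with hℓ
  let f : ℕ → ℕ := fun j => (∑ x ∈ Sn j, x) % N
  have hfN : ∀ j, f j < N := fun j => Nat.mod_lt _ hN
  let ceven : ℕ → Prop := fun j => (Sn j).card % 2 = 0
  let codd : ℕ → Prop := fun j => (Sn j).card % 2 = 1
  refine ⟨ℓ, myword s ℓ N hs1 ceven f, myword s ℓ N hs1 codd f, ?_, ?_, ?_, ?_, ?_⟩
  · exact Nat.mul_pos hK0 hN
  · exact fun m hm => Dvd.dvd.mul_left (hmN m hm) K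
  · exact Dvd.dvd.mul_left hnN K
  · -- equivalence for each m ∈ M
    intro m hm z
    have hm0 : 0 < m := hM m hm
    -- the flip on subsets
    let flipS : Finset ℕ → Finset ℕ := fun S => if m ∈ S then S.erase m else insert m S
    have hflipP : ∀ S ∈ P, flipS S ∈ P := by
      intro S hS
      have hSM : S ⊆ M := Finset.mem_powerset.mp hS
      simp only [flipS]
      split_ifs with h
      · exact Finset.mem_powerset.mpr ((Finset.erase_subset m S).trans hSM)
      · exact Finset.mem_powerset.mpr (Finset.insert_subset hm hSM)
    have hflipS2 : ∀ S, flipS (flipS S) = S := by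
      intro S
      simp only [flipS]
      split_ifs with h1 h2 h2
      · exact absurd (Finset.mem_erase.mp h2).1 (by simp)
      · exact Finset.insert_erase h1
      · exact Finset.erase_insert h1
      · exact absurd (Finset.mem_insert_self m S) h2
    have hflipcard : ∀ S, (flipS S).card + 1 = S.card ∨ S.card + 1 = (flipS S).card := by
      intro S
      simp only [flipS]
      split_ifs with h
      · exact Or.inl (Finset.card_erase_add_one h)
      · exact Or.inr (Finset.card_insert_of_notMem h).symm
    have hflipsum : ∀ S, (∑ x ∈ flipS S, x) % m = (∑ x ∈ S, x) % m := by
      intro S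
      simp only [flipS]
      split_ifs with h
      · have h2 : (∑ x ∈ S, x) = m + ∑ x ∈ S.erase m, x :=
          (Finset.add_sum_erase S (fun x => x) h).symm
        rw [h2, Nat.add_mod_left]
      · rw [Finset.sum_insert h, Nat.add_mod_left]
    let flipn : ℕ → ℕ := fun j => if h : j < K then ((E ⟨flipS (Sn j), hflipP _ (hSnP j h)⟩ : Fin K) : ℕ) else j
    have hflipn_lt : ∀ j < K, flipn j < K := by
      intro j hj
      simp only [flipn, dif_pos hj]
      exact (E _).isLt
    have hSflipn : ∀ j < K, Sn (flipn j) = flipS (Sn j) := by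
      intro j hj
      simp only [flipn, dif_pos hj]
      exact hSn_idx _ _
    have hflipn2 : ∀ j < K, flipn (flipn j) = j := by
      intro j hj
      have h1 := hflipn_lt j hj
      apply hSn_inj _ (hflipn_lt _ h1) _ hj
      rw [hSflipn _ h1, hSflipn _ hj, hflipS2]
    refine perm_count hs1 ceven codd f (hmN m hm) hm0 hN hℓ hfN flipn hflipn_lt hflipn2 ?_ ?_ z
    · intro j hj
      simp only [codd, ceven]
      rw [hSflipn j hj]
      rcases hflipcard (Sn j) with h | h <;> omega
    · intro j hj
      simp only [f]
      rw [Nat.mod_mod_of_dvd _ (hmN m hm), Nat.mod_mod_of_dvd _ (hmN m hm),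
        hSflipn j hj, hflipsum]
  · -- non-equivalence for n
    intro Hcon
    set ζ : ℂ := Complex.exp (2 * Real.pi * Complex.I / n) with hζdef
    have hζ : IsPrimitiveRoot ζ n := Complex.isPrimitiveRoot_exp n (by omega)
    have hA : ∀ o < n, ((Finset.range K).filter (fun j => ceven j ∧ f j % n = o)).card
        = ((Finset.range K).filter (fun j => codd j ∧ f j % n = o)).card := by
      intro o ho
      have h1 := count_single hs1 ceven f hnN hn hN hℓ hfN o ho
      have h2 := count_single hs1 codd f hnN hn hN hℓ hfN o ho
      rw [← h1, ← h2]
      exact Hcon _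
    have hpow : ∀ a : ℕ, ζ ^ a = ζ ^ (a % n) := by
      intro a
      conv_lhs => rw [← Nat.div_add_mod a n]
      rw [pow_add, pow_mul, hζ.pow_eq_one, one_pow, one_mul]
    set T : ℂ := ∑ j ∈ Finset.range K, (-1 : ℂ) ^ (Sn j).card * ζ ^ (∑ x ∈ Sn j, x) with hT
    -- T = 0 via fiberwise counting
    have hT0 : T = 0 := by
      have hmaps : ∀ j ∈ Finset.range K, f j % n ∈ Finset.range n :=
        fun j _ => Finset.mem_range.mpr (Nat.mod_lt _ hn)
      have := Finset.sum_fiberwise_of_maps_to hmaps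
        (fun j => (-1 : ℂ) ^ (Sn j).card * ζ ^ (∑ x ∈ Sn j, x))
      rw [hT, ← this]
      apply Finset.sum_eq_zero
      intro o ho
      have ho' : o < n := Finset.mem_range.mp ho
      have hval : ∀ j ∈ (Finset.range K).filter (fun j => f j % n = o),
          (-1 : ℂ) ^ (Sn j).card * ζ ^ (∑ x ∈ Sn j, x)
            = (if (Sn j).card % 2 = 0 then (ζ ^ o : ℂ) else -(ζ ^ o)) := by
        intro j hj
        have hfo : f j % n = o := (Finset.mem_filter.mp hj).2
        have hz : ζ ^ (∑ x ∈ Sn j, x) = ζ ^ o := by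
          rw [hpow]
          have : (∑ x ∈ Sn j, x) % n = f j % n := (Nat.mod_mod_of_dvd _ hnN).symm
          rw [this, hfo]
        rcases Nat.even_or_odd ((Sn j).card) with h | h
        · rw [Even.neg_one_pow h, hz, if_pos (Nat.even_iff.mp h), one_mul]
        · rw [Odd.neg_one_pow h, hz, if_neg (by have := Nat.odd_iff.mp h; omega), neg_one_mul]
      rw [Finset.sum_congr rfl hval, Finset.sum_ite, Finset.sum_const, Finset.sum_const,
        Finset.filter_filter, Finset.filter_filter]
      have hc1 : ((Finset.range K).filter (fun a => f a % n = o ∧ (Sn a).card % 2 = 0)).card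
          = ((Finset.range K).filter (fun j => ceven j ∧ f j % n = o)).card := by
        congr 1
        apply Finset.filter_congr
        intro j _
        simp only [ceven]
        tauto
      have hc2 : ((Finset.range K).filter (fun a => f a % n = o ∧ ¬(Sn a).card % 2 = 0)).card
          = ((Finset.range K).filter (fun j => codd j ∧ f j % n = o)).card := by
        congr 1
        apply Finset.filter_congr
        intro j _
        simp only [codd]
        omega
      rw [hc1, hc2, hA o ho']
      ring
    -- T ≠ 0 via product formula
    have hT1 : T = ∏ m ∈ M, (1 - ζ ^ m) := by
      have hb : T = ∑ S ∈ P, (-1 : ℂ) ^ S.card * ζ ^ (∑ x ∈ S, x) := by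
        rw [hT]
        refine Finset.sum_bij (fun j hj => Sn j) ?_ ?_ ?_ ?_
        · intro j hj
          exact hSnP j (Finset.mem_range.mp hj)
        · intro a ha b hb h
          exact hSn_inj a (Finset.mem_range.mp ha) b (Finset.mem_range.mp hb) h
        · intro T hT
          obtain ⟨j, hj, hSj⟩ := hSn_surj T hT
          exact ⟨j, Finset.mem_range.mpr hj, hSj⟩
        · intro j hj
          rfl
      have hprod : ∀ S : Finset ℕ, (∏ x ∈ S, -(ζ ^ x)) = (-1 : ℂ) ^ S.card * ζ ^ (∑ x ∈ S, x) := by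
        intro S
        have : (∏ x ∈ S, -(ζ ^ x)) = (∏ _x ∈ S, (-1 : ℂ)) * ∏ x ∈ S, ζ ^ x := by
          rw [← Finset.prod_mul_distrib]
          congr 1
          funext x
          ring
        rw [this, Finset.prod_const, Finset.prod_pow_eq_pow_sum]
      have := Finset.prod_add (fun i => -(ζ ^ i)) (fun _ => (1 : ℂ)) M
      simp only [Finset.prod_const_one, mul_one] at this
      rw [hb, hP]
      calc ∑ S ∈ M.powerset, (-1 : ℂ) ^ S.card * ζ ^ (∑ x ∈ S, x)
          = ∑ S ∈ M.powerset, ∏ x ∈ S, -(ζ ^ x) := by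
            apply Finset.sum_congr rfl
            intro S _
            rw [hprod]
        _ = ∏ i ∈ M, (-(ζ ^ i) + 1) := this.symm
        _ = ∏ m ∈ M, (1 - ζ ^ m) := by
            apply Finset.prod_congr rfl
            intro m _
            ring
    have hTne : T ≠ 0 := by
      rw [hT1]
      apply Finset.prod_ne_zero_iff.mpr
      intro m hm
      intro h
      have : ζ ^ m = 1 := by
        have := sub_eq_zero.mp h
        exact this.symm
      exact hnd m hm ((hζ.pow_eq_one_iff_dvd m).mp this)
    exact hTne hT0
end

section
/- Let s be a base, M a finite set of positive integers, and n a positive integer that does not divide any element of M. Then for arbitrarily large positive integers ℓ_U there is a set U of blocks of length ℓ_U on B_s such that: U is balanced for M and B_s but not balanced for n and B_s; if s is odd then U = B_s^{ℓ_U} \ {z} for some block z which, read as an integer in base s, is even; and if s is even then U = B_s^{ℓ_U} \ {z, z̃} for blocks z, z̃ which, read as integers in base s, satisfy z even, z̃ odd and z < z̃. -/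
/-- A finite set `U` of blocks of length `ℓ` over `B_s` is balanced for `m` and `B_s` if
`m ∣ ℓ` and in the concatenation of the blocks of `U` (in any order) every block of
length `m` occurs with the same frequency; equivalently, the counts summed over the
blocks of `U` coincide for any two blocks `z z' : B_s^m`. -/
def BalancedSet (s ℓ m : ℕ) (U : Finset (Fin ℓ → Fin s)) : Prop :=
  m ∣ ℓ ∧ ∀ z z' : Fin m → Fin s,
    (∑ w ∈ U, occCount (chunk w m) z) = ∑ w ∈ U, occCount (chunk w m) z'

/-- The integer obtained by reading a block `b_0 b_1 ⋯ b_{ℓ-1}` over `B_s` in base `s`,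
namely `b_0 s^{ℓ-1} + ⋯ + b_{ℓ-2} s + b_{ℓ-1}`. -/
def blockVal {s ℓ : ℕ} (b : Fin ℓ → Fin s) : ℕ :=
  ∑ j : Fin ℓ, (b j : ℕ) * s ^ (ℓ - 1 - j.val)


open Finset

namespace S4

lemma occ_eq_sum {α : Type*} [DecidableEq α] {L : ℕ} (w : Fin L → α) (z : α) :
    occCount w z = ∑ i : Fin L, if w i = z then 1 else 0 := Finset.card_filter _ _

lemma card_fiber {s m ℓ : ℕ} (g : Fin m → Fin ℓ) (hg : Function.Injective g)
    (v : Fin m → Fin s) :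
    ((Finset.univ : Finset (Fin ℓ → Fin s)).filter (fun w => ∀ j, w (g j) = v j)).card
      = s ^ (ℓ - m) := by
  classical
  have hcardT : Fintype.card {x : Fin ℓ // x ∉ Set.range g} = ℓ - m := by
    rw [Fintype.card_subtype_compl]
    have : Fintype.card {x : Fin ℓ // x ∈ Set.range g} = m := by
      rw [Fintype.card_congr (Equiv.ofInjective g hg).symm, Fintype.card_fin]
    rw [this, Fintype.card_fin]
  have hfun : (Finset.univ : Finset ({x : Fin ℓ // x ∉ Set.range g} → Fin s)).card
      = s ^ (ℓ - m) := by
    rw [Finset.card_univ, Fintype.card_fun, hcardT, Fintype.card_fin]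
  rw [← hfun]
  apply Finset.card_nbij' (i := fun w => fun t : {x : Fin ℓ // x ∉ Set.range g} => w t.1)
    (j := fun u => fun x => if h : ∃ jj, g jj = x then v h.choose else
      u ⟨x, by simpa [Set.mem_range] using h⟩)
  · intro w _; exact Finset.mem_univ _
  · intro u _
    simp only [Finset.mem_coe, Finset.mem_filter, Finset.mem_univ, true_and]
    intro j
    have h : ∃ jj, g jj = g j := ⟨j, rfl⟩
    rw [dif_pos h]
    have hcs := h.choose_spec
    have hcj : h.choose = j := hg hcs
    rw [hcj]
  · intro w hw
    funext x
    by_cases h : ∃ jj, g jj = x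
    · beta_reduce; rw [dif_pos h]
      rw [Finset.mem_coe, Finset.mem_filter] at hw
      have hx := hw.2 h.choose
      rw [h.choose_spec] at hx
      exact hx.symm
    · beta_reduce; rw [dif_neg h]
  · intro u _
    funext t
    have h : ¬ ∃ jj, g jj = t.1 := by
      intro hc
      exact t.2 (by simpa [Set.mem_range] using hc)
    simp only [dif_neg h]

lemma chunk_eq_iff {s ℓ m : ℕ} (w : Fin ℓ → Fin s) (i : Fin (ℓ / m)) (v : Fin m → Fin s)
    (g : Fin m → Fin ℓ) (hval : ∀ j, (g j).val = i.val * m + j.val) :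
    chunk w m i = v ↔ ∀ j, w (g j) = v j := by
  have hcj : ∀ j, chunk w m i j = w (g j) := by
    intro j
    unfold chunk
    congr 1
    exact Fin.ext (hval j).symm
  rw [funext_iff]
  exact forall_congr' (fun j => by rw [hcj j])

lemma sum_occ_univ {s ℓ m : ℕ} (hm : 0 < m) (v : Fin m → Fin s) :
    ∑ w : Fin ℓ → Fin s, occCount (chunk w m) v = (ℓ / m) * s ^ (ℓ - m) := by
  classical
  have : ∀ w : Fin ℓ → Fin s, occCount (chunk w m) v
      = ∑ i : Fin (ℓ / m), if chunk w m i = v then 1 else 0 := fun w => occ_eq_sum _ _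
  simp only [this]
  rw [Finset.sum_comm]
  have hiK : ∀ i : Fin (ℓ / m), ∀ j : Fin m, i.val * m + j.val < ℓ := by
    intro i j
    have h1 : i.val + 1 ≤ ℓ / m := i.isLt
    have h2 : (i.val + 1) * m ≤ ℓ / m * m := Nat.mul_le_mul_right m h1
    have h3 : ℓ / m * m ≤ ℓ := Nat.div_mul_le_self ℓ m
    have h4 : i.val * m + m = (i.val + 1) * m := by ring
    have h5 : j.val < m := j.isLt
    omega
  have key : ∀ i : Fin (ℓ / m),
      (∑ w : Fin ℓ → Fin s, if chunk w m i = v then 1 else 0) = s ^ (ℓ - m) := by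
    intro i
    set g : Fin m → Fin ℓ := fun j => ⟨i.val * m + j.val, hiK i j⟩ with hg
    have hginj : Function.Injective g := by
      intro a b hab
      have : i.val * m + a.val = i.val * m + b.val := congrArg Fin.val hab
      exact Fin.ext (by omega)
    have := card_fiber g hginj v
    rw [← this, Finset.card_filter]
    apply Finset.sum_congr rfl
    intro w _
    congr 1
    rw [chunk_eq_iff w i v g (fun j => rfl)]
  simp only [key, Finset.sum_const, Finset.card_univ, Fintype.card_fin, smul_eq_mul]


lemma fin_mul_bound {a b : ℕ} (i : Fin a) (p : Fin b) : i.val * b + p.val < a * b := by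
  have h1 : (i.val + 1) * b ≤ a * b := Nat.mul_le_mul_right b i.isLt
  have h2 : i.val * b + b = (i.val + 1) * b := by ring
  have := p.isLt
  omega

lemma sum_fin_mul {a b : ℕ} (f : Fin (a * b) → ℕ) :
    ∑ x, f x = ∑ i : Fin a, ∑ p : Fin b, f ⟨i.val * b + p.val, fin_mul_bound i p⟩ := by
  have hmain : ∑ ip : Fin a × Fin b,
      f ⟨ip.1.val * b + ip.2.val, fin_mul_bound ip.1 ip.2⟩ = ∑ x, f x := by
    apply Fintype.sum_bijective (fun ip : Fin a × Fin b =>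
      (⟨ip.1.val * b + ip.2.val, fin_mul_bound ip.1 ip.2⟩ : Fin (a * b))) ?_ _ _ (fun x => rfl)
    rw [Fintype.bijective_iff_injective_and_card]
    constructor
    · rintro ⟨i, p⟩ ⟨i', p'⟩ hh
      have hv : i.val * b + p.val = i'.val * b + p'.val := congrArg Fin.val hh
      have hb : 0 < b := Nat.pos_of_ne_zero (by rintro rfl; exact absurd p.isLt (by omega))
      have h1 : (i.val * b + p.val) / b = i.val := by
        rw [mul_comm, Nat.mul_add_div hb, Nat.div_eq_of_lt p.isLt]; omega
      have h2 : (i'.val * b + p'.val) / b = i'.val := by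
        rw [mul_comm, Nat.mul_add_div hb, Nat.div_eq_of_lt p'.isLt]; omega
      have h3 : (i.val * b + p.val) % b = p.val := by
        rw [mul_comm, Nat.mul_add_mod, Nat.mod_eq_of_lt p.isLt]
      have h4 : (i'.val * b + p'.val) % b = p'.val := by
        rw [mul_comm, Nat.mul_add_mod, Nat.mod_eq_of_lt p'.isLt]
      have hi : i = i' := Fin.ext (by rw [← h1, ← h2, hv])
      have hp : p = p' := Fin.ext (by rw [← h3, ← h4, hv])
      simp_all
    · simp
  rw [← hmain, Fintype.sum_prod_type]

def concatW {s K T : ℕ} (F : Fin T → Fin K → Fin s) : Fin (T * K) → Fin s := fun j =>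
  have hTK : 0 < T * K := j.pos
  have hK : 0 < K := Nat.pos_of_ne_zero (by rintro rfl; omega)
  F ⟨j.val / K, by
    rw [Nat.div_lt_iff_lt_mul hK]
    exact j.isLt⟩
    ⟨j.val % K, Nat.mod_lt _ hK⟩

lemma concatW_apply {s K T : ℕ} (F : Fin T → Fin K → Fin s) (i : Fin T) (r : Fin K) :
    concatW F ⟨i.val * K + r.val, fin_mul_bound i r⟩ = F i r := by
  have hK : 0 < K := Nat.pos_of_ne_zero (by rintro rfl; exact absurd r.isLt (by omega))
  unfold concatW
  have h1 : (i.val * K + r.val) / K = i.val := by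
    rw [mul_comm, Nat.mul_add_div hK, Nat.div_eq_of_lt r.isLt]; omega
  have h2 : (i.val * K + r.val) % K = r.val := by
    rw [mul_comm, Nat.mul_add_mod, Nat.mod_eq_of_lt r.isLt]
  exact congr (congrArg F (Fin.ext h1)) (Fin.ext h2)


lemma chunk_concat_eq {s K T m : ℕ} (hmK : m ∣ K) (F : Fin T → Fin K → Fin s)
    (i : Fin T) (p : Fin (K / m)) (hq : T * K / m = T * (K / m)) :
    chunk (concatW F) m
      (finCongr hq.symm ⟨i.val * (K / m) + p.val, fin_mul_bound i p⟩) = chunk (F i) m p := by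
  have hKm : (K / m) * m = K := Nat.div_mul_cancel hmK
  funext j
  have hpm : p.val * m + j.val < K := by
    have h1 : (p.val + 1) * m ≤ (K / m) * m := Nat.mul_le_mul_right m p.isLt
    have h2 : p.val * m + m = (p.val + 1) * m := by ring
    have := j.isLt
    omega
  set rr : Fin K := ⟨p.val * m + j.val, hpm⟩ with hrr
  show concatW F _ = F i ⟨p.val * m + j.val, _⟩
  have hvv : (finCongr hq.symm ⟨i.val * (K / m) + p.val, fin_mul_bound i p⟩ :
      Fin (T * K / m)).val * m + j.val = i.val * K + rr.val := by
    simp only [finCongr_apply, Fin.coe_cast, hrr]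
    have : (i.val * (K / m) + p.val) * m = i.val * K + p.val * m := by
      rw [add_mul, mul_assoc, hKm]
    omega
  calc concatW F _ = concatW F ⟨i.val * K + rr.val, fin_mul_bound i rr⟩ :=
        congrArg (concatW F) (Fin.ext hvv)
    _ = F i rr := concatW_apply F i rr

lemma occ_concat {s K T m : ℕ} (hmK : m ∣ K)
    (F : Fin T → Fin K → Fin s) (v : Fin m → Fin s) :
    occCount (chunk (concatW F) m) v = ∑ i : Fin T, occCount (chunk (F i) m) v := by
  classical
  have hq : T * K / m = T * (K / m) := Nat.mul_div_assoc T hmK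
  rw [occ_eq_sum]
  rw [← Equiv.sum_comp (finCongr hq.symm)
    (fun I => if chunk (concatW F) m I = v then 1 else 0)]
  rw [sum_fin_mul (fun x => if chunk (concatW F) m (finCongr hq.symm x) = v then 1 else 0)]
  apply Finset.sum_congr rfl
  intro i _
  rw [occ_eq_sum]
  apply Finset.sum_congr rfl
  intro p _
  rw [chunk_concat_eq hmK F i p hq]

lemma blockVal_concat {s K T : ℕ} (F : Fin T → Fin K → Fin s) :
    blockVal (concatW F) = ∑ i : Fin T, blockVal (F i) * s ^ (K * (T - 1 - i.val)) := by
  unfold blockVal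
  rw [sum_fin_mul (fun j : Fin (T * K) => ((concatW F j : ℕ)) * s ^ (T * K - 1 - j.val))]
  apply Finset.sum_congr rfl
  intro i _
  rw [Finset.sum_mul]
  apply Finset.sum_congr rfl
  intro r _
  rw [concatW_apply F i r]
  have hexp : T * K - 1 - (i.val * K + r.val) = (K - 1 - r.val) + K * (T - 1 - i.val) := by
    obtain ⟨a, ha⟩ : ∃ a, T = i.val + 1 + a := ⟨T - 1 - i.val, by have := i.isLt; omega⟩
    have e1 : T - 1 - i.val = a := by omega
    have e2 : T * K = i.val * K + K + a * K := by
      have h := congrArg (fun x : ℕ => x * K) ha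
      rw [h]; ring
    have e3 : K * (T - 1 - i.val) = a * K := by rw [e1]; ring
    have := r.isLt
    omega
  rw [hexp, pow_add, ← mul_assoc]

lemma blockVal_mod_two_of_odd {s ℓ : ℕ} (hs : Odd s) (b : Fin ℓ → Fin s) :
    blockVal b % 2 = (∑ j, (b j).val) % 2 := by
  unfold blockVal
  rw [Finset.sum_nat_mod, Finset.sum_nat_mod _ _ (fun j => (b j).val)]
  congr 1
  apply Finset.sum_congr rfl
  intro j _
  have hodd : Odd (s ^ (ℓ - 1 - j.val)) := hs.pow
  rw [Nat.odd_iff] at hodd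
  rw [Nat.mul_mod, hodd, mul_one, Nat.mod_mod_of_dvd _ (dvd_refl 2)]

lemma blockVal_mod_two_of_even {s ℓ : ℕ} (hse : s % 2 = 0) (b : Fin ℓ → Fin s)
    (j : Fin ℓ) (hj : j.val = ℓ - 1) :
    blockVal b % 2 = (b j).val % 2 := by
  unfold blockVal
  rw [← Finset.sum_erase_add _ _ (Finset.mem_univ j)]
  have hlast : ((b j : ℕ)) * s ^ (ℓ - 1 - j.val) = (b j).val := by
    rw [hj]
    simp
  rw [hlast]
  have heven : Even (∑ j' ∈ Finset.univ.erase j, ((b j' : ℕ)) * s ^ (ℓ - 1 - j'.val)) := by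
    apply Finset.even_sum
    intro j' hj'
    have hjne : j' ≠ j := (Finset.mem_erase.mp hj').1
    have hjv : j'.val < ℓ - 1 := by
      have h1 := j'.isLt
      rcases Nat.lt_or_ge j'.val (ℓ - 1) with h | h
      · exact h
      · exact absurd (Fin.ext (by omega)) hjne
    have hpe : Even (s ^ (ℓ - 1 - j'.val)) := by
      rw [Nat.even_pow]
      exact ⟨Nat.even_iff.mpr hse, by omega⟩
    exact hpe.mul_left _
  obtain ⟨c, hc⟩ := heven
  omega

lemma sum_two_pow_range (n : ℕ) : ∑ x ∈ Finset.range n, 2 ^ x = 2 ^ n - 1 := by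
  induction n with
  | zero => simp
  | succ k ih =>
    rw [Finset.sum_range_succ, ih]
    have h1 : 0 < 2 ^ k := Nat.pow_pos (by omega)
    have h2 : 2 ^ (k + 1) = 2 ^ k * 2 := pow_succ 2 k
    omega

lemma binsum_inj : ∀ S : ℕ, ∀ t u : Finset ℕ,
    (∑ x ∈ t, 2 ^ x) = S → (∑ x ∈ u, 2 ^ x) = S → t = u := by
  intro S
  induction S using Nat.strong_induction_on with
  | _ S ih =>
    intro t u ht hu
    by_cases hS : S = 0
    · subst hS
      have h0 : ∀ w : Finset ℕ, (∑ x ∈ w, 2 ^ x) = 0 → w = ∅ := by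
        intro w hw
        by_contra hne
        obtain ⟨x, hx⟩ := Finset.nonempty_iff_ne_empty.mpr hne
        have h1 : 2 ^ x ≤ ∑ y ∈ w, 2 ^ y :=
          Finset.single_le_sum (fun y _ => Nat.zero_le _) hx
        have h2 : 0 < 2 ^ x := Nat.pow_pos (by omega)
        omega
      rw [h0 t ht, h0 u hu]
    · have htne : t.Nonempty := by
        by_contra hne
        rw [Finset.not_nonempty_iff_eq_empty.mp hne] at ht
        simp at ht; omega
      have hune : u.Nonempty := by
        by_contra hne
        rw [Finset.not_nonempty_iff_eq_empty.mp hne] at hu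
        simp at hu; omega
      set a := t.max' htne with ha
      set a' := u.max' hune with ha'
      have hub : ∀ (w : Finset ℕ) (hw : w.Nonempty), (∑ x ∈ w, 2 ^ x) < 2 ^ (w.max' hw + 1) := by
        intro w hw
        have hsub : w ⊆ Finset.range (w.max' hw + 1) := by
          intro x hx
          rw [Finset.mem_range]
          exact Nat.lt_succ_of_le (Finset.le_max' w x hx)
        calc (∑ x ∈ w, 2 ^ x) ≤ ∑ x ∈ Finset.range (w.max' hw + 1), 2 ^ x :=
              Finset.sum_le_sum_of_subset hsub
          _ = 2 ^ (w.max' hw + 1) - 1 := sum_two_pow_range _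
          _ < 2 ^ (w.max' hw + 1) := by
              have : 0 < 2 ^ (w.max' hw + 1) := Nat.pow_pos (by omega)
              omega
      have hlb : 2 ^ a ≤ S := ht ▸ Finset.single_le_sum (f := fun x => 2 ^ x)
        (fun y _ => Nat.zero_le _) (t.max'_mem htne)
      have hlb' : 2 ^ a' ≤ S := hu ▸ Finset.single_le_sum (f := fun x => 2 ^ x)
        (fun y _ => Nat.zero_le _) (u.max'_mem hune)
      have hub1 : S < 2 ^ (a + 1) := ht ▸ hub t htne
      have hub2 : S < 2 ^ (a' + 1) := hu ▸ hub u hune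
      have haa : a = a' := by
        by_contra hne
        rcases Nat.lt_or_ge a a' with h | h
        · have : 2 ^ (a + 1) ≤ 2 ^ a' := Nat.pow_le_pow_right (by omega) h
          omega
        · have h' : a' < a := by omega
          have : 2 ^ (a' + 1) ≤ 2 ^ a := Nat.pow_le_pow_right (by omega) h'
          omega
      have h2a : 0 < 2 ^ a := Nat.pow_pos (by omega)
      have hamem : a ∈ t := t.max'_mem htne
      have hamem' : a ∈ u := by rw [haa]; exact u.max'_mem hune
      have hte : (∑ x ∈ t.erase a, 2 ^ x) = S - 2 ^ a := by
        have h := Finset.add_sum_erase t (fun x => 2 ^ x) hamem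
        omega
      have hue : (∑ x ∈ u.erase a, 2 ^ x) = S - 2 ^ a := by
        have h := Finset.add_sum_erase u (fun x => 2 ^ x) hamem'
        omega
      have herase : t.erase a = u.erase a := ih (S - 2 ^ a) (by omega) _ _ hte hue
      have h1 : t = insert a (t.erase a) := (Finset.insert_erase hamem).symm
      have h2 : u = insert a (u.erase a) := (Finset.insert_erase hamem').symm
      rw [h1, h2, herase]

def zW (s μ : ℕ) (h1 : 1 < s) : Fin μ → Fin s := fun _ => ⟨0, by omega⟩

def eW (s μ c : ℕ) (h1 : 1 < s) : Fin μ → Fin s :=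
  fun j => if j.val = c then ⟨1, h1⟩ else ⟨0, by omega⟩

def indW (s K : ℕ) (h1 : 1 < s) (S : Finset ℕ) : Fin K → Fin s :=
  fun j => if j.val ∈ S then ⟨1, h1⟩ else ⟨0, by omega⟩

lemma eW_ne_zW {s μ c : ℕ} (h1 : 1 < s) (hc : c < μ) : eW s μ c h1 ≠ zW s μ h1 := by
  intro h
  have := congrFun h ⟨c, hc⟩
  simp [eW, zW] at this

lemma eW_inj {s μ c c' : ℕ} (h1 : 1 < s) (hc : c < μ) (hc' : c' < μ) :
    eW s μ c h1 = eW s μ c' h1 ↔ c = c' := by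
  constructor
  · intro h
    have := congrFun h ⟨c, hc⟩
    by_contra hne
    simp [eW, hne] at this
  · rintro rfl; rfl

lemma occ_indicator {s K μ : ℕ} (h1 : 1 < s) (hμ : 0 < μ) (hμK : μ ∣ K) (S : Finset ℕ)
    (hSK : ∀ x ∈ S, x < K)
    (hsep : ∀ x ∈ S, ∀ y ∈ S, x ≠ y → x / μ ≠ y / μ)
    (v : Fin μ → Fin s) :
    occCount (chunk (indW s K h1 S) μ) v
      = (if v = zW s μ h1 then K / μ - S.card else 0)
        + (S.filter (fun x => eW s μ (x % μ) h1 = v)).card := by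
  classical
  have hdivlt : ∀ x ∈ S, x / μ < K / μ := fun x hx =>
    Nat.div_lt_div_of_lt_of_dvd hμK (hSK x hx)
  have hchunk_hit : ∀ x, ∀ hx : x ∈ S,
      chunk (indW s K h1 S) μ ⟨x / μ, hdivlt x hx⟩ = eW s μ (x % μ) h1 := by
    intro x hx
    funext j
    show indW s K h1 S ⟨x / μ * μ + j.val, _⟩ = eW s μ (x % μ) h1 j
    unfold indW eW
    by_cases hj : j.val = x % μ
    · have hxe : x / μ * μ + j.val = x := by
        rw [hj, mul_comm]
        exact Nat.div_add_mod x μ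
      rw [if_pos (show (⟨x / μ * μ + j.val, _⟩ : Fin K).val ∈ S by
        show x / μ * μ + j.val ∈ S
        rw [hxe]; exact hx), if_pos hj]
    · rw [if_neg ?_, if_neg hj]
      intro hmem
      have hneq : x / μ * μ + j.val ≠ x := by
        intro he
        have hmm : (x / μ * μ + j.val) % μ = j.val := by
          rw [mul_comm, Nat.mul_add_mod, Nat.mod_eq_of_lt j.isLt]
        rw [he] at hmm
        exact hj hmm.symm
      have hdiv : (x / μ * μ + j.val) / μ = x / μ := by
        rw [mul_comm, Nat.mul_add_div hμ, Nat.div_eq_of_lt j.isLt]; omega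
      exact hsep _ hmem x hx hneq (by rw [hdiv])
  have hchunk_unhit : ∀ i : Fin (K / μ), (∀ x ∈ S, x / μ ≠ i.val) →
      chunk (indW s K h1 S) μ i = zW s μ h1 := by
    intro i hi
    funext j
    show indW s K h1 S ⟨i.val * μ + j.val, _⟩ = zW s μ h1 j
    unfold indW zW
    rw [if_neg ?_]
    intro hmem
    have hdiv : (i.val * μ + j.val) / μ = i.val := by
      rw [mul_comm, Nat.mul_add_div hμ, Nat.div_eq_of_lt j.isLt]; omega
    exact hi _ hmem hdiv
  rw [occ_eq_sum]
  rw [← Finset.sum_filter_add_sum_filter_not Finset.univ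
    (fun i : Fin (K / μ) => ∃ x ∈ S, x / μ = i.val)
    (fun i => if chunk (indW s K h1 S) μ i = v then 1 else 0)]
  have hhit : ∑ i ∈ Finset.univ.filter (fun i : Fin (K / μ) => ∃ x ∈ S, x / μ = i.val),
      (if chunk (indW s K h1 S) μ i = v then 1 else 0)
      = (S.filter (fun x => eW s μ (x % μ) h1 = v)).card := by
    rw [Finset.card_filter]
    apply (Finset.sum_bij (fun x hx => (⟨x / μ, hdivlt x hx⟩ : Fin (K / μ))) ?_ ?_ ?_ ?_).symm
    · intro x hx
      simp only [Finset.mem_filter, Finset.mem_univ, true_and]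
      exact ⟨x, hx, rfl⟩
    · intro x hx y hy he
      by_contra hne
      exact hsep x hx y hy hne (congrArg Fin.val he)
    · intro b hb
      obtain ⟨x, hx, hxb⟩ := (Finset.mem_filter.mp hb).2
      exact ⟨x, hx, Fin.ext hxb⟩
    · intro x hx
      rw [hchunk_hit x hx]
  have hcardhit : (Finset.univ.filter (fun i : Fin (K / μ) => ∃ x ∈ S, x / μ = i.val)).card
      = S.card := by
    apply (Finset.card_bij (fun x hx => (⟨x / μ, hdivlt x hx⟩ : Fin (K / μ))) ?_ ?_ ?_).symm
    · intro x hx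
      simp only [Finset.mem_filter, Finset.mem_univ, true_and]
      exact ⟨x, hx, rfl⟩
    · intro x hx y hy he
      by_contra hne
      exact hsep x hx y hy hne (congrArg Fin.val he)
    · intro b hb
      obtain ⟨x, hx, hxb⟩ := (Finset.mem_filter.mp hb).2
      exact ⟨x, hx, Fin.ext hxb⟩
  have hunhit : ∑ i ∈ Finset.univ.filter (fun i : Fin (K / μ) => ¬ ∃ x ∈ S, x / μ = i.val),
      (if chunk (indW s K h1 S) μ i = v then 1 else 0)
      = if v = zW s μ h1 then K / μ - S.card else 0 := by
    have hcard2 : (Finset.univ.filter (fun i : Fin (K / μ) => ¬ ∃ x ∈ S, x / μ = i.val)).card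
        = K / μ - S.card := by
      have := Finset.card_filter_add_card_filter_not (s := (Finset.univ : Finset (Fin (K / μ))))
        (p := fun i => ∃ x ∈ S, x / μ = i.val)
      rw [hcardhit] at this
      simp only [Finset.card_univ, Fintype.card_fin] at this
      omega
    calc ∑ i ∈ Finset.univ.filter (fun i : Fin (K / μ) => ¬ ∃ x ∈ S, x / μ = i.val),
        (if chunk (indW s K h1 S) μ i = v then 1 else 0)
        = ∑ i ∈ Finset.univ.filter (fun i : Fin (K / μ) => ¬ ∃ x ∈ S, x / μ = i.val),
          (if v = zW s μ h1 then 1 else 0) := by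
          apply Finset.sum_congr rfl
          intro i hi
          have hz := hchunk_unhit i (by
            have := (Finset.mem_filter.mp hi).2
            intro x hx hdx
            exact this ⟨x, hx, hdx⟩)
          rw [hz]
          by_cases hv : v = zW s μ h1
          · rw [if_pos hv.symm, if_pos hv]
          · rw [if_neg (fun h => hv h.symm), if_neg hv]
      _ = if v = zW s μ h1 then K / μ - S.card else 0 := by
          rw [Finset.sum_const, hcard2, smul_eq_mul]
          by_cases hv : v = zW s μ h1 <;> simp [hv]
  rw [hhit, hunhit, add_comm]


lemma evens_odds_bij (M' : Finset ℕ) {m : ℕ} (hm : m ∈ M') (p : ℕ → Prop) [DecidablePred p]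
    (hp : ∀ a, p (a + m) ↔ p a) :
    ((M'.powerset.filter (fun t => Even (M'.card - t.card))).filter
        (fun t => p (∑ x ∈ t, x))).card
      = ((M'.powerset.filter (fun t => Odd (M'.card - t.card))).filter
        (fun t => p (∑ x ∈ t, x))).card := by
  classical
  set φ : Finset ℕ → Finset ℕ := fun t => if m ∈ t then t.erase m else insert m t with hφ
  have hmem : ∀ t ∈ M'.powerset, φ t ∈ M'.powerset := by
    intro t ht
    rw [Finset.mem_powerset] at ht ⊢
    by_cases h : m ∈ t
    · simp only [hφ, if_pos h]
      exact (Finset.erase_subset m t).trans ht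
    · simp only [hφ, if_neg h]
      exact Finset.insert_subset hm ht
  have hsum : ∀ t, p (∑ x ∈ φ t, x) ↔ p (∑ x ∈ t, x) := by
    intro t
    by_cases h : m ∈ t
    · simp only [hφ, if_pos h]
      have he : (∑ x ∈ t.erase m, x) + m = ∑ x ∈ t, x := by
        have := Finset.add_sum_erase t (fun x => x) h
        omega
      rw [← he, hp]
    · simp only [hφ, if_neg h]
      rw [Finset.sum_insert h]
      rw [show m + (∑ x ∈ t, x) = (∑ x ∈ t, x) + m from by omega, hp]
  have hcard : ∀ t ∈ M'.powerset, (Even (M'.card - t.card) ↔ ¬ Even (M'.card - (φ t).card)) := by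
    intro t ht
    rw [Finset.mem_powerset] at ht
    have hle : t.card ≤ M'.card := Finset.card_le_card ht
    by_cases h : m ∈ t
    · have hc : (φ t).card = t.card - 1 := by
        simp only [hφ, if_pos h]
        exact Finset.card_erase_of_mem h
      have hpos : 0 < t.card := Finset.card_pos.mpr ⟨m, h⟩
      rw [hc]
      simp only [Nat.even_iff, Nat.not_even_iff]
      omega
    · have hc : (φ t).card = t.card + 1 := by
        simp only [hφ, if_neg h]
        exact Finset.card_insert_of_notMem h
      have hlt : t.card < M'.card :=
        Finset.card_lt_card ((Finset.ssubset_iff_of_subset ht).mpr ⟨m, hm, h⟩)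
      rw [hc]
      simp only [Nat.even_iff, Nat.not_even_iff]
      omega
  have hφφ : ∀ t, φ (φ t) = t := by
    intro t
    by_cases h : m ∈ t
    · simp only [hφ, if_pos h]
      rw [if_neg (Finset.notMem_erase m t), Finset.insert_erase h]
    · simp only [hφ, if_neg h]
      rw [if_pos (Finset.mem_insert_self m t), Finset.erase_insert h]
  apply Finset.card_nbij' φ φ
  · intro t htm
    rw [Finset.mem_coe, Finset.mem_filter] at htm ⊢
    rw [Finset.mem_filter] at htm ⊢
    obtain ⟨⟨hP, hEv⟩, hp⟩ := htm
    refine ⟨⟨hmem t hP, ?_⟩, (hsum t).mpr hp⟩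
    rw [← Nat.not_even_iff_odd]
    exact (hcard t hP).mp hEv
  · intro t htm
    rw [Finset.mem_coe, Finset.mem_filter] at htm ⊢
    rw [Finset.mem_filter] at htm ⊢
    obtain ⟨⟨hP, hOd⟩, hp⟩ := htm
    refine ⟨⟨hmem t hP, ?_⟩, (hsum t).mpr hp⟩
    rw [← Nat.not_even_iff_odd] at hOd
    by_contra hEv2
    exact hOd ((hcard t hP).mpr hEv2)
  · intro t htm
    exact hφφ t
  · intro t htm
    exact hφφ t


lemma exists_unbalanced_residue (n : ℕ) (hn : 2 ≤ n) (M' : Finset ℕ)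
    (hM' : ∀ m ∈ M', ¬ n ∣ m) :
    ∃ c < n, ((M'.powerset.filter (fun t => Even (M'.card - t.card))).filter
        (fun t => (∑ x ∈ t, x) % n = c)).card
      ≠ ((M'.powerset.filter (fun t => Odd (M'.card - t.card))).filter
        (fun t => (∑ x ∈ t, x) % n = c)).card := by
  classical
  by_contra hcon
  push_neg at hcon
  set ζ : ℂ := Complex.exp (2 * Real.pi * Complex.I / n) with hζ
  have hprim : IsPrimitiveRoot ζ n := Complex.isPrimitiveRoot_exp n (by omega)
  have hζn : ζ ^ n = 1 := hprim.pow_eq_one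
  have hne : (∏ m ∈ M', (ζ ^ m - 1)) ≠ 0 := by
    apply Finset.prod_ne_zero_iff.mpr
    intro m hm
    rw [sub_ne_zero]
    intro h
    exact hM' m hm ((hprim.pow_eq_one_iff_dvd m).mp h)
  have hexp : (∏ m ∈ M', (ζ ^ m - 1))
      = ∑ t ∈ M'.powerset, (ζ ^ (∑ x ∈ t, x)) * (-1 : ℂ) ^ (M'.card - t.card) := by
    have h := Finset.prod_add (fun m => ζ ^ m) (fun _ => (-1 : ℂ)) M'
    calc (∏ m ∈ M', (ζ ^ m - 1)) = ∏ m ∈ M', (ζ ^ m + (-1)) := by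
          apply Finset.prod_congr rfl; intro m _; ring
      _ = ∑ t ∈ M'.powerset, (∏ x ∈ t, ζ ^ x) * ∏ _x ∈ M' \ t, (-1 : ℂ) := h
      _ = ∑ t ∈ M'.powerset, (ζ ^ (∑ x ∈ t, x)) * (-1 : ℂ) ^ (M'.card - t.card) := by
          apply Finset.sum_congr rfl
          intro t ht
          rw [Finset.mem_powerset] at ht
          rw [Finset.prod_pow_eq_pow_sum, Finset.prod_const, Finset.card_sdiff_of_subset ht]
  have hzc : ∀ t : Finset ℕ, ζ ^ (∑ x ∈ t, x) = ζ ^ ((∑ x ∈ t, x) % n) := by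
    intro t
    conv_lhs => rw [← Nat.div_add_mod (∑ x ∈ t, x) n]
    rw [pow_add, pow_mul, hζn, one_pow, one_mul]
  have hzero : (∑ t ∈ M'.powerset, (ζ ^ (∑ x ∈ t, x)) * (-1 : ℂ) ^ (M'.card - t.card)) = 0 := by
    rw [← Finset.sum_fiberwise_of_maps_to (g := fun t : Finset ℕ => (∑ x ∈ t, x) % n)
      (t := Finset.range n) (fun t _ => Finset.mem_range.mpr (Nat.mod_lt _ (by omega)))]
    apply Finset.sum_eq_zero
    intro c hc
    rw [Finset.mem_range] at hc
    rw [← Finset.sum_filter_add_sum_filter_not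
      (M'.powerset.filter (fun t => (∑ x ∈ t, x) % n = c))
      (fun t => Even (M'.card - t.card))]
    have heq1 : ∀ t ∈ (M'.powerset.filter (fun t => (∑ x ∈ t, x) % n = c)).filter
        (fun t => Even (M'.card - t.card)),
        (ζ ^ (∑ x ∈ t, x)) * (-1 : ℂ) ^ (M'.card - t.card) = ζ ^ c := by
      intro t ht
      simp only [Finset.mem_filter] at ht
      rw [Even.neg_one_pow ht.2, mul_one, hzc, ht.1.2]
    have heq2 : ∀ t ∈ (M'.powerset.filter (fun t => (∑ x ∈ t, x) % n = c)).filter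
        (fun t => ¬ Even (M'.card - t.card)),
        (ζ ^ (∑ x ∈ t, x)) * (-1 : ℂ) ^ (M'.card - t.card) = -ζ ^ c := by
      intro t ht
      simp only [Finset.mem_filter] at ht
      rw [Odd.neg_one_pow (Nat.not_even_iff_odd.mp ht.2), hzc, ht.1.2]
      ring
    rw [Finset.sum_congr rfl heq1, Finset.sum_congr rfl heq2,
      Finset.sum_const, Finset.sum_const]
    have hfe : (M'.powerset.filter (fun t => (∑ x ∈ t, x) % n = c)).filter
        (fun t => Even (M'.card - t.card))
        = (M'.powerset.filter (fun t => Even (M'.card - t.card))).filter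
          (fun t => (∑ x ∈ t, x) % n = c) := Finset.filter_comm _ _ _
    have hfo : (M'.powerset.filter (fun t => (∑ x ∈ t, x) % n = c)).filter
        (fun t => ¬ Even (M'.card - t.card))
        = (M'.powerset.filter (fun t => Odd (M'.card - t.card))).filter
          (fun t => (∑ x ∈ t, x) % n = c) := by
      rw [Finset.filter_comm]
      congr 1
      apply Finset.filter_congr
      intro t _
      exact Nat.not_even_iff_odd
    rw [hfe, hfo, hcon c hc]
    rw [smul_neg]
    exact add_neg_cancel _
  rw [hexp] at hne
  exact hne hzero


lemma dsum_indW {s K : ℕ} (h1 : 1 < s) (S : Finset ℕ) (hSK : ∀ x ∈ S, x < K) :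
    (∑ j : Fin K, (indW s K h1 S j).val) = S.card := by
  classical
  unfold indW
  have : ∀ j : Fin K, ((if j.val ∈ S then (⟨1, h1⟩ : Fin s) else ⟨0, by omega⟩)).val
      = if j.val ∈ S then 1 else 0 := by
    intro j; by_cases h : j.val ∈ S <;> simp [h]
  simp only [this]
  rw [← Finset.card_filter]
  apply Finset.card_bij (fun (j : Fin K) _ => j.val)
  · intro j hj; exact (Finset.mem_filter.mp hj).2
  · intro j _ j' _ h; exact Fin.ext h
  · intro x hx
    exact ⟨⟨x, hSK x hx⟩, Finset.mem_filter.mpr ⟨Finset.mem_univ _, hx⟩, rfl⟩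

lemma sum_dsum_univ {s K : ℕ} :
    (∑ w : Fin K → Fin s, ∑ j, (w j).val) = K * ∑ d : Fin s, d.val * s ^ (K - 1) := by
  classical
  rw [Finset.sum_comm]
  have hj : ∀ j : Fin K, (∑ w : Fin K → Fin s, (w j).val)
      = ∑ d : Fin s, d.val * s ^ (K - 1) := by
    intro j
    have h1 : ∀ w : Fin K → Fin s, (w j).val
        = ∑ d : Fin s, if w j = d then d.val else 0 := by
      intro w
      rw [Finset.sum_ite_eq]
      simp
    simp only [h1]
    rw [Finset.sum_comm]
    apply Finset.sum_congr rfl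
    intro d _
    have h2 : (∑ w : Fin K → Fin s, if w j = d then d.val else 0)
        = d.val * ∑ w : Fin K → Fin s, if w j = d then 1 else 0 := by
      rw [Finset.mul_sum]
      apply Finset.sum_congr rfl
      intro w _
      by_cases h : w j = d <;> simp [h]
    have h3 : (∑ w : Fin K → Fin s, if w j = d then 1 else 0) = s ^ (K - 1) := by
      rw [← Finset.card_filter]
      have hcf := card_fiber (s := s) (fun _ : Fin 1 => j)
        (fun a b _ => Subsingleton.elim a b) (fun _ => d)
      rw [← hcf]
      congr 1
      apply Finset.filter_congr
      intro w _
      exact ⟨fun h _ => h, fun h => h 0⟩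
    rw [h2, h3]
  simp only [hj]
  rw [Finset.sum_const, Finset.card_univ, Fintype.card_fin, smul_eq_mul]

lemma blockVal_eW {s ℓ c : ℕ} (h1 : 1 < s) (hc : c < ℓ) :
    blockVal (eW s ℓ c h1) = s ^ (ℓ - 1 - c) := by
  unfold blockVal eW
  rw [Finset.sum_eq_single (⟨c, hc⟩ : Fin ℓ)]
  · simp
  · intro j _ hne
    have hv : j.val ≠ c := fun h => hne (Fin.ext h)
    simp [hv]
  · intro h
    exact absurd (Finset.mem_univ _) h

lemma div_sep {μ Λ r1 r2 a1 a2 : ℕ} (hμ : 0 < μ) (hdvd : μ ∣ Λ) (hr1 : r1 < Λ) (hr2 : r2 < Λ)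
    (ha : a1 ≠ a2) : (r1 + a1 * Λ) / μ ≠ (r2 + a2 * Λ) / μ := by
  obtain ⟨B, hB⟩ := hdvd
  have hBpos : 0 < B := by
    rcases Nat.eq_zero_or_pos B with h | h
    · subst h; rw [Nat.mul_zero] at hB; omega
    · exact h
  have key : ∀ r a : ℕ, (r + a * Λ) / μ = r / μ + a * B := by
    intro r a
    rw [hB, show a * (μ * B) = a * B * μ from by ring, Nat.add_mul_div_right _ _ hμ]
  have hrb : ∀ r, r < Λ → r / μ < B := by
    intro r hr
    rw [Nat.div_lt_iff_lt_mul hμ]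
    rw [hB] at hr
    have : μ * B = B * μ := mul_comm _ _
    omega
  rw [key r1 a1, key r2 a2]
  intro he
  have h1 := hrb r1 hr1
  have h2 := hrb r2 hr2
  have e1 : (r1 / μ + a1 * B) / B = a1 := by
    rw [Nat.add_mul_div_right _ _ hBpos, Nat.div_eq_of_lt h1]; omega
  have e2 : (r2 / μ + a2 * B) / B = a2 := by
    rw [Nat.add_mul_div_right _ _ hBpos, Nat.div_eq_of_lt h2]; omega
  rw [he, e2] at e1
  exact ha e1.symm

lemma pos_mod {Λ μ : ℕ} (hdvd : μ ∣ Λ) (a idx : ℕ) : (a % Λ + idx * Λ) % μ = a % μ := by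
  obtain ⟨B, hB⟩ := hdvd
  rw [hB, show idx * (μ * B) = idx * B * μ from by ring, Nat.add_mul_mod_self_right]
  exact Nat.mod_mod_of_dvd a ⟨B, hB.symm ▸ rfl⟩

lemma pos_div {Λ : ℕ} (hΛ : 0 < Λ) (a idx : ℕ) : (a % Λ + idx * Λ) / Λ = idx := by
  rw [Nat.add_mul_div_right _ _ hΛ, Nat.div_eq_of_lt (Nat.mod_lt _ hΛ)]; omega


end S4

theorem statement4 (s : ℕ) (hs : 2 ≤ s) (M : Finset ℕ) (hM : ∀ m ∈ M, 0 < m)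
    (n : ℕ) (hn : 0 < n) (hnd : ∀ m ∈ M, ¬ n ∣ m) (L : ℕ) :
    ∃ ℓU : ℕ, L ≤ ℓU ∧ ∃ U : Finset (Fin ℓU → Fin s),
      (∀ m ∈ M, BalancedSet s ℓU m U) ∧ ¬ BalancedSet s ℓU n U ∧
      (Odd s → ∃ z : Fin ℓU → Fin s, Even (blockVal z) ∧ U = Finset.univ \ {z}) ∧
      (Even s → ∃ z ztilde : Fin ℓU → Fin s, Even (blockVal z) ∧ Odd (blockVal ztilde) ∧
        blockVal z < blockVal ztilde ∧ U = Finset.univ \ {z, ztilde}) := by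
  classical
  have h1 : 1 < s := hs
  rcases Nat.lt_or_ge n 2 with hn1 | hn2
  · -- case n = 1
    have hn1' : n = 1 := by omega
    subst hn1'
    have hMempty : ∀ m ∈ M, False := fun m hm => hnd m hm (one_dvd m)
    refine ⟨L + 2, by omega, ?_⟩
    set ℓ : ℕ := L + 2 with hℓ
    set z0 : Fin ℓ → Fin s := S4.indW s ℓ h1 ∅ with hz0
    set z1 : Fin ℓ → Fin s := S4.indW s ℓ h1 {L + 1} with hz1
    set v0 : Fin 1 → Fin s := S4.zW s 1 h1 with hv0
    set v1 : Fin 1 → Fin s := S4.eW s 1 0 h1 with hv1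
    have hv10 : v1 ≠ v0 := S4.eW_ne_zW h1 (by omega)
    have hocc0 : ∀ v : Fin 1 → Fin s, occCount (chunk z0 1) v
        = if v = v0 then ℓ else 0 := by
      intro v
      rw [hz0, S4.occ_indicator h1 (by omega) (one_dvd ℓ) ∅ (by simp) (by simp) v]
      simp [hv0]
    have hocc1 : ∀ v : Fin 1 → Fin s, occCount (chunk z1 1) v
        = (if v = v0 then ℓ - 1 else 0) + (if v = v1 then 1 else 0) := by
      intro v
      rw [hz1, S4.occ_indicator h1 (by omega) (one_dvd ℓ) {L + 1}
        (by intro x hx; rw [Finset.mem_singleton] at hx; omega)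
        (by intro x hx y hy hxy; rw [Finset.mem_singleton] at hx hy; omega) v]
      congr 1
      · simp [hv0]
      · rw [Finset.filter_singleton]
        have hmod : (L + 1) % 1 = 0 := Nat.mod_one _
        by_cases hv : S4.eW s 1 ((L + 1) % 1) h1 = v
        · rw [if_pos hv, if_pos (by rw [← hv, hmod, hv1])]
          simp
        · rw [if_neg hv, if_neg (by rw [hv1, ← hmod]; exact fun hh => hv hh.symm)]
          simp
    have hz0ne1 : z0 ≠ z1 := by
      intro h
      have := congrFun h ⟨L + 1, by omega⟩
      simp [hz0, hz1, S4.indW] at this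
    have hTot : ∀ v : Fin 1 → Fin s,
        (∑ w : Fin ℓ → Fin s, occCount (chunk w 1) v) = ℓ * s ^ (ℓ - 1) := by
      intro v
      rw [S4.sum_occ_univ (by omega) v, Nat.div_one]
    have hbv0 : Even (blockVal z0) := by
      have : blockVal z0 = 0 := by
        unfold blockVal
        apply Finset.sum_eq_zero
        intro j _
        simp [hz0, S4.indW]
      rw [this]
      exact Even.zero
    have hbv1odd : Odd (blockVal z1) := by
      have heq : z1 = S4.eW s ℓ (L + 1) h1 := by
        funext j
        simp [hz1, S4.indW, S4.eW, Finset.mem_singleton]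
      have : blockVal z1 = 1 := by
        rw [heq, S4.blockVal_eW h1 (by omega)]
        have : ℓ - 1 - (L + 1) = 0 := by omega
        rw [this, pow_zero]
      rw [this]
      exact odd_one
    have hbv01 : blockVal z0 < blockVal z1 := by
      have h0 : blockVal z0 = 0 := by
        unfold blockVal
        apply Finset.sum_eq_zero
        intro j _
        simp [hz0, S4.indW]
      have heq : z1 = S4.eW s ℓ (L + 1) h1 := by
        funext j
        simp [hz1, S4.indW, S4.eW, Finset.mem_singleton]
      have h1' : blockVal z1 = 1 := by
        rw [heq, S4.blockVal_eW h1 (by omega)]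
        have : ℓ - 1 - (L + 1) = 0 := by omega
        rw [this, pow_zero]
      omega
    by_cases hpar : Odd s
    · refine ⟨Finset.univ \ {z0}, fun m hm => (hMempty m hm).elim, ?_, fun _ => ⟨z0, hbv0, rfl⟩,
        fun hev => absurd hpar (by rw [Nat.odd_iff, Nat.even_iff.mp hev]; omega)⟩
      rintro ⟨-, hbal⟩
      have hb := hbal v1 v0
      have hsum : ∀ v : Fin 1 → Fin s,
          (∑ w ∈ Finset.univ \ {z0}, occCount (chunk w 1) v) + occCount (chunk z0 1) v
            = ℓ * s ^ (ℓ - 1) := by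
        intro v
        have hss := Finset.sum_sdiff (f := fun w => occCount (chunk w 1) v)
          (Finset.singleton_subset_iff.mpr (Finset.mem_univ z0))
        rw [Finset.sum_singleton] at hss
        rw [hss, hTot v]
      have e1 := hsum v1
      have e0 := hsum v0
      rw [hocc0 v1, if_neg hv10] at e1
      rw [hocc0 v0, if_pos rfl] at e0
      omega
    · have hev : Even s := Nat.not_odd_iff_even.mp hpar
      refine ⟨Finset.univ \ {z0, z1}, fun m hm => (hMempty m hm).elim, ?_,
        fun hodd => absurd hodd hpar, fun _ => ⟨z0, z1, hbv0, hbv1odd, hbv01, rfl⟩⟩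
      rintro ⟨-, hbal⟩
      have hb := hbal v1 v0
      have hsum : ∀ v : Fin 1 → Fin s,
          (∑ w ∈ Finset.univ \ {z0, z1}, occCount (chunk w 1) v)
            + (occCount (chunk z0 1) v + occCount (chunk z1 1) v)
            = ℓ * s ^ (ℓ - 1) := by
        intro v
        have hss := Finset.sum_sdiff (f := fun w => occCount (chunk w 1) v)
          (show {z0, z1} ⊆ Finset.univ from fun x _ => Finset.mem_univ x)
        rw [Finset.sum_pair hz0ne1] at hss
        rw [hss, hTot v]
      have e1 := hsum v1
      have e0 := hsum v0
      rw [hocc0 v1, if_neg hv10, hocc1 v1, if_neg hv10, if_pos rfl] at e1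
      rw [hocc0 v0, if_pos rfl, hocc1 v0, if_pos rfl, if_neg (fun hh => hv10 hh.symm)] at e0
      omega
  · -- main case n ≥ 2
    set M' : Finset ℕ := insert (n + 1) M with hM'def
    have hmem' : n + 1 ∈ M' := Finset.mem_insert_self _ _
    have hM'nd : ∀ m ∈ M', ¬ n ∣ m := by
      intro m hm
      rcases Finset.mem_insert.mp hm with h | h
      · subst h
        intro hd
        have h2 : n ∣ 1 := (Nat.dvd_add_right (dvd_refl n)).mp hd
        have := Nat.le_of_dvd (by omega) h2
        omega
      · exact hnd m h
    have hM'pos : ∀ m ∈ M', 0 < m := by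
      intro m hm
      rcases Finset.mem_insert.mp hm with h | h
      · omega
      · exact hM m h
    set Λ : ℕ := n * ∏ m ∈ M', m with hΛdef
    have hΛpos : 0 < Λ := Nat.mul_pos (by omega) (Finset.prod_pos hM'pos)
    have hnΛ : n ∣ Λ := dvd_mul_right n _
    have hmΛ : ∀ m ∈ M', m ∣ Λ := fun m hm =>
      Dvd.dvd.mul_left (Finset.dvd_prod_of_mem _ hm) n
    set Imax : ℕ := ∑ x ∈ M', 2 ^ x with hImaxdef
    set X : ℕ := Λ * (Imax + 1) with hXdef
    set K : ℕ := (L + X + 2) * (2 * Λ) with hKdef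
    have hΛK : Λ ∣ K := ⟨(L + X + 2) * 2, by rw [hKdef]; ring⟩
    have hK2 : 2 ∣ K := ⟨(L + X + 2) * Λ, by rw [hKdef]; ring⟩
    have hXpos : 0 < X := by
      rw [hXdef]
      exact Nat.mul_pos hΛpos (by omega)
    have hXK : X + 2 ≤ K := by
      calc X + 2 ≤ (L + X + 2) * 1 := by omega
        _ ≤ (L + X + 2) * (2 * Λ) := Nat.mul_le_mul_left _ (by omega)
    have hLK : L ≤ K := by
      calc L ≤ (L + X + 2) * 1 := by omega
        _ ≤ (L + X + 2) * (2 * Λ) := Nat.mul_le_mul_left _ (by omega)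
    have hKpos : 0 < K := by omega
    have hK2' : 2 ≤ K := by omega
    set q : ℕ := s ^ K with hqdef
    have hq4 : 4 ≤ q := by
      rw [hqdef]
      calc (4:ℕ) = 2 ^ 2 := rfl
        _ ≤ 2 ^ K := Nat.pow_le_pow_right (by omega) hK2'
        _ ≤ s ^ K := Nat.pow_le_pow_left hs K
    set ℓ : ℕ := q * K with hℓdef
    have hKℓ : K ∣ ℓ := dvd_mul_left K q
    have hLℓ : L ≤ ℓ := by
      calc L ≤ K := hLK
        _ = 1 * K := (one_mul K).symm
        _ ≤ q * K := Nat.mul_le_mul_right K (by omega)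
    refine ⟨ℓ, hLℓ, ?_⟩
    set evens : Finset (Finset ℕ) := M'.powerset.filter (fun t => Even (M'.card - t.card))
      with hevdef
    set odds : Finset (Finset ℕ) := M'.powerset.filter (fun t => Odd (M'.card - t.card))
      with hoddef
    set pos : Finset ℕ → ℕ := fun t => (∑ x ∈ t, x) % Λ + (∑ x ∈ t, 2 ^ x) * Λ with hposdef
    have hposinj : Function.Injective pos := by
      intro t u h
      have h1' := S4.pos_div hΛpos (∑ x ∈ t, x) (∑ x ∈ t, 2 ^ x)
      have h2' := S4.pos_div hΛpos (∑ x ∈ u, x) (∑ x ∈ u, 2 ^ x)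
      have hdiveq : (∑ x ∈ t, 2 ^ x) = (∑ x ∈ u, 2 ^ x) := by
        rw [← h1', ← h2']
        rw [hposdef] at h
        simp only at h
        rw [h]
      exact S4.binsum_inj _ t u hdiveq rfl
    have hposlt : ∀ t ∈ M'.powerset, pos t < X := by
      intro t ht
      have hidx : (∑ x ∈ t, 2 ^ x) ≤ Imax := by
        rw [hImaxdef]
        exact Finset.sum_le_sum_of_subset (Finset.mem_powerset.mp ht)
      have hmod : (∑ x ∈ t, x) % Λ < Λ := Nat.mod_lt _ hΛpos
      have hmul : (∑ x ∈ t, 2 ^ x) * Λ ≤ Imax * Λ := Nat.mul_le_mul_right _ hidx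
      have hXe : X = Imax * Λ + Λ := by rw [hXdef]; ring
      rw [hposdef]
      simp only
      omega
    set S1 : Finset ℕ := evens.image pos with hS1def
    set S2 : Finset ℕ := odds.image pos with hS2def
    have hbound : ∀ (EO : Finset (Finset ℕ)), EO ⊆ M'.powerset →
        ∀ x ∈ EO.image pos, x < K := by
      intro EO hsub x hx
      obtain ⟨t, ht, rfl⟩ := Finset.mem_image.mp hx
      have := hposlt t (hsub ht)
      omega
    have hsepa : ∀ (EO : Finset (Finset ℕ)) (μ : ℕ), 0 < μ → μ ∣ Λ →
        ∀ x ∈ EO.image pos, ∀ y ∈ EO.image pos, x ≠ y → x / μ ≠ y / μ := by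
      intro EO μ hμ hdvd x hx y hy hne
      obtain ⟨t, ht, rfl⟩ := Finset.mem_image.mp hx
      obtain ⟨u, hu, rfl⟩ := Finset.mem_image.mp hy
      have htu : t ≠ u := fun h => hne (by rw [h])
      have hidxne : (∑ x ∈ t, 2 ^ x) ≠ (∑ x ∈ u, 2 ^ x) := fun h =>
        htu (S4.binsum_inj _ t u h rfl)
      rw [hposdef]
      simp only
      exact S4.div_sep hμ hdvd (Nat.mod_lt _ hΛpos) (Nat.mod_lt _ hΛpos) hidxne
    have hoccw : ∀ (EO : Finset (Finset ℕ)), EO ⊆ M'.powerset → ∀ (μ : ℕ), 0 < μ → μ ∣ Λ →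
        ∀ v : Fin μ → Fin s,
        occCount (chunk (S4.indW s K h1 (EO.image pos)) μ) v
          = (if v = S4.zW s μ h1 then K / μ - EO.card else 0)
            + (EO.filter (fun t => S4.eW s μ ((∑ x ∈ t, x) % μ) h1 = v)).card := by
      intro EO hsub μ hμ hdvd v
      rw [S4.occ_indicator h1 hμ (hdvd.trans hΛK) _ (hbound EO hsub) (hsepa EO μ hμ hdvd) v]
      have hcarde : (EO.image pos).card = EO.card :=
        Finset.card_image_of_injective EO hposinj
      rw [hcarde]
      congr 1
      rw [Finset.filter_image]
      rw [Finset.card_image_of_injective _ hposinj]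
      congr 1
      apply Finset.filter_congr
      intro t _
      have hpm : pos t % μ = (∑ x ∈ t, x) % μ := by
        rw [hposdef]
        simp only
        exact S4.pos_mod hdvd _ _
      rw [hpm]
    set w1 : Fin K → Fin s := S4.indW s K h1 S1 with hw1def
    set w2 : Fin K → Fin s := S4.indW s K h1 S2 with hw2def
    set wmid : Fin K → Fin s := S4.eW s K (K - 1) h1 with hwmiddef
    set wlast : Fin K → Fin s := S4.eW s K (K - 2) h1 with hwlastdef
    have hcardW : Fintype.card (Fin K → Fin s) = q := by
      rw [Fintype.card_fun, Fintype.card_fin, Fintype.card_fin, hqdef]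
    obtain ⟨E0, -⟩ : ∃ _ : Fin q ≃ (Fin K → Fin s), True :=
      ⟨(Fintype.equivFinOfCardEq hcardW).symm, trivial⟩
    set i00 : Fin q := ⟨0, by omega⟩ with hi00def
    set ilast : Fin q := ⟨q - 1, by omega⟩ with hilastdef
    have hi0ne : i00 ≠ ilast := by
      intro h
      have := congrArg Fin.val h
      rw [hi00def, hilastdef] at this
      simp only at this
      omega
    obtain ⟨E1, hE1def⟩ : ∃ E : Fin q ≃ (Fin K → Fin s),
        E = E0.trans (Equiv.swap (E0 i00) wmid) := ⟨_, rfl⟩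
    have hE1_0 : E1 i00 = wmid := by
      rw [hE1def]
      simp only [Equiv.trans_apply]
      exact Equiv.swap_apply_left _ _
    have hmidlast : wmid ≠ wlast := by
      intro h
      have hKm : K - 1 ≠ K - 2 := by omega
      have := congrFun h ⟨K - 1, by omega⟩
      rw [hwmiddef, hwlastdef] at this
      simp only [S4.eW, if_pos rfl, if_neg hKm] at this
      have := congrArg Fin.val this
      simp at this
    obtain ⟨E2, hE2def⟩ : ∃ E : Fin q ≃ (Fin K → Fin s),
        E = E1.trans (Equiv.swap (E1 ilast) wlast) := ⟨_, rfl⟩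
    have hE2_last : E2 ilast = wlast := by
      rw [hE2def]
      simp only [Equiv.trans_apply]
      exact Equiv.swap_apply_left _ _
    have hE2_0 : E2 i00 = wmid := by
      rw [hE2def]
      simp only [Equiv.trans_apply, hE1_0]
      apply Equiv.swap_apply_of_ne_of_ne
      · intro h
        exact hi0ne (E1.injective (hE1_0.trans h))
      · exact hmidlast
    obtain ⟨i0, hi0def⟩ : ∃ i : Fin q, i = E2.symm w1 := ⟨_, rfl⟩
    have hEi0 : E2 i0 = w1 := by rw [hi0def]; exact E2.apply_symm_apply w1
    have hKm1S1 : K - 1 ∉ S1 := by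
      intro hmem
      have := hbound evens (Finset.filter_subset _ _) _ hmem
      have := hposlt
      obtain ⟨t, ht, hpt⟩ := Finset.mem_image.mp hmem
      have := hposlt t ((Finset.filter_subset _ _) ht)
      omega
    have hKm2S1 : K - 2 ∉ S1 := by
      intro hmem
      obtain ⟨t, ht, hpt⟩ := Finset.mem_image.mp hmem
      have := hposlt t ((Finset.filter_subset _ _) ht)
      omega
    have hw1mid : w1 ≠ wmid := by
      intro h
      have := congrFun h ⟨K - 1, by omega⟩
      rw [hw1def, hwmiddef] at this
      simp only [S4.indW, S4.eW, if_pos rfl] at this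
      rw [if_neg (show ((⟨K-1, by omega⟩ : Fin K)).val ∈ S1 → False from fun hh => hKm1S1 hh)] at this
      have := congrArg Fin.val this
      simp at this
    have hw1last : w1 ≠ wlast := by
      intro h
      have hne2 : ((⟨K-2, by omega⟩ : Fin K)).val = K - 2 := rfl
      have := congrFun h ⟨K - 2, by omega⟩
      rw [hw1def, hwlastdef] at this
      simp only [S4.indW, S4.eW, hne2, if_pos rfl] at this
      rw [if_neg (show (K - 2) ∈ S1 → False from fun hh => hKm2S1 hh)] at this
      have := congrArg Fin.val this
      simp at this
    have hi0_ne0 : i0 ≠ i00 := fun h => hw1mid (by rw [← hEi0, h, hE2_0])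
    have hi0_nelast : i0 ≠ ilast := fun h => hw1last (by rw [← hEi0, h, hE2_last])
    obtain ⟨F, hFapp⟩ : ∃ F : Fin q → (Fin K → Fin s),
        ∀ i, F i = if i = i0 then w2 else E2 i := ⟨_, fun _ => rfl⟩
    have hF0 : F i00 = wmid := by
      rw [hFapp i00, if_neg (fun h : i00 = i0 => hi0_ne0 h.symm), hE2_0]
    have hFlast : F ilast = wlast := by
      rw [hFapp ilast, if_neg (fun h : ilast = i0 => hi0_nelast h.symm), hE2_last]
    have hFi0 : F i0 = w2 := by
      rw [hFapp i0, if_pos rfl]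
    obtain ⟨π, hπdef⟩ : ∃ π : Equiv.Perm (Fin q), π = Equiv.swap i00 ilast := ⟨_, rfl⟩
    obtain ⟨z, hzdef⟩ : ∃ z : Fin (q * K) → Fin s, z = S4.concatW F := ⟨_, rfl⟩
    obtain ⟨zt, hztdef⟩ : ∃ zt : Fin (q * K) → Fin s,
        zt = S4.concatW (fun i => F (π i)) := ⟨_, rfl⟩
    have hOVR : ∀ g : (Fin K → Fin s) → ℕ,
        (∑ i : Fin q, g (F i)) + g w1 = (∑ w : Fin K → Fin s, g w) + g w2 := by
      intro g
      have ha : ∑ i : Fin q, g (F i) = (∑ i ∈ Finset.univ.erase i0, g (E2 i)) + g w2 := by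
        rw [← Finset.sum_erase_add _ _ (Finset.mem_univ i0)]
        congr 1
        · apply Finset.sum_congr rfl
          intro i hi
          rw [hFapp i, if_neg (Finset.mem_erase.mp hi).1]
        · rw [hFi0]
      have hb : (∑ i ∈ Finset.univ.erase i0, g (E2 i)) + g w1
          = ∑ w : Fin K → Fin s, g w := by
        have hc : (∑ i ∈ Finset.univ.erase i0, g (E2 i)) + g (E2 i0)
            = ∑ i : Fin q, g (E2 i) :=
          Finset.sum_erase_add _ _ (Finset.mem_univ i0)
        rw [hEi0] at hc
        rw [hc, Equiv.sum_comp E2 g]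
      omega
    have hzocc : ∀ μ : ℕ, 0 < μ → μ ∣ K → ∀ v : Fin μ → Fin s,
        occCount (chunk z μ) v + occCount (chunk w1 μ) v
          = (K / μ) * s ^ (K - μ) + occCount (chunk w2 μ) v := by
      intro μ hμ hμK v
      rw [hzdef, S4.occ_concat hμK]
      have h := hOVR (fun w => occCount (chunk w μ) v)
      rw [S4.sum_occ_univ hμ v] at h
      exact h
    have hztocc : ∀ μ : ℕ, μ ∣ K → ∀ v : Fin μ → Fin s,
        occCount (chunk zt μ) v = occCount (chunk z μ) v := by
      intro μ hμK v
      rw [hzdef, hztdef, S4.occ_concat hμK, S4.occ_concat hμK]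
      exact Equiv.sum_comp π (fun i => occCount (chunk (F i) μ) v)
    have hce : evens.card = odds.card := by
      have h := S4.evens_odds_bij M' hmem' (fun _ => True) (fun a => Iff.rfl)
      simpa using h
    have hzconst : ∀ m ∈ M', ∀ v : Fin m → Fin s,
        occCount (chunk z m) v = (K / m) * s ^ (K - m) := by
      intro m hm v
      have hμ : 0 < m := hM'pos m hm
      have hμΛ := hmΛ m hm
      have ha := hzocc m hμ (hμΛ.trans hΛK) v
      have hw1v := hoccw evens (Finset.filter_subset _ _) m hμ hμΛ v
      have hw2v := hoccw odds (Finset.filter_subset _ _) m hμ hμΛ v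
      have hcf : (evens.filter (fun t => S4.eW s m ((∑ x ∈ t, x) % m) h1 = v)).card
          = (odds.filter (fun t => S4.eW s m ((∑ x ∈ t, x) % m) h1 = v)).card := by
        apply S4.evens_odds_bij M' hm (fun a => S4.eW s m (a % m) h1 = v)
        intro a
        rw [Nat.add_mod_right]
      have hw12 : occCount (chunk w1 m) v = occCount (chunk w2 m) v := by
        rw [hw1def, hw2def, hS1def, hS2def, hw1v, hw2v, hce, hcf]
      omega
    obtain ⟨c, hcn, hDD⟩ := S4.exists_unbalanced_residue n hn2 M' hM'nd
    rw [← hevdef, ← hoddef] at hDD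
    have hnK : n ∣ K := hnΛ.trans hΛK
    have hmodn : ∀ t : Finset ℕ, (∑ x ∈ t, x) % n < n := fun t => Nat.mod_lt _ (by omega)
    have hw1e : occCount (chunk w1 n) (S4.eW s n c h1)
        = (evens.filter (fun t => (∑ x ∈ t, x) % n = c)).card := by
      rw [hw1def, hS1def, hoccw evens (Finset.filter_subset _ _) n (by omega) hnΛ]
      rw [if_neg (S4.eW_ne_zW h1 hcn), zero_add]
      congr 1
      apply Finset.filter_congr
      intro t _
      exact S4.eW_inj h1 (hmodn t) hcn
    have hw2e : occCount (chunk w2 n) (S4.eW s n c h1)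
        = (odds.filter (fun t => (∑ x ∈ t, x) % n = c)).card := by
      rw [hw2def, hS2def, hoccw odds (Finset.filter_subset _ _) n (by omega) hnΛ]
      rw [if_neg (S4.eW_ne_zW h1 hcn), zero_add]
      congr 1
      apply Finset.filter_congr
      intro t _
      exact S4.eW_inj h1 (hmodn t) hcn
    have hw10 : occCount (chunk w1 n) (S4.zW s n h1) = K / n - evens.card := by
      rw [hw1def, hS1def, hoccw evens (Finset.filter_subset _ _) n (by omega) hnΛ]
      rw [if_pos rfl]
      rw [Finset.filter_false_of_mem (fun t _ => S4.eW_ne_zW h1 (hmodn t)),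
        Finset.card_empty, add_zero]
    have hw20 : occCount (chunk w2 n) (S4.zW s n h1) = K / n - odds.card := by
      rw [hw2def, hS2def, hoccw odds (Finset.filter_subset _ _) n (by omega) hnΛ]
      rw [if_pos rfl]
      rw [Finset.filter_false_of_mem (fun t _ => S4.eW_ne_zW h1 (hmodn t)),
        Finset.card_empty, add_zero]
    have hzne : occCount (chunk z n) (S4.eW s n c h1)
        + (evens.filter (fun t => (∑ x ∈ t, x) % n = c)).card
        = (K / n) * s ^ (K - n) + (odds.filter (fun t => (∑ x ∈ t, x) % n = c)).card := by
      have h := hzocc n (by omega) hnK (S4.eW s n c h1)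
      rw [hw1e, hw2e] at h
      exact h
    have hzn0 : occCount (chunk z n) (S4.zW s n h1) + (K / n - evens.card)
        = (K / n) * s ^ (K - n) + (K / n - odds.card) := by
      have h := hzocc n (by omega) hnK (S4.zW s n h1)
      rw [hw10, hw20] at h
      exact h
    have hcards1 : S1.card = evens.card := by
      rw [hS1def]; exact Finset.card_image_of_injective _ hposinj
    have hcards2 : S2.card = odds.card := by
      rw [hS2def]; exact Finset.card_image_of_injective _ hposinj
    have hevcard : evens.card ≤ K / n := by
      have h := hzn0
      by_contra hgt
      push_neg at hgt
      -- count bound: evens.card = S1.card ≤ number of chunks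
      have hb2 : (K / n - evens.card) = 0 := by omega
      -- derive directly: occCount of w1 at eW-chunks... simpler: bound via occ identity impossible; use counting:
      -- S1 ⊆ [0,K): cards: each element gives distinct chunk: so S1.card ≤ K/n
      have hinj : ∀ x ∈ S1, x / n < K / n := by
        intro x hx
        exact Nat.div_lt_div_of_lt_of_dvd hnK (hbound evens (Finset.filter_subset _ _) x hx)
      have : S1.card ≤ K / n := by
        have hcard := Finset.card_le_card_of_injOn (fun x => x / n)
          (fun x hx => Finset.mem_range.mpr (hinj x hx))
          (fun x hx y hy hxy => by
            by_contra hne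
            exact hsepa evens n (by omega) hnΛ x hx y hy hne hxy)
        simpa using hcard
      omega
    -- total counts at level ℓ
    have hTT : ∀ μ : ℕ, 0 < μ → ∀ v : Fin μ → Fin s,
        (∑ w : Fin ℓ → Fin s, occCount (chunk w μ) v) = (ℓ / μ) * s ^ (ℓ - μ) :=
      fun μ hμ v => S4.sum_occ_univ hμ v
    by_cases hpar : Odd s
    · -- odd s : remove one block z
      obtain ⟨U, hUdef⟩ : ∃ U : Finset (Fin ℓ → Fin s), U = Finset.univ \ {z} := ⟨_, rfl⟩
      have hUsum : ∀ μ : ℕ, 0 < μ → ∀ v : Fin μ → Fin s,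
          (∑ w ∈ U, occCount (chunk w μ) v) + occCount (chunk z μ) v
            = (ℓ / μ) * s ^ (ℓ - μ) := by
        intro μ hμ v
        have hss := Finset.sum_sdiff (f := fun w => occCount (chunk w μ) v)
          (Finset.singleton_subset_iff.mpr (Finset.mem_univ z))
        rw [Finset.sum_singleton] at hss
        rw [hUdef, hss, hTT μ hμ v]
      refine ⟨U, ?_, ?_, fun _ => ⟨z, ?_, hUdef⟩,
        fun hev => ((Nat.not_odd_iff_even.mpr hev) hpar).elim⟩
      · -- balanced for M
        intro m hm
        have hm' : m ∈ M' := Finset.mem_insert_of_mem hm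
        have hμ : 0 < m := hM'pos m hm'
        refine ⟨((hmΛ m hm').trans hΛK).trans hKℓ, fun v v' => ?_⟩
        have e1 := hUsum m hμ v
        have e2 := hUsum m hμ v'
        rw [hzconst m hm' v] at e1
        rw [hzconst m hm' v'] at e2
        exact Nat.add_right_cancel (e1.trans e2.symm)
      · -- not balanced for n
        rintro ⟨-, hbal⟩
        have hb := hbal (S4.eW s n c h1) (S4.zW s n h1)
        have e1 := hUsum n (by omega) (S4.eW s n c h1)
        have e2 := hUsum n (by omega) (S4.zW s n h1)
        rw [hb] at e1
        omega
      · -- parity of z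
        have hdigz : (∑ j, (z j).val) + S1.card
            = (K * ∑ d : Fin s, d.val * s ^ (K - 1)) + S2.card := by
          have hsplit : (∑ j : Fin (q * K), (S4.concatW F j).val)
              = ∑ i : Fin q, ∑ r : Fin K, (F i r).val := by
            rw [S4.sum_fin_mul (fun j => (S4.concatW F j).val)]
            apply Finset.sum_congr rfl
            intro i _
            apply Finset.sum_congr rfl
            intro r _
            rw [S4.concatW_apply]
          have h := hOVR (fun w => ∑ r, (w r).val)
          rw [S4.sum_dsum_univ] at h
          rw [hw1def] at h
          rw [hw2def] at h
          rw [S4.dsum_indW h1 S1 (by rw [hS1def]; exact hbound evens (Finset.filter_subset _ _)),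
            S4.dsum_indW h1 S2 (by rw [hS2def]; exact hbound odds (Finset.filter_subset _ _))] at h
          rw [hzdef, hsplit]
          exact h
        rw [Nat.even_iff, S4.blockVal_mod_two_of_odd hpar z]
        obtain ⟨k2, hk2⟩ := hK2
        have hKT : K * (∑ d : Fin s, d.val * s ^ (K - 1))
            = 2 * (k2 * (∑ d : Fin s, d.val * s ^ (K - 1))) := by
          rw [hk2]; ring
        omega
    · -- even s : remove two blocks z, zt
      have hse : s % 2 = 0 := Nat.even_iff.mp (Nat.not_odd_iff_even.mp hpar)
      have hℓpos : 0 < ℓ := by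
        have : 1 * K ≤ q * K := Nat.mul_le_mul_right K (by omega)
        omega
      have hqK1 : q * K = (q - 1) * K + K := by
        have h : q - 1 + 1 = q := by omega
        calc q * K = (q - 1 + 1) * K := by rw [h]
          _ = (q - 1) * K + K := by ring
      have hA : ℓ - 1 < ℓ := by omega
      have hB : K - 1 < K := by omega
      have hπ0 : π i00 = ilast := by rw [hπdef]; exact Equiv.swap_apply_left _ _
      have hπl : π ilast = i00 := by rw [hπdef]; exact Equiv.swap_apply_right _ _
      have harith : ℓ - 1 = ilast.val * K + (K - 1) := by
        have hiv : ilast.val = q - 1 := rfl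
        rw [hiv, hℓdef]
        omega
      have hzlast : z ⟨ℓ - 1, hA⟩ = wlast ⟨K - 1, hB⟩ := by
        have h1' : z ⟨ℓ - 1, hA⟩
            = S4.concatW F ⟨ilast.val * K + (⟨K - 1, hB⟩ : Fin K).val,
                S4.fin_mul_bound ilast ⟨K - 1, hB⟩⟩ := by
          rw [hzdef]
          exact congrArg (S4.concatW F) (Fin.ext harith)
        rw [h1', S4.concatW_apply F ilast ⟨K - 1, hB⟩, hFlast]
      have hztlast : zt ⟨ℓ - 1, hA⟩ = wmid ⟨K - 1, hB⟩ := by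
        have h1' : zt ⟨ℓ - 1, hA⟩
            = S4.concatW (fun i => F (π i)) ⟨ilast.val * K + (⟨K - 1, hB⟩ : Fin K).val,
                S4.fin_mul_bound ilast ⟨K - 1, hB⟩⟩ := by
          rw [hztdef]
          exact congrArg (S4.concatW (fun i => F (π i))) (Fin.ext harith)
        rw [h1', S4.concatW_apply (fun i => F (π i)) ilast ⟨K - 1, hB⟩, hπl, hF0]
      have hevenz : Even (blockVal z) := by
        rw [Nat.even_iff, S4.blockVal_mod_two_of_even hse z ⟨ℓ - 1, hA⟩ rfl, hzlast]
        rw [hwlastdef]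
        have hKne : K - 1 ≠ K - 2 := by omega
        simp [S4.eW, hKne]
      have hoddzt : Odd (blockVal zt) := by
        rw [Nat.odd_iff, S4.blockVal_mod_two_of_even hse zt ⟨ℓ - 1, hA⟩ rfl, hztlast]
        rw [hwmiddef]
        simp [S4.eW]
      -- ordering
      have hlt : blockVal z < blockVal zt := by
        have hsplitsum : ∀ f : Fin q → ℕ, (∑ i, f i)
            = f i00 + (f ilast + ∑ i ∈ (Finset.univ.erase i00).erase ilast, f i) := by
          intro f
          rw [← Finset.add_sum_erase _ f (Finset.mem_univ i00)]
          congr 1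
          exact (Finset.add_sum_erase _ f (Finset.mem_erase.mpr ⟨Ne.symm hi0ne, Finset.mem_univ _⟩)).symm
        have hbvz := S4.blockVal_concat F
        have hbvzt := S4.blockVal_concat (fun i => F (π i))
        rw [hsplitsum] at hbvz hbvzt
        have hrest : ∑ i ∈ (Finset.univ.erase i00).erase ilast,
            blockVal (F (π i)) * s ^ (K * (q - 1 - i.val))
            = ∑ i ∈ (Finset.univ.erase i00).erase ilast,
              blockVal (F i) * s ^ (K * (q - 1 - i.val)) := by
          apply Finset.sum_congr rfl
          intro i hi
          have h1' := (Finset.mem_erase.mp hi).1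
          have h2' := (Finset.mem_erase.mp (Finset.mem_erase.mp hi).2).1
          rw [hπdef, Equiv.swap_apply_of_ne_of_ne h2' h1']
        have hπ0 : π i00 = ilast := by rw [hπdef]; exact Equiv.swap_apply_left _ _
        have hπl : π ilast = i00 := by rw [hπdef]; exact Equiv.swap_apply_right _ _
        rw [hrest, hπ0, hπl, hF0, hFlast] at hbvzt
        rw [hF0, hFlast] at hbvz
        have hbmid : blockVal wmid = 1 := by
          rw [hwmiddef, S4.blockVal_eW h1 (by omega)]
          rw [show K - 1 - (K - 1) = 0 from by omega, pow_zero]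
        have hblast : blockVal wlast = s := by
          rw [hwlastdef, S4.blockVal_eW h1 (by omega)]
          rw [show K - 1 - (K - 2) = 1 from by omega, pow_one]
        have hiv0 : i00.val = 0 := rfl
        have hivl : ilast.val = q - 1 := rfl
        have hexp0 : K * (q - 1 - i00.val) = K * (q - 1) := by rw [hiv0, Nat.sub_zero]
        have hexpl : K * (q - 1 - ilast.val) = 0 := by rw [hivl, Nat.sub_self, Nat.mul_zero]
        rw [hbmid, hblast, hexp0, hexpl, pow_zero] at hbvz hbvzt
        rw [hzdef, hztdef, hbvz, hbvzt]
        have h1K : 1 * 1 ≤ K * (q - 1) :=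
          Nat.mul_le_mul (show (1:ℕ) ≤ K by omega) (show (1:ℕ) ≤ q - 1 by omega)
        have hA : s ≤ s ^ (K * (q - 1)) := Nat.le_self_pow (by omega) s
        have hsA : 2 * s ^ (K * (q - 1)) ≤ s * s ^ (K * (q - 1)) :=
          Nat.mul_le_mul_right _ hs
        omega
      have hzne' : z ≠ zt := fun h => absurd (congrArg blockVal h) (by omega)
      obtain ⟨U, hUdef⟩ : ∃ U : Finset (Fin ℓ → Fin s), U = Finset.univ \ {z, zt} := ⟨_, rfl⟩
      have hUsum : ∀ μ : ℕ, 0 < μ → ∀ v : Fin μ → Fin s,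
          (∑ w ∈ U, occCount (chunk w μ) v)
            + (occCount (chunk z μ) v + occCount (chunk zt μ) v)
            = (ℓ / μ) * s ^ (ℓ - μ) := by
        intro μ hμ v
        have hss := Finset.sum_sdiff (f := fun w => occCount (chunk w μ) v)
          (show {z, zt} ⊆ Finset.univ from fun x _ => Finset.mem_univ x)
        rw [Finset.sum_pair hzne'] at hss
        rw [hUdef, hss, hTT μ hμ v]
      refine ⟨U, ?_, ?_, fun hodd => (hpar hodd).elim,
        fun _ => ⟨z, zt, hevenz, hoddzt, hlt, hUdef⟩⟩
      · intro m hm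
        have hm' : m ∈ M' := Finset.mem_insert_of_mem hm
        have hμ : 0 < m := hM'pos m hm'
        refine ⟨((hmΛ m hm').trans hΛK).trans hKℓ, fun v v' => ?_⟩
        have e1 := hUsum m hμ v
        have e2 := hUsum m hμ v'
        rw [hzconst m hm' v, hztocc m ((hmΛ m hm').trans hΛK) v, hzconst m hm' v] at e1
        rw [hzconst m hm' v', hztocc m ((hmΛ m hm').trans hΛK) v', hzconst m hm' v'] at e2
        omega
      · rintro ⟨-, hbal⟩
        have hb := hbal (S4.eW s n c h1) (S4.zW s n h1)
        have e1 := hUsum n (by omega) (S4.eW s n c h1)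
        have e2 := hUsum n (by omega) (S4.zW s n h1)
        rw [hztocc n hnK (S4.eW s n c h1)] at e1
        rw [hztocc n hnK (S4.zW s n h1)] at e2
        omega
end

section
/- Let s be a base, M a finite set of positive integers, n a positive integer that does not divide any element of M, and let U ⊆ B_s^{ℓ_U} be a set of blocks of length ℓ_U that is balanced for M and B_s and not balanced for n and B_s, with n dividing ℓ_U. Then there is a positive real number ε and a block d ∈ B_s^n such that for every positive real number δ there is a positive integer ℓ_0 such that for all ℓ ≥ ℓ_0: the number of blocks u ∈ B_s^{ℓ·ℓ_U} such that (u;ℓ_U) ∈ U^ℓ and occ((u;n), d)/|(u;n)| < 1/s^n − ε, is greater than (1−δ)·(#U)^ℓ. (The number ε does not depend on δ.) -/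
/-- `i`-th block of length `ℓU` of `u`. -/
def blockAt {s ℓ ℓU : ℕ} (u : Fin (ℓ * ℓU) → Fin s) (i : Fin ℓ) : Fin ℓU → Fin s :=
  fun j => u ⟨i.val * ℓU + j.val, by
    have h2 : (i.val + 1) * ℓU ≤ ℓ * ℓU := Nat.mul_le_mul_right ℓU i.isLt
    have h4 : i.val * ℓU + ℓU = (i.val + 1) * ℓU := by ring
    have h5 : j.val < ℓU := j.isLt
    omega⟩

def splitIdx (ℓ K : ℕ) (hK : 0 < K) : Fin ℓ × Fin K ≃ Fin (ℓ * K) where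
  toFun p := ⟨p.1.val * K + p.2.val, by
    have h2 : (p.1.val + 1) * K ≤ ℓ * K := Nat.mul_le_mul_right K p.1.isLt
    have h4 : p.1.val * K + K = (p.1.val + 1) * K := by ring
    have := p.2.isLt
    omega⟩
  invFun j := (⟨j.val / K, by
      exact Nat.div_lt_of_lt_mul (lt_of_lt_of_le j.isLt (le_of_eq (mul_comm ℓ K)))⟩,
    ⟨j.val % K, Nat.mod_lt _ hK⟩)
  left_inv p := by
    ext
    · show (p.1.val * K + p.2.val) / K = p.1.val
      rw [mul_comm, Nat.mul_add_div hK, Nat.div_eq_of_lt p.2.isLt]; omega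
    · show (p.1.val * K + p.2.val) % K = p.2.val
      rw [mul_comm, Nat.mul_add_mod, Nat.mod_eq_of_lt p.2.isLt]
  right_inv j := by
    ext
    exact Nat.div_add_mod' j.val K

lemma chunk_blockAt_spec {s ℓ ℓU n : ℕ} (hd : n ∣ ℓU)
    (u : Fin (ℓ * ℓU) → Fin s) (i : Fin ℓ) (r : Fin (ℓU / n))
    (j : Fin (ℓ * ℓU / n)) (hj : j.val = i.val * (ℓU / n) + r.val) :
    chunk u n j = chunk (blockAt u i) n r := by
  funext t
  show u _ = u _
  congr 1
  apply Fin.ext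
  show j.val * n + t.val = i.val * ℓU + (r.val * n + t.val)
  have hKn : ℓU / n * n = ℓU := Nat.div_mul_cancel hd
  rw [hj, add_mul, mul_assoc, hKn]
  omega

lemma occCount_chunk_eq_sum {s ℓ ℓU n : ℕ} (hn : 0 < n) (hd : n ∣ ℓU) (hℓU : 0 < ℓU)
    (u : Fin (ℓ * ℓU) → Fin s) (d : Fin n → Fin s) :
    occCount (chunk u n) d = ∑ i : Fin ℓ, occCount (chunk (blockAt u i) n) d := by
  classical
  have hK : 0 < ℓU / n := Nat.div_pos (Nat.le_of_dvd hℓU hd) hn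
  have hEq : ℓ * (ℓU / n) = ℓ * ℓU / n := (Nat.mul_div_assoc ℓ hd).symm
  set e : Fin ℓ × Fin (ℓU / n) ≃ Fin (ℓ * ℓU / n) :=
    (splitIdx ℓ (ℓU / n) hK).trans (finCongr hEq) with he
  rw [occCount, Finset.card_filter,
    ← Equiv.sum_comp e (fun j => if chunk u n j = d then 1 else 0)]
  rw [Fintype.sum_prod_type]
  refine Finset.sum_congr rfl (fun i _ => ?_)
  rw [occCount, Finset.card_filter]
  refine Finset.sum_congr rfl (fun r _ => ?_)
  have : chunk u n (e (i, r)) = chunk (blockAt u i) n r := by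
    apply chunk_blockAt_spec hd
    simp [he, splitIdx, finCongr]
  rw [this]

lemma forall_chunk_iff {s ℓ ℓU : ℕ} (hℓU : 0 < ℓU) (U : Finset (Fin ℓU → Fin s))
    (u : Fin (ℓ * ℓU) → Fin s) :
    (∀ i : Fin (ℓ * ℓU / ℓU), chunk u ℓU i ∈ U) ↔ ∀ i : Fin ℓ, blockAt u i ∈ U := by
  have hc : ℓ * ℓU / ℓU = ℓ := Nat.mul_div_cancel _ hℓU
  constructor
  · intro h i
    exact h ⟨i.val, by rw [hc]; exact i.isLt⟩
  · intro h i
    exact h ⟨i.val, Nat.lt_of_lt_of_le i.isLt (le_of_eq hc)⟩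

def blocksEquiv (s ℓ ℓU : ℕ) (hℓU : 0 < ℓU) :
    (Fin (ℓ * ℓU) → Fin s) ≃ (Fin ℓ → Fin ℓU → Fin s) where
  toFun u := blockAt u
  invFun g k := g ⟨k.val / ℓU, Nat.div_lt_of_lt_mul
      (lt_of_lt_of_le k.isLt (le_of_eq (mul_comm ℓ ℓU)))⟩
    ⟨k.val % ℓU, Nat.mod_lt _ hℓU⟩
  left_inv u := by
    funext k
    show u _ = u _
    congr 1
    exact Fin.ext (Nat.div_add_mod' k.val ℓU)
  right_inv g := by
    funext i j
    have key : ∀ (a a' : Fin ℓ) (b b' : Fin ℓU), a = a' → b = b' → g a b = g a' b' := by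
      rintro a _ b _ rfl rfl; rfl
    apply key
    · apply Fin.ext
      show (i.val * ℓU + j.val) / ℓU = i.val
      rw [mul_comm, Nat.mul_add_div hℓU, Nat.div_eq_of_lt j.isLt]
      omega
    · apply Fin.ext
      show (i.val * ℓU + j.val) % ℓU = j.val
      rw [mul_comm, Nat.mul_add_mod, Nat.mod_eq_of_lt j.isLt]

lemma var_sum {α : Type*} [Fintype α] (f : α → ℝ) (hf : ∑ w : α, f w = 0) :
    ∀ ℓ : ℕ, ∑ g : Fin ℓ → α, (∑ i, f (g i))^2
      = ℓ * (Fintype.card α : ℝ)^(ℓ-1) * ∑ w : α, (f w)^2 := by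
  intro ℓ
  induction ℓ with
  | zero => simp
  | succ ℓ ih =>
    classical
    set N : ℝ := (Fintype.card α : ℝ) with hN
    set V : ℝ := ∑ w : α, (f w)^2 with hV
    have hcard : (Fintype.card (Fin ℓ → α) : ℝ) = N ^ ℓ := by
      simp [Fintype.card_fun, hN]
    have step : ∑ g : Fin (ℓ+1) → α, (∑ i, f (g i))^2
        = ∑ p : α × (Fin ℓ → α), (f p.1 + ∑ i, f (p.2 i))^2 := by
      apply Fintype.sum_equiv (Fin.consEquiv (fun _ : Fin (ℓ+1) => α)).symm
      intro g
      rw [Fin.sum_univ_succ]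
      simp [Fin.tail]
    rw [step, Fintype.sum_prod_type]
    have expand : ∀ a : α, ∑ g : Fin ℓ → α, (f a + ∑ i, f (g i))^2
        = N ^ ℓ * (f a)^2 + 2 * f a * (∑ g : Fin ℓ → α, ∑ i, f (g i))
          + ∑ g : Fin ℓ → α, (∑ i, f (g i))^2 := by
      intro a
      have : ∀ g : Fin ℓ → α, (f a + ∑ i, f (g i))^2
          = (f a)^2 + 2 * f a * (∑ i, f (g i)) + (∑ i, f (g i))^2 := by
        intro g; ring
      rw [Finset.sum_congr rfl (fun g _ => this g)]
      rw [Finset.sum_add_distrib, Finset.sum_add_distrib, Finset.sum_const,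
        ← Finset.mul_sum, Finset.card_univ]
      rw [nsmul_eq_mul, hcard]
    rw [Finset.sum_congr rfl (fun a _ => expand a)]
    rw [Finset.sum_add_distrib, Finset.sum_add_distrib, ← Finset.sum_mul,
      Finset.sum_const, Finset.card_univ]
    have h2 : (∑ i : α, 2 * f i) = 0 := by rw [← Finset.mul_sum, hf]; ring
    rw [h2, ih, nsmul_eq_mul]
    have hfs : ∑ x : α, N ^ ℓ * f x ^ 2 = N ^ ℓ * V := by rw [← Finset.mul_sum]
    rw [hfs]
    cases ℓ with
    | zero => push_cast; ring
    | succ m =>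
      simp only [Nat.succ_sub_one]
      push_cast
      ring

def pieceEquiv {s ℓ ℓU : ℕ} (hℓU : 0 < ℓU) (U : Finset (Fin ℓU → Fin s))
    (Q : (Fin ℓ → (Fin ℓU → Fin s)) → Prop) :
    {u : Fin (ℓ * ℓU) → Fin s //
      (∀ i : Fin (ℓ * ℓU / ℓU), chunk u ℓU i ∈ U) ∧ Q (blockAt u)}
    ≃ {g : Fin ℓ → ↥U // Q (fun i => ((g i : Fin ℓU → Fin s)))} where
  toFun x := ⟨fun i => ⟨blockAt x.val i, ((forall_chunk_iff hℓU U x.val).1 x.2.1) i⟩,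
    x.2.2⟩
  invFun y := ⟨(blocksEquiv s ℓ ℓU hℓU).symm (fun i => (y.val i : Fin ℓU → Fin s)), by
    have hb : blockAt ((blocksEquiv s ℓ ℓU hℓU).symm (fun i => (y.val i : Fin ℓU → Fin s)))
        = fun i => (y.val i : Fin ℓU → Fin s) := by
      exact Equiv.apply_symm_apply (blocksEquiv s ℓ ℓU hℓU)
        (fun i => (y.val i : Fin ℓU → Fin s))
    constructor
    · rw [forall_chunk_iff hℓU]
      intro i
      rw [show blockAt ((blocksEquiv s ℓ ℓU hℓU).symm (fun i => (y.val i : Fin ℓU → Fin s))) i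
          = (y.val i : Fin ℓU → Fin s) from congrFun hb i]
      exact (y.val i).2
    · rw [hb]
      exact y.2⟩
  left_inv x := Subtype.ext ((blocksEquiv s ℓ ℓU hℓU).left_inv x.val)
  right_inv y := Subtype.ext (funext fun i => Subtype.ext
    (congrFun (Equiv.apply_symm_apply (blocksEquiv s ℓ ℓU hℓU)
      (fun i => (y.val i : Fin ℓU → Fin s))) i))

theorem statement7 (s : ℕ) (hs : 2 ≤ s) (M : Finset ℕ) (hM : ∀ m ∈ M, 0 < m)
    (n : ℕ) (hn : 0 < n) (hnd : ∀ m ∈ M, ¬ n ∣ m)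
    (ℓU : ℕ) (hℓU : 0 < ℓU) (hnℓU : n ∣ ℓU) (U : Finset (Fin ℓU → Fin s))
    (hbal : ∀ m ∈ M, BalancedSet s ℓU m U) (hnbal : ¬ BalancedSet s ℓU n U) :
    ∃ ε : ℝ, 0 < ε ∧ ∃ d : Fin n → Fin s, ∀ δ : ℝ, 0 < δ →
      ∃ ℓ₀ : ℕ, 0 < ℓ₀ ∧ ∀ ℓ : ℕ, ℓ₀ ≤ ℓ →
        (1 - δ) * (U.card : ℝ) ^ ℓ <
          (Nat.card {u : Fin (ℓ * ℓU) → Fin s //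
            (∀ i : Fin (ℓ * ℓU / ℓU), chunk u ℓU i ∈ U) ∧
            (occCount (chunk u n) d : ℝ) / ((ℓ * ℓU / n : ℕ) : ℝ)
              < 1 / (s : ℝ) ^ n - ε} : ℝ) := by
  classical
  have hsFin : Nonempty (Fin s) := ⟨⟨0, by omega⟩⟩
  have hUne : U.Nonempty := by
    by_contra h
    rw [Finset.not_nonempty_iff_eq_empty] at h
    exact hnbal ⟨hnℓU, by simp [h]⟩
  set N : ℕ := U.card with hNdef
  have hN0 : 0 < N := Finset.card_pos.mpr hUne
  set K : ℕ := ℓU / n with hKdef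
  have hK0 : 0 < K := Nat.div_pos (Nat.le_of_dvd hℓU hnℓU) hn
  set S : (Fin n → Fin s) → ℕ := fun z => ∑ w ∈ U, occCount (chunk w n) z with hSdef
  -- row sums
  have hrow : ∀ w : Fin ℓU → Fin s, ∑ z : Fin n → Fin s, occCount (chunk w n) z = K := by
    intro w
    have := Finset.card_eq_sum_card_fiberwise
      (f := fun j : Fin (ℓU / n) => chunk w n j) (s := Finset.univ) (t := Finset.univ)
      (fun x _ => Finset.mem_univ _)
    rw [Finset.card_univ, Fintype.card_fin] at this
    exact this.symm
  have htot : ∑ z : Fin n → Fin s, S z = N * K := by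
    rw [hSdef]
    rw [Finset.sum_comm]
    rw [Finset.sum_congr rfl (fun w _ => hrow w)]
    rw [Finset.sum_const, smul_eq_mul]
  -- choose minimizing d
  obtain ⟨d, -, hdmin⟩ := Finset.exists_min_image Finset.univ S Finset.univ_nonempty
  have hne : ∃ y, S d < S y := by
    by_contra h
    push_neg at h
    refine hnbal ⟨hnℓU, fun z z' => ?_⟩
    have h1 := le_antisymm (h z) (hdmin z (Finset.mem_univ z))
    have h2 := le_antisymm (h z') (hdmin z' (Finset.mem_univ z'))
    show S z = S z'
    omega
  obtain ⟨y, hy⟩ := hne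
  have hcardz : Fintype.card (Fin n → Fin s) = s ^ n := by
    simp [Fintype.card_fun]
  have hs1 : 1 ≤ s ^ n := Nat.one_le_pow _ _ (by omega)
  have hkey : s ^ n * S d < N * K := by
    have h1 := Finset.card_nsmul_le_sum (Finset.univ.erase y) S (S d)
      (fun z _ => hdmin z (Finset.mem_univ z))
    rw [Finset.card_erase_of_mem (Finset.mem_univ y), Finset.card_univ, hcardz,
      smul_eq_mul] at h1
    have h2 : S y + ∑ z ∈ Finset.univ.erase y, S z = N * K := by
      rw [Finset.add_sum_erase _ S (Finset.mem_univ y)]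
      exact htot
    have h3 : (s ^ n - 1) * S d = s ^ n * S d - S d := by
      rw [Nat.sub_mul, one_mul]
    have h4 : S d ≤ s ^ n * S d := Nat.le_mul_of_pos_left _ (by omega)
    have h1' : (s ^ n - 1) * S d ≤ ∑ z ∈ Finset.univ.erase y, S z := h1
    omega
  -- real setup
  have hNR : (0:ℝ) < (N:ℝ) := by exact_mod_cast hN0
  have hKR : (0:ℝ) < (K:ℝ) := by exact_mod_cast hK0
  have hsnR : (0:ℝ) < (s:ℝ) ^ n := by positivity
  set μ : ℝ := (S d : ℝ) / N with hμdef
  have hμlt : μ < (K : ℝ) / (s:ℝ) ^ n := by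
    rw [hμdef, div_lt_div_iff₀ hNR hsnR]
    have : ((s ^ n * S d : ℕ) : ℝ) < ((N * K : ℕ) : ℝ) := by exact_mod_cast hkey
    push_cast at this
    nlinarith [this]
  have hμ0 : 0 ≤ μ := by positivity
  have hSdK : (S d : ℝ) ≤ N * K := by
    have : S d ≤ N * K := by
      calc S d ≤ s ^ n * S d := Nat.le_mul_of_pos_left _ (by omega)
        _ ≤ N * K := le_of_lt hkey
    exact_mod_cast this
  have hμK : μ ≤ (K:ℝ) := by
    rw [hμdef, div_le_iff₀ hNR]
    nlinarith [hSdK]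
  set t : ℝ := ((K:ℝ)/(s:ℝ)^n - μ)/2 with htdef
  have ht0 : 0 < t := by rw [htdef]; linarith
  set ε : ℝ := t / K with hεdef
  have hε0 : 0 < ε := div_pos ht0 hKR
  refine ⟨ε, hε0, d, ?_⟩
  intro δ hδ
  set δ' : ℝ := min δ (1/2) with hδ'def
  have hδ'0 : 0 < δ' := lt_min hδ (by norm_num)
  have hδ'le : δ' ≤ δ := min_le_left _ _
  set x₀ : ℝ := (K:ℝ)^2 / (δ' * t^2) with hx₀def
  refine ⟨⌈x₀⌉₊ + 1, Nat.succ_pos _, ?_⟩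
  intro ℓ hℓ
  have hℓ1 : 1 ≤ ℓ := le_trans (by omega) hℓ
  have hℓR : x₀ < (ℓ:ℝ) := by
    calc x₀ ≤ (⌈x₀⌉₊ : ℝ) := Nat.le_ceil _
      _ < ((⌈x₀⌉₊ + 1 : ℕ) : ℝ) := by push_cast; linarith
      _ ≤ (ℓ:ℝ) := by exact_mod_cast hℓ
  have hℓR0 : (0:ℝ) < (ℓ:ℝ) := by exact_mod_cast hℓ1
  -- block count function
  set c : (Fin ℓU → Fin s) → ℕ := fun w => occCount (chunk w n) d with hcdef
  have hcK : ∀ w, c w ≤ K := by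
    intro w
    rw [hcdef]
    calc occCount (chunk w n) d ≤ (Finset.univ : Finset (Fin (ℓU / n))).card :=
      Finset.card_filter_le _ _
      _ = K := by rw [Finset.card_univ, Fintype.card_fin]
  have hnum : ℓ * ℓU / n = ℓ * K := Nat.mul_div_assoc ℓ hnℓU
  -- the predicate on tuples of blocks
  set Q : (Fin ℓ → (Fin ℓU → Fin s)) → Prop := fun v =>
    ((∑ i, c (v i) : ℕ) : ℝ) / ((ℓ * K : ℕ) : ℝ) < 1 / (s:ℝ)^n - ε with hQdef
  -- identify the Nat.card
  have hcount : Nat.card {u : Fin (ℓ * ℓU) → Fin s //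
      (∀ i : Fin (ℓ * ℓU / ℓU), chunk u ℓU i ∈ U) ∧
      (occCount (chunk u n) d : ℝ) / ((ℓ * ℓU / n : ℕ) : ℝ)
        < 1 / (s : ℝ) ^ n - ε}
      = (Finset.univ.filter (fun g : Fin ℓ → ↥U =>
          Q (fun i => ((g i : Fin ℓU → Fin s))))).card := by
    rw [Nat.card_congr (Equiv.subtypeEquivRight (q := fun u =>
      (∀ i : Fin (ℓ * ℓU / ℓU), chunk u ℓU i ∈ U) ∧ Q (blockAt u)) ?_)]
    · rw [Nat.card_congr (pieceEquiv hℓU U Q)]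
      rw [Nat.card_eq_fintype_card, Fintype.card_subtype]
    · intro u
      have hocc : occCount (chunk u n) d = ∑ i : Fin ℓ, c (blockAt u i) :=
        occCount_chunk_eq_sum hn hnℓU hℓU u d
      rw [hQdef]
      simp only [hocc, hnum]
  rw [hcount]
  set G : Finset (Fin ℓ → ↥U) := Finset.univ.filter (fun g : Fin ℓ → ↥U =>
      Q (fun i => ((g i : Fin ℓU → Fin s)))) with hGdef
  set B : Finset (Fin ℓ → ↥U) := Finset.univ.filter (fun g : Fin ℓ → ↥U =>
      ¬ Q (fun i => ((g i : Fin ℓU → Fin s)))) with hBdef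
  have hGB : G.card + B.card = N ^ ℓ := by
    rw [hGdef, hBdef, Finset.card_filter_add_card_filter_not, Finset.card_univ,
      Fintype.card_fun, Fintype.card_coe, Fintype.card_fin]
  set f : ↥U → ℝ := fun w => (c w.val : ℝ) - μ with hfdef
  have hsum_c : ∑ w : ↥U, (c w.val : ℝ) = (S d : ℝ) := by
    simp only [hSdef]
    push_cast
    exact Finset.sum_coe_sort U (fun w => (c w : ℝ))
  have hf0 : ∑ w : ↥U, f w = 0 := by
    rw [hfdef]
    rw [Finset.sum_sub_distrib, hsum_c, Finset.sum_const, Finset.card_univ,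
      Fintype.card_coe, hμdef, nsmul_eq_mul]
    rw [mul_comm, div_mul_cancel₀ _ (ne_of_gt hNR), sub_self]
  have hVb : ∑ w : ↥U, (f w)^2 ≤ (N:ℝ) * (K:ℝ)^2 := by
    calc ∑ w : ↥U, (f w)^2 ≤ ∑ _w : ↥U, ((K:ℝ)^2) := by
          refine Finset.sum_le_sum fun w _ => ?_
          have h1 : (0:ℝ) ≤ (c w.val : ℝ) := by positivity
          have h2 : (c w.val : ℝ) ≤ K := by exact_mod_cast hcK w.val
          have h3 : -(K:ℝ) ≤ f w := by rw [hfdef]; simp only; linarith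
          have h4 : f w ≤ K := by rw [hfdef]; simp only; linarith
          exact sq_le_sq' h3 h4
      _ = (N:ℝ) * (K:ℝ)^2 := by
          rw [Finset.sum_const, Finset.card_univ, Fintype.card_coe, nsmul_eq_mul]
  have hvar := var_sum f hf0 ℓ
  have hKsn : (K:ℝ)/(s:ℝ)^n = μ + 2*t := by rw [htdef]; ring
  have hthr : (1 / (s:ℝ)^n - ε) * ((ℓ * K : ℕ) : ℝ) = (ℓ:ℝ) * μ + (ℓ:ℝ) * t := by
    have e1 : (1/(s:ℝ)^n - ε) * ((ℓ * K : ℕ) : ℝ)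
        = (ℓ:ℝ) * ((K:ℝ)/(s:ℝ)^n) - (ℓ:ℝ)*t := by
      rw [hεdef]
      push_cast
      field_simp
    rw [e1, hKsn]
    ring
  have hcheb : ∀ g ∈ B, ((ℓ:ℝ) * t)^2 ≤ (∑ i, f (g i))^2 := by
    intro g hg
    rw [hBdef, Finset.mem_filter] at hg
    have hq := hg.2
    simp only [hQdef, not_lt] at hq
    have hpos : (0:ℝ) < ((ℓ * K : ℕ) : ℝ) := by
      have : 0 < ℓ * K := Nat.mul_pos (by omega) hK0
      exact_mod_cast this
    have hq2 := (le_div_iff₀ hpos).mp hq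
    rw [hthr] at hq2
    have hSg : (∑ i, f (g i)) = ((∑ i, c ((g i) : Fin ℓU → Fin s) : ℕ) : ℝ) - (ℓ:ℝ) * μ := by
      rw [hfdef]
      push_cast
      rw [Finset.sum_sub_distrib, Finset.sum_const, Finset.card_univ,
        Fintype.card_fin, nsmul_eq_mul]
    have hge : (ℓ:ℝ) * t ≤ ∑ i, f (g i) := by
      rw [hSg]
      linarith
    exact pow_le_pow_left₀ (by positivity) hge 2
  have hB1 : (B.card : ℝ) * ((ℓ:ℝ)*t)^2 ≤ (ℓ:ℝ) * (N:ℝ)^(ℓ-1) * ((N:ℝ)*(K:ℝ)^2) := by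
    have h1 := Finset.card_nsmul_le_sum B (fun g => (∑ i, f (g i))^2) (((ℓ:ℝ)*t)^2) hcheb
    rw [nsmul_eq_mul] at h1
    have h2 : ∑ g ∈ B, (∑ i, f (g i))^2 ≤ ∑ g : Fin ℓ → ↥U, (∑ i, f (g i))^2 :=
      Finset.sum_le_sum_of_subset_of_nonneg (Finset.subset_univ B)
        (fun g _ _ => by positivity)
    have h3 : (ℓ:ℝ) * (N:ℝ)^(ℓ-1) * (∑ w : ↥U, (f w)^2)
        ≤ (ℓ:ℝ) * (N:ℝ)^(ℓ-1) * ((N:ℝ)*(K:ℝ)^2) := by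
      apply mul_le_mul_of_nonneg_left hVb (mul_nonneg hℓR0.le (pow_nonneg hNR.le _))
    have h4 : Fintype.card ↥U = N := Fintype.card_coe U
    rw [h4] at hvar
    linarith
  have hNl : (N:ℝ)^(ℓ-1) * (N:ℝ) = (N:ℝ)^ℓ := by
    rw [← pow_succ]
    congr 1
    omega
  have hB2 : (B.card:ℝ) * ((ℓ:ℝ)*t)^2 < δ' * (N:ℝ)^ℓ * ((ℓ:ℝ)*t)^2 := by
    have hKlt : (K:ℝ)^2 < (ℓ:ℝ) * (δ' * t^2) := by
      rw [hx₀def, div_lt_iff₀ (by positivity)] at hℓR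
      linarith
    calc (B.card:ℝ) * ((ℓ:ℝ)*t)^2 ≤ (ℓ:ℝ) * (N:ℝ)^(ℓ-1) * ((N:ℝ)*(K:ℝ)^2) := hB1
      _ = (ℓ:ℝ) * (N:ℝ)^ℓ * (K:ℝ)^2 := by rw [← hNl]; ring
      _ < (ℓ:ℝ) * (N:ℝ)^ℓ * ((ℓ:ℝ) * (δ' * t^2)) := by
          apply mul_lt_mul_of_pos_left hKlt (mul_pos hℓR0 (pow_pos hNR _))
      _ = δ' * (N:ℝ)^ℓ * ((ℓ:ℝ)*t)^2 := by ring
  have hBlt : (B.card:ℝ) < δ' * (N:ℝ)^ℓ :=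
    lt_of_mul_lt_mul_right hB2 (sq_nonneg _)
  have hGBR : (G.card : ℝ) + (B.card : ℝ) = (N:ℝ)^ℓ := by exact_mod_cast hGB
  have hfinal : (1 - δ) * (N:ℝ)^ℓ ≤ (1 - δ') * (N:ℝ)^ℓ :=
    mul_le_mul_of_nonneg_right (by linarith) (pow_nonneg hNR.le _)
  linarith
end

section
/- Let ε be a positive real number, s and r bases, and a < b positive integers. Let q be an s-adic rational with precision ⟨b;s⟩ and x a real number in [q, q + s^{−⟨b;s⟩}). Let u and v in B_r^{⟨b;r⟩−⟨a;r⟩+1} be the blocks of digits in the base-r expansions of q and x, respectively, between positions ⟨a;r⟩ and ⟨b;r⟩. Let p be a positive integer and let ũ ∈ B_{r^p}^{⟨b;r^p⟩−⟨a;r^p⟩+1} be the block of digits in the base-r^p expansion of q between positions ⟨a;r^p⟩ and ⟨b;r^p⟩. If D(u, B_r), D(ũ, B_{r^p}), 2/r^p and 3p/|u| are all less than ε, then D(v, B_r) < 5ε. -/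
/-- `⟨b;r⟩ = ⌈b / log r⌉` (natural logarithm). -/
noncomputable def nal (b r : ℕ) : ℕ := (⌈(b : ℝ) / Real.log r⌉).toNat

/-- `x` is an `s`-adic rational with precision `a`:
`x = Σ_{j=1}^{a} d_j s^{-j}` with digits `d_j ∈ {0,…,s-1}`. -/
def IsAdicRat (s a : ℕ) (x : ℝ) : Prop := ∃ D : ℕ, D < s ^ a ∧ x = (D : ℝ) / (s : ℝ) ^ a

/-- The `j`-th digit (for `j ≥ 1`) after the point of the base-`r` expansion of `x`,
namely `⌊x·r^j⌋ mod r` (this is the expansion not ending in all `(r-1)`s). -/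
noncomputable def rdigit (r : ℕ) (x : ℝ) (j : ℕ) : ℕ := (⌊x * (r : ℝ) ^ j⌋ % (r : ℤ)).toNat

/-- The simple discrepancy of an `ℕ`-valued block `w` of length `L` with respect to the
digit set `B_r = {0,…,r-1}`: `D(w,B_r) = max_{d < r} |occ(w,d)/L − 1/r|`. -/
noncomputable def discrepN (r : ℕ) {L : ℕ} (w : Fin L → ℕ) : ℝ :=
  ⨆ d : Fin r, |((Finset.univ.filter (fun i => w i = d.val)).card : ℝ) / (L : ℝ) - 1 / (r : ℝ)|

lemma log_t_pos {t : ℕ} (ht : 2 ≤ t) : 0 < Real.log t := by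
  apply Real.log_pos
  have : (2:ℝ) ≤ t := by exact_mod_cast ht
  linarith

lemma nal_eq {b t : ℕ} (hb : 0 < b) (ht : 2 ≤ t) :
    (nal b t : ℤ) = ⌈(b:ℝ)/Real.log t⌉ := by
  have h : (0:ℝ) < (b:ℝ)/Real.log t :=
    div_pos (by exact_mod_cast hb) (log_t_pos ht)
  have h2 := Int.ceil_pos.mpr h
  unfold nal
  omega

lemma nal_pos {b t : ℕ} (hb : 0 < b) (ht : 2 ≤ t) : 0 < nal b t := by
  have h : (0:ℝ) < (b:ℝ)/Real.log t :=
    div_pos (by exact_mod_cast hb) (log_t_pos ht)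
  have h2 := Int.ceil_pos.mpr h
  have h3 := nal_eq hb ht
  omega

lemma nal_lb {b t : ℕ} (hb : 0 < b) (ht : 2 ≤ t) :
    (b:ℝ) / Real.log t ≤ (nal b t : ℝ) := by
  have h := nal_eq hb ht
  have h2 := Int.le_ceil ((b:ℝ)/Real.log t)
  rw [← h] at h2
  exact_mod_cast h2

lemma nal_ub {b t : ℕ} (hb : 0 < b) (ht : 2 ≤ t) :
    (nal b t : ℝ) < (b:ℝ)/Real.log t + 1 := by
  have h := nal_eq hb ht
  have h2 := Int.ceil_lt_add_one ((b:ℝ)/Real.log t)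
  rw [← h] at h2
  exact_mod_cast h2

lemma nal_mono {a b t : ℕ} (h : a ≤ b) (ht : 2 ≤ t) : nal a t ≤ nal b t := by
  unfold nal
  have hl := (log_t_pos ht).le
  have : ⌈(a:ℝ)/Real.log t⌉ ≤ ⌈(b:ℝ)/Real.log t⌉ := by
    apply Int.ceil_le_ceil
    gcongr
  omega

lemma pow_eq_exp {t : ℕ} (ht : 2 ≤ t) (n : ℕ) :
    ((t:ℝ))^n = Real.exp (n * Real.log t) := by
  have h0 : (0:ℝ) < t := by
    have : (2:ℝ) ≤ t := by exact_mod_cast ht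
    linarith
  rw [Real.exp_nat_mul, Real.exp_log h0]

lemma exp_le_pow_nal {b t : ℕ} (hb : 0 < b) (ht : 2 ≤ t) :
    Real.exp b ≤ (t:ℝ) ^ (nal b t) := by
  rw [pow_eq_exp ht]
  apply Real.exp_le_exp.mpr
  have h1 := nal_lb hb ht
  have hl := log_t_pos ht
  rw [div_le_iff₀ hl] at h1
  linarith

lemma pow_nal_sub_one_lt {b t : ℕ} (hb : 0 < b) (ht : 2 ≤ t) :
    (t:ℝ) ^ (nal b t - 1) < Real.exp b := by
  rw [pow_eq_exp ht]
  apply Real.exp_lt_exp.mpr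
  have h1 := nal_ub hb ht
  have hl := log_t_pos ht
  have hpos := nal_pos hb ht
  have hc : ((nal b t - 1 : ℕ) : ℝ) = (nal b t : ℝ) - 1 := by
    have : 1 ≤ nal b t := hpos
    push_cast [this]
    ring
  rw [hc]
  have h2 : (nal b t : ℝ) - 1 < (b:ℝ)/Real.log t := by linarith
  calc ((nal b t : ℝ) - 1) * Real.log t < ((b:ℝ)/Real.log t) * Real.log t :=
        mul_lt_mul_of_pos_right h2 hl
    _ = b := div_mul_cancel₀ _ hl.ne'

lemma floor_mul_base (t : ℕ) (ht : 1 ≤ t) (y : ℝ) (j : ℕ) :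
    (t:ℤ) * ⌊y * t^j⌋ ≤ ⌊y * t^(j+1)⌋ ∧ ⌊y * t^(j+1)⌋ < (t:ℤ) * ⌊y * t^j⌋ + t := by
  have ht' : (1:ℝ) ≤ t := by exact_mod_cast ht
  have h1 := Int.floor_le (y * t^j)
  have h2 := Int.lt_floor_add_one (y * t^j)
  constructor
  · rw [Int.le_floor]
    push_cast
    rw [pow_succ]
    nlinarith
  · rw [Int.floor_lt]
    push_cast
    rw [pow_succ]
    nlinarith

lemma rdigit_eq_sub (t : ℕ) (ht : 2 ≤ t) (y : ℝ) (j : ℕ) :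
    (rdigit t y (j+1) : ℤ) = ⌊y * t^(j+1)⌋ - t * ⌊y * t^j⌋ := by
  obtain ⟨h1, h2⟩ := floor_mul_base t (by omega) y j
  unfold rdigit
  have ht2 : (2:ℤ) ≤ (t:ℤ) := by exact_mod_cast ht
  have hrw : ⌊y * (t:ℝ)^(j+1)⌋ =
      (⌊y * (t:ℝ)^(j+1)⌋ - (t:ℤ) * ⌊y * (t:ℝ)^j⌋) + (t:ℤ) * ⌊y * (t:ℝ)^j⌋ := by ring
  have key : ⌊y * (t:ℝ)^(j+1)⌋ % (t:ℤ) = ⌊y * (t:ℝ)^(j+1)⌋ - (t:ℤ) * ⌊y * (t:ℝ)^j⌋ := by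
    conv_lhs => rw [hrw]
    rw [Int.add_mul_emod_self_left]
    exact Int.emod_eq_of_lt (by omega) (by omega)
  rw [key, Int.toNat_of_nonneg (by omega)]

lemma floor_run (t : ℕ) (ht : 2 ≤ t) (y : ℝ) (j n : ℕ)
    (h : ∀ i, 1 ≤ i → i ≤ n → rdigit t y (j + i) = t - 1) :
    ⌊y * (t:ℝ)^(j+n)⌋ + 1 = (t:ℤ)^n * (⌊y * (t:ℝ)^j⌋ + 1) := by
  induction n with
  | zero => simp
  | succ n ih =>
    have ih' := ih (fun i h1 h2 => h i h1 (by omega))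
    have hd := h (n+1) (by omega) le_rfl
    have hspec := rdigit_eq_sub t ht y (j+n)
    have hdz : (rdigit t y ((j+n)+1) : ℤ) = (t:ℤ) - 1 := by
      rw [show (j+n)+1 = j + (n+1) from by omega, hd]
      have : 1 ≤ t := by omega
      push_cast [this]
      ring
    rw [show j + (n+1) = (j+n)+1 from by omega]
    have hX : ⌊y * (t:ℝ)^((j+n)+1)⌋ = (t:ℤ) * ⌊y * (t:ℝ)^(j+n)⌋ + ((t:ℤ) - 1) := by
      rw [hdz] at hspec
      linarith
    calc ⌊y * (t:ℝ)^((j+n)+1)⌋ + 1 = (t:ℤ) * (⌊y * (t:ℝ)^(j+n)⌋ + 1) := by rw [hX]; ring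
      _ = (t:ℤ) * ((t:ℤ)^n * (⌊y * (t:ℝ)^j⌋ + 1)) := by rw [ih']
      _ = (t:ℤ)^(n+1) * (⌊y * (t:ℝ)^j⌋ + 1) := by ring

lemma rdigit_pow_run (r p : ℕ) (hr : 2 ≤ r) (hp : 0 < p) (y : ℝ) (hy : 0 ≤ y)
    (k : ℕ) (hk : 1 ≤ k)
    (h : ∀ i, p*(k-1) < i → i ≤ p*k → rdigit r y i = r - 1) :
    rdigit (r^p) y k = r^p - 1 := by
  obtain ⟨k1, rfl⟩ : ∃ k1, k = k1 + 1 := ⟨k - 1, by omega⟩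
  have hk1 : (k1 + 1) - 1 = k1 := by omega
  have hjn : p*k1 + p = p*(k1+1) := by ring
  rw [hk1] at h
  have hrun := floor_run r hr y (p*k1) p (fun i h1 h2 => h (p*k1+i) (by omega) (by omega))
  rw [hjn] at hrun
  have hG0 : 0 ≤ ⌊y * (r:ℝ)^(p*k1)⌋ := Int.floor_nonneg.mpr (by positivity)
  unfold rdigit
  have hcast : ((r^p : ℕ):ℝ)^(k1+1) = (r:ℝ)^(p*(k1+1)) := by
    push_cast
    rw [← pow_mul]
  rw [hcast]
  have hR' : ((r^p : ℕ) : ℤ) = (r:ℤ)^p := by push_cast; ring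
  have hr2 : (2:ℤ) ≤ (r:ℤ) := by exact_mod_cast hr
  have hRpos : (2:ℤ) ≤ ((r^p : ℕ) : ℤ) := by
    rw [hR']
    calc (2:ℤ) ≤ (r:ℤ) := hr2
      _ ≤ (r:ℤ)^p := le_self_pow₀ (by omega) (by omega)
  have hXeq : ⌊y * (r:ℝ)^(p*(k1+1))⌋ =
      ((r^p : ℕ) : ℤ) * (⌊y * (r:ℝ)^(p*k1)⌋ + 1) - 1 := by
    rw [hR']; linarith
  have hmod : ⌊y * (r:ℝ)^(p*(k1+1))⌋ % ((r^p : ℕ) : ℤ) = ((r^p : ℕ) : ℤ) - 1 := by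
    rw [hXeq, show ((r^p : ℕ) : ℤ) * (⌊y * (r:ℝ)^(p*k1)⌋ + 1) - 1 =
      (((r^p : ℕ) : ℤ) - 1) + ((r^p : ℕ) : ℤ) * ⌊y * (r:ℝ)^(p*k1)⌋ from by ring,
      Int.add_mul_emod_self_left]
    exact Int.emod_eq_of_lt (by omega) (by omega)
  rw [hmod]
  omega

lemma occ_diff {L : ℕ} (w w' : Fin L → ℕ) (Δ : Finset (Fin L))
    (hΔ : ∀ i, w i ≠ w' i → i ∈ Δ) (d : ℕ) :
    (Finset.univ.filter (fun i => w i = d)).card ≤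
      (Finset.univ.filter (fun i => w' i = d)).card + Δ.card := by
  have hsub : Finset.univ.filter (fun i => w i = d) ⊆
      (Finset.univ.filter (fun i => w' i = d)) ∪ Δ := by
    intro i hi
    simp only [Finset.mem_filter, Finset.mem_univ, true_and] at hi
    by_cases hw : w' i = d
    · exact Finset.mem_union_left _ (by simp [hw])
    · exact Finset.mem_union_right _ (hΔ i (by rw [hi]; exact fun hc => hw hc.symm))
  calc (Finset.univ.filter (fun i => w i = d)).card
      ≤ ((Finset.univ.filter (fun i => w' i = d)) ∪ Δ).card := Finset.card_le_card hsub
    _ ≤ _ := Finset.card_union_le _ _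

lemma abs_occ_le_discrepN {r L : ℕ} (hr : 2 ≤ r) (w : Fin L → ℕ) (d : Fin r) :
    |((Finset.univ.filter (fun i => w i = d.val)).card : ℝ) / (L:ℝ) - 1/(r:ℝ)| ≤
      discrepN r w := by
  have h := le_ciSup (f := fun d : Fin r =>
    |((Finset.univ.filter (fun i => w i = d.val)).card : ℝ) / (L:ℝ) - 1/(r:ℝ)|)
    (Set.Finite.bddAbove (Set.finite_range _)) d
  simpa [discrepN] using h

lemma discrepN_le_of_close {r L : ℕ} (hr : 2 ≤ r) (hL : 0 < L) (w w' : Fin L → ℕ)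
    (Δ : Finset (Fin L)) (hΔ : ∀ i, w i ≠ w' i → i ∈ Δ) :
    discrepN r w ≤ discrepN r w' + (Δ.card : ℝ) / L := by
  have hne : Nonempty (Fin r) := ⟨⟨0, by omega⟩⟩
  apply ciSup_le
  intro d
  have h1 := occ_diff w w' Δ hΔ d.val
  have h2 := occ_diff w' w Δ (fun i hi => hΔ i (Ne.symm hi)) d.val
  have h3 := abs_occ_le_discrepN hr w' d
  have hLpos : (0:ℝ) < L := by exact_mod_cast hL
  set A : ℝ := ((Finset.univ.filter (fun i => w i = d.val)).card : ℝ) with hA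
  set B : ℝ := ((Finset.univ.filter (fun i => w' i = d.val)).card : ℝ) with hB
  have h1' : A ≤ B + Δ.card := by rw [hA, hB]; exact_mod_cast h1
  have h2' : B ≤ A + Δ.card := by rw [hA, hB]; exact_mod_cast h2
  have habs : |A/L - B/L| ≤ (Δ.card : ℝ)/L := by
    have he : A/L - B/L = (A-B)/L := by ring
    rw [he, abs_div, abs_of_pos hLpos]
    have habs2 : |A - B| ≤ (Δ.card : ℝ) := by
      rw [abs_le]; constructor <;> linarith
    exact div_le_div_of_nonneg_right habs2 hLpos.le |>.trans_eq rfl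
  calc |A/L - 1/r| ≤ |A/L - B/L| + |B/L - 1/r| := abs_sub_le _ _ _
    _ ≤ discrepN r w' + (Δ.card : ℝ)/L := by linarith

lemma discrepN_le_one {r L : ℕ} (hr : 2 ≤ r) (hL : 0 < L) (w : Fin L → ℕ) :
    discrepN r w ≤ 1 := by
  have hne : Nonempty (Fin r) := ⟨⟨0, by omega⟩⟩
  apply ciSup_le
  intro d
  have hcard : (Finset.univ.filter (fun i => w i = d.val)).card ≤ L := by
    calc (Finset.univ.filter (fun i => w i = d.val)).card
        ≤ Finset.univ.card := Finset.card_filter_le _ _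
      _ = L := by simp
  have hLpos : (0:ℝ) < L := by exact_mod_cast hL
  have h1 : (0:ℝ) ≤ ((Finset.univ.filter (fun i => w i = d.val)).card : ℝ) / L := by positivity
  have h2 : ((Finset.univ.filter (fun i => w i = d.val)).card : ℝ) / L ≤ 1 := by
    rw [div_le_one hLpos]
    exact_mod_cast hcard
  have hr1 : (1:ℝ) ≤ r := by
    have : (2:ℝ) ≤ r := by exact_mod_cast hr
    linarith
  have h3 : (0:ℝ) < 1/(r:ℝ) := by positivity
  have h4 : 1/(r:ℝ) ≤ 1 := by rw [div_le_one (by linarith)]; linarith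
  rw [abs_le]
  constructor <;> linarith
set_option maxHeartbeats 1000000 in
theorem statement13 (ε : ℝ) (hε : 0 < ε) (s r : ℕ) (hs : 2 ≤ s) (hr : 2 ≤ r)
    (a b : ℕ) (ha : 0 < a) (hab : a < b)
    (q : ℝ) (hq : IsAdicRat s (nal b s) q)
    (x : ℝ) (hqx : q ≤ x) (hxq : x < q + (s : ℝ) ^ (-(nal b s : ℤ)))
    (p : ℕ) (hp : 0 < p)
    (hu : discrepN r (fun i : Fin (nal b r - nal a r + 1) =>
      rdigit r q (nal a r + i.val)) < ε)
    (hut : discrepN (r ^ p) (fun i : Fin (nal b (r ^ p) - nal a (r ^ p) + 1) =>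
      rdigit (r ^ p) q (nal a (r ^ p) + i.val)) < ε)
    (hrp : 2 / (r : ℝ) ^ p < ε)
    (hlen : 3 * (p : ℝ) / ((nal b r - nal a r + 1 : ℕ) : ℝ) < ε) :
    discrepN r (fun i : Fin (nal b r - nal a r + 1) =>
      rdigit r x (nal a r + i.val)) < 5 * ε := by
  classical
  have hb : 0 < b := by omega
  set A := nal a r with hAdef
  set M := nal b r with hMdef
  set N := nal b s with hNdef
  set A' := nal a (r^p) with hA'def
  set M' := nal b (r^p) with hM'def
  set L := M - A + 1 with hLdef
  set L' := M' - A' + 1 with hL'def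
  have hrp2 : 2 ≤ r^p := le_trans hr (Nat.le_self_pow (by omega) r)
  have hA1 : 1 ≤ A := nal_pos ha hr
  have hM1 : 1 ≤ M := nal_pos hb hr
  have hAM : A ≤ M := nal_mono (le_of_lt hab) hr
  have hA'M' : A' ≤ M' := nal_mono (le_of_lt hab) hrp2
  have hLpos : 0 < L := by omega
  have hL'pos : 0 < L' := by omega
  have hLr : (0:ℝ) < (L:ℝ) := by exact_mod_cast hLpos
  have hL'r : (0:ℝ) < (L':ℝ) := by exact_mod_cast hL'pos
  have hr1 : (1:ℝ) ≤ (r:ℝ) := by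
    have : (2:ℝ) ≤ (r:ℝ) := by exact_mod_cast hr
    linarith
  -- trivial case ε > 1/5
  rcases le_or_gt ε (1/5) with hε5 | hε5
  swap
  · calc discrepN r (fun i : Fin L => rdigit r x (A + i.val)) ≤ 1 :=
        discrepN_le_one hr hLpos _
      _ < 5*ε := by linarith
  set M1 := M - 1 with hM1def
  have hM1' : M1 + 1 = M := by omega
  obtain ⟨D, hD, hqD⟩ := hq
  have hq0 : 0 ≤ q := by rw [hqD]; positivity
  have hx0 : 0 ≤ x := le_trans hq0 hqx
  have hxq' : x - q < (s:ℝ)^(-(N:ℤ)) := by linarith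
  have hsN : (s:ℝ)^(-(N:ℤ)) = ((s:ℝ)^N)⁻¹ := by
    rw [zpow_neg, zpow_natCast]
  have hpow_lt : (r:ℝ)^M1 < (s:ℝ)^N := by
    have h1 : (r:ℝ)^(nal b r - 1) < Real.exp b := pow_nal_sub_one_lt hb hr
    have h2 : Real.exp b ≤ (s:ℝ)^(nal b s) := exp_le_pow_nal hb hs
    rw [← hMdef] at h1
    rw [← hNdef] at h2
    calc (r:ℝ)^M1 = (r:ℝ)^(M-1) := by rw [hM1def]
      _ < Real.exp b := h1
      _ ≤ (s:ℝ)^N := h2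
  have hgap : (x - q) * (r:ℝ)^M1 < 1 := by
    have hs0 : (0:ℝ) < (s:ℝ)^N := by positivity
    have h1 : (x - q) * (r:ℝ)^M1 ≤ (x-q) * (s:ℝ)^N :=
      mul_le_mul_of_nonneg_left (le_of_lt hpow_lt) (by linarith)
    have h2 : (x-q) * (s:ℝ)^N < 1 := by
      rw [hsN] at hxq'
      calc (x-q) * (s:ℝ)^N < ((s:ℝ)^N)⁻¹ * (s:ℝ)^N := mul_lt_mul_of_pos_right hxq' hs0
        _ = 1 := inv_mul_cancel₀ hs0.ne'
    linarith
  set F : ℕ → ℤ := fun j => ⌊x * (r:ℝ)^j⌋ with hFdef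
  set G : ℕ → ℤ := fun j => ⌊q * (r:ℝ)^j⌋ with hGdef
  have hGF : ∀ j, G j ≤ F j := by
    intro j
    apply Int.floor_le_floor
    have : (0:ℝ) ≤ (r:ℝ)^j := by positivity
    nlinarith
  have hFG : ∀ j, j ≤ M1 → F j ≤ G j + 1 := by
    intro j hj
    have hmono : (r:ℝ)^j ≤ (r:ℝ)^M1 := pow_le_pow_right₀ hr1 hj
    have h0 : (x - q) * (r:ℝ)^j ≤ (x-q)*(r:ℝ)^M1 :=
      mul_le_mul_of_nonneg_left hmono (by linarith)
    have hre : (x-q)*(r:ℝ)^j = x*(r:ℝ)^j - q*(r:ℝ)^j := by ring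
    have hstep : x * (r:ℝ)^j < q * (r:ℝ)^j + 1 := by nlinarith
    have hq1 : q * (r:ℝ)^j < ((G j : ℤ) : ℝ) + 1 := Int.lt_floor_add_one _
    have h2 : x * (r:ℝ)^j < ((G j + 2 : ℤ) : ℝ) := by push_cast; linarith
    have h3 : F j < G j + 2 := Int.floor_lt.mpr h2
    omega
  have hup : ∀ j j', G j + 1 ≤ F j → j ≤ j' → G j' + 1 ≤ F j' := by
    intro j j' hP hjj'
    have hm1 : ((G j + 1 : ℤ):ℝ) ≤ x * (r:ℝ)^j := by
      have hfl := Int.floor_le (x * (r:ℝ)^j)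
      have hcast : ((G j + 1:ℤ):ℝ) ≤ ((F j : ℤ):ℝ) := by exact_mod_cast hP
      exact le_trans hcast hfl
    have hm2 : q * (r:ℝ)^j < ((G j + 1:ℤ):ℝ) := by
      have := Int.lt_floor_add_one (q * (r:ℝ)^j)
      push_cast
      push_cast at this
      linarith
    have hpow : (0:ℝ) < (r:ℝ)^(j' - j) := by positivity
    have hxj' : ((G j + 1:ℤ):ℝ) * (r:ℝ)^(j'-j) ≤ x * (r:ℝ)^j' := by
      calc ((G j + 1:ℤ):ℝ) * (r:ℝ)^(j'-j) ≤ (x * (r:ℝ)^j) * (r:ℝ)^(j'-j) :=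
            mul_le_mul_of_nonneg_right hm1 hpow.le
        _ = x * (r:ℝ)^(j + (j'-j)) := by rw [mul_assoc, ← pow_add]
        _ = x * (r:ℝ)^j' := by rw [Nat.add_sub_cancel' hjj']
    have hqj' : q * (r:ℝ)^j' < ((G j + 1:ℤ):ℝ) * (r:ℝ)^(j'-j) := by
      calc q * (r:ℝ)^j' = (q * (r:ℝ)^j) * (r:ℝ)^(j'-j) := by
            rw [mul_assoc, ← pow_add, Nat.add_sub_cancel' hjj']
        _ < _ := mul_lt_mul_of_pos_right hm2 hpow
    have h1 : G j' < (G j + 1) * (r:ℤ)^(j'-j) := by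
      apply Int.floor_lt.mpr
      push_cast
      push_cast at hqj'
      linarith
    have h2 : (G j + 1) * (r:ℤ)^(j'-j) ≤ F j' := by
      apply Int.le_floor.mpr
      push_cast
      push_cast at hxj'
      linarith
    have := lt_of_lt_of_le h1 h2
    omega
  have hdig_eq : ∀ j, F j = G j → rdigit r x j = rdigit r q j := by
    intro j hj
    unfold rdigit
    simp only [hFdef, hGdef] at hj
    rw [hj]
  by_cases hex : ∃ j, (1 ≤ j ∧ j ≤ M1) ∧ G j + 1 ≤ F j
  · -- Case 2 (carry)
    obtain ⟨j0, ⟨⟨hj01, hj0M⟩, hPj0⟩, hmin⟩ :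
        ∃ j0, ((1 ≤ j0 ∧ j0 ≤ M1) ∧ G j0 + 1 ≤ F j0) ∧
          ∀ j < j0, ¬((1 ≤ j ∧ j ≤ M1) ∧ G j + 1 ≤ F j) := by
      exact ⟨Nat.find hex, Nat.find_spec hex, fun j hj => Nat.find_min hex hj⟩
    -- the digits of q are r-1 on (j0, M1]
    have hrun : ∀ j, j0 < j → j ≤ M1 → rdigit r q j = r - 1 := by
      intro j hj0j hjM
      obtain ⟨jj, rfl⟩ : ∃ jj, j = jj + 1 := ⟨j - 1, by omega⟩
      have hPjj : G jj + 1 ≤ F jj := hup j0 jj hPj0 (by omega)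
      have hPj : G (jj+1) + 1 ≤ F (jj+1) := hup j0 (jj+1) hPj0 (by omega)
      have hFGj := hFG (jj+1) hjM
      have hm1 : ((G jj + 1 : ℤ):ℝ) ≤ x * (r:ℝ)^jj := by
        have hfl := Int.floor_le (x * (r:ℝ)^jj)
        have hcast : ((G jj + 1:ℤ):ℝ) ≤ ((F jj : ℤ):ℝ) := by exact_mod_cast hPjj
        exact le_trans hcast hfl
      have hm2 : q * (r:ℝ)^jj < ((G jj + 1:ℤ):ℝ) := by
        have := Int.lt_floor_add_one (q * (r:ℝ)^jj)
        push_cast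
        push_cast at this
        linarith
      have hrpos : (0:ℝ) < (r:ℝ) := by linarith
      have hup1 : ((G jj + 1:ℤ):ℝ) * (r:ℝ) ≤ x * (r:ℝ)^(jj+1) := by
        rw [pow_succ]
        nlinarith
      have hdn1 : q * (r:ℝ)^(jj+1) < ((G jj + 1:ℤ):ℝ) * (r:ℝ) := by
        rw [pow_succ]
        nlinarith
      have h1 : G (jj+1) < (G jj + 1) * (r:ℤ) := by
        apply Int.floor_lt.mpr
        push_cast
        push_cast at hdn1
        linarith
      have h2 : (G jj + 1) * (r:ℤ) ≤ F (jj+1) := by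
        apply Int.le_floor.mpr
        push_cast
        push_cast at hup1
        linarith
      have hXr : (G jj + 1) * (r:ℤ) = (r:ℤ) * G jj + (r:ℤ) := by ring
      have hGval : G (jj+1) = (r:ℤ) * G jj + ((r:ℤ) - 1) := by linarith
      have hspec : (rdigit r q (jj+1) : ℤ) = G (jj+1) - (r:ℤ) * G jj :=
        rdigit_eq_sub r hr q jj
      have hdz : (rdigit r q (jj+1) : ℤ) = (r:ℤ) - 1 := by rw [hspec, hGval]; ring
      have hr2 : (2:ℤ) ≤ (r:ℤ) := by exact_mod_cast hr
      omega
    -- digits of x and q agree strictly below j0 (and above A)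
    have hagree : ∀ j, A ≤ j → j ≤ M1 → j < j0 → rdigit r x j = rdigit r q j := by
      intro j hAj hjM hjj0
      have h2 := hmin j hjj0
      have h1 := hGF j
      have h3 : F j = G j := by
        have : ¬ (G j + 1 ≤ F j) := fun hc => h2 ⟨⟨by omega, hjM⟩, hc⟩
        omega
      exact hdig_eq j h3
    set J := max j0 (A - 1) with hJdef
    set T : Finset (Fin L) := Finset.univ.filter
      (fun i => J < A + i.val ∧ A + i.val ≤ M1) with hTdef
    set Δ : Finset (Fin L) := Finset.univ.filter
      (fun i => (A + i.val = M ∨ A + i.val = j0) ∨ (J < A + i.val ∧ A + i.val ≤ M1))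
      with hΔdef
    have hΔmem : ∀ i : Fin L, rdigit r x (A + i.val) ≠ rdigit r q (A + i.val) → i ∈ Δ := by
      intro i hne
      rw [hΔdef, Finset.mem_filter]
      refine ⟨Finset.mem_univ i, ?_⟩
      by_contra hfalse
      push_neg at hfalse
      obtain ⟨⟨hne1, hne2⟩, hne3⟩ := hfalse
      have hile : A + i.val ≤ M := by have := i.isLt; omega
      have hjM : A + i.val ≤ M1 := by omega
      rcases Nat.lt_trichotomy (A + i.val) j0 with hlt | heq | hgt
      · exact hne (hagree _ (by omega) hjM hlt)
      · exact hne2 heq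
      · exact absurd hjM (by intro hc; exact absurd (hne3 (by omega)) (by omega))
    -- card Δ ≤ card T + 2
    have hΔcard : Δ.card ≤ T.card + 2 := by
      have hsub : Δ ⊆ ((Finset.univ.filter (fun i : Fin L => A + i.val = M)) ∪
          (Finset.univ.filter (fun i : Fin L => A + i.val = j0))) ∪ T := by
        intro i hi
        rw [hΔdef, Finset.mem_filter] at hi
        rcases hi.2 with (h | h) | h
        · exact Finset.mem_union_left _ (Finset.mem_union_left _ (by
            rw [Finset.mem_filter]; exact ⟨Finset.mem_univ i, h⟩))
        · exact Finset.mem_union_left _ (Finset.mem_union_right _ (by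
            rw [Finset.mem_filter]; exact ⟨Finset.mem_univ i, h⟩))
        · exact Finset.mem_union_right _ (by
            rw [hTdef, Finset.mem_filter]; exact ⟨Finset.mem_univ i, h⟩)
      have c1 : (Finset.univ.filter (fun i : Fin L => A + i.val = M)).card ≤ 1 := by
        apply Finset.card_le_one.mpr
        intro i hi j hj
        rw [Finset.mem_filter] at hi hj
        apply Fin.ext
        omega
      have c2 : (Finset.univ.filter (fun i : Fin L => A + i.val = j0)).card ≤ 1 := by
        apply Finset.card_le_one.mpr
        intro i hi j hj
        rw [Finset.mem_filter] at hi hj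
        apply Fin.ext
        omega
      calc Δ.card ≤ _ := Finset.card_le_card hsub
        _ ≤ ((Finset.univ.filter (fun i : Fin L => A + i.val = M)) ∪
              (Finset.univ.filter (fun i : Fin L => A + i.val = j0))).card + T.card :=
            Finset.card_union_le _ _
        _ ≤ ((Finset.univ.filter (fun i : Fin L => A + i.val = M)).card +
              (Finset.univ.filter (fun i : Fin L => A + i.val = j0)).card) + T.card := by
            have := Finset.card_union_le
              (Finset.univ.filter (fun i : Fin L => A + i.val = M))
              (Finset.univ.filter (fun i : Fin L => A + i.val = j0))
            omega
        _ ≤ T.card + 2 := by omega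
    have hTcard : T.card ≤ M1 - J := by
      have h := Finset.card_le_card_of_injOn (s := T) (t := Finset.Ioc J M1) (fun i : Fin L => A + i.val)
        (fun i hi => by
          rw [Finset.mem_coe, Finset.mem_filter] at hi
          exact Finset.mem_Ioc.mpr ⟨hi.2.1, hi.2.2⟩)
        (fun i _ j _ hij => by
          have h2 : A + i.val = A + j.val := hij
          exact Fin.ext (by omega))
      simpa [Nat.card_Ioc] using h
    have hJj0 : j0 ≤ J := le_max_left _ _
    have hJA : A - 1 ≤ J := le_max_right _ _
    have hJ1' : 1 ≤ J := by omega
    have hlr := log_t_pos hr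
    have hp0 : (0:ℝ) < (p:ℝ) := by exact_mod_cast hp
    have hpr : (1:ℝ) ≤ (p:ℝ) := by exact_mod_cast hp
    have hlogp : Real.log ((r^p : ℕ):ℝ) = (p:ℝ) * Real.log r := by
      push_cast
      exact Real.log_pow r p
    obtain ⟨J1, hJ1⟩ : ∃ n, n = J + p - 1 := ⟨_, rfl⟩
    obtain ⟨q1, hq1⟩ : ∃ n, n = J1 / p := ⟨_, rfl⟩
    obtain ⟨lo, hlo⟩ : ∃ n, n = q1 + 1 := ⟨_, rfl⟩
    obtain ⟨hi, hhi⟩ : ∃ n, n = M1 / p := ⟨_, rfl⟩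
    set cnt := (Finset.univ.filter
      (fun i : Fin L' => rdigit (r^p) q (A' + i.val) = r^p - 1)).card with hcntdef
    have e3 : p * q1 + J1 % p = J1 := by rw [hq1]; exact Nat.div_add_mod J1 p
    have e4 : J1 % p < p := Nat.mod_lt _ hp
    have chi : p * hi + M1 % p = M1 := by rw [hhi]; exact Nat.div_add_mod M1 p
    have chi2 : M1 % p < p := Nat.mod_lt _ hp
    have clo : p * lo = p * q1 + p := by rw [hlo, Nat.mul_succ]
    -- facts about each k in [lo, hi]
    have hkfacts : ∀ k, lo ≤ k → k ≤ hi →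
        A' ≤ k ∧ k ≤ M' ∧ rdigit (r^p) q k = r^p - 1 := by
      intro k hklo hkhi
      have hkk : 1 ≤ k := by omega
      have ek3 : q1 ≤ k - 1 := by omega
      have ek4 : p * q1 ≤ p * (k-1) := Nat.mul_le_mul_left p ek3
      have e5 : J ≤ p * (k - 1) := by omega
      have e6 : p * k = p * (k-1) + p := by
        obtain ⟨k2, rfl⟩ : ∃ k2, k = k2 + 1 := ⟨k-1, by omega⟩
        have h1 : (k2 + 1) - 1 = k2 := by omega
        rw [h1, Nat.mul_succ]
      have e7 : p * k ≤ M1 := by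
        have hk' : k ≤ M1 / p := by rw [← hhi]; exact hkhi
        have h := (Nat.le_div_iff_mul_le hp).mp hk'
        rw [mul_comm] at h
        exact h
      have eAk : A ≤ p * k := by omega
      refine ⟨?_, ?_, ?_⟩
      · have h1 := nal_ub ha hrp2
        rw [← hA'def, hlogp] at h1
        have h2 := nal_lb ha hr
        rw [← hAdef] at h2
        have h3 : (A:ℝ) ≤ (p:ℝ) * (k:ℝ) := by
          have hc : ((A:ℕ):ℝ) ≤ ((p*k : ℕ):ℝ) := by exact_mod_cast eAk
          push_cast at hc
          linarith
        have h4 : (a:ℝ)/((p:ℝ) * Real.log r) ≤ (k:ℝ) := by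
          rw [div_le_iff₀ (by positivity)]
          rw [div_le_iff₀ hlr] at h2
          have hb1 : (A:ℝ) * Real.log r ≤ ((p:ℝ)*(k:ℝ)) * Real.log r :=
            mul_le_mul_of_nonneg_right h3 hlr.le
          have hb2 : ((p:ℝ)*(k:ℝ)) * Real.log r = (k:ℝ) * ((p:ℝ) * Real.log r) := by ring
          linarith
        have h5 : (A':ℝ) < (k:ℝ) + 1 := by linarith
        have h6 : A' < k + 1 := by exact_mod_cast h5
        omega
      · have h1 := nal_lb hb hrp2
        rw [← hM'def, hlogp] at h1
        have h2 := nal_ub hb hr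
        rw [← hMdef] at h2
        have e8 : p*k + 1 ≤ M := by omega
        have h3 : (p:ℝ) * (k:ℝ) + 1 ≤ (M:ℝ) := by
          have hc : ((p*k + 1 : ℕ):ℝ) ≤ ((M:ℕ):ℝ) := by exact_mod_cast e8
          push_cast at hc
          linarith
        have h4 : (p:ℝ) * (k:ℝ) < (b:ℝ)/Real.log r := by linarith
        have h5 : (k:ℝ) < (b:ℝ)/((p:ℝ)*Real.log r) := by
          rw [lt_div_iff₀ (by positivity)]
          rw [lt_div_iff₀ hlr] at h4
          have hb2 : (k:ℝ) * ((p:ℝ) * Real.log r) = ((p:ℝ)*(k:ℝ)) * Real.log r := by ring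
          linarith
        have h6 : (k:ℝ) < (M':ℝ) := lt_of_lt_of_le h5 h1
        have h7 : k < M' := by exact_mod_cast h6
        omega
      · apply rdigit_pow_run r p hr hp q hq0 k hkk
        intro i hi1 hi2
        apply hrun
        · omega
        · omega
    have hIcc_le_cnt : (Finset.Icc lo hi).card ≤ cnt := by
      rw [hcntdef]
      apply Finset.card_le_card_of_injOn
        (fun k => if h : k - A' < L' then (⟨k - A', h⟩ : Fin L') else ⟨0, hL'pos⟩)
      · intro k hk
        rw [Finset.mem_coe, Finset.mem_Icc] at hk
        obtain ⟨hA'k, hkM', hdig⟩ := hkfacts k hk.1 hk.2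
        have hlt : k - A' < L' := by omega
        rw [Finset.mem_coe]
        beta_reduce
        rw [dif_pos hlt, Finset.mem_filter]
        refine ⟨Finset.mem_univ _, ?_⟩
        show rdigit (r^p) q (A' + (k - A')) = r^p - 1
        rw [show A' + (k - A') = k from by omega]
        exact hdig
      · intro k1 hk1 k2 hk2 hf
        rw [Finset.coe_Icc, Set.mem_Icc] at hk1 hk2
        obtain ⟨h1, h1', -⟩ := hkfacts k1 hk1.1 hk1.2
        obtain ⟨h2, h2', -⟩ := hkfacts k2 hk2.1 hk2.2
        have l1 : k1 - A' < L' := by omega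
        have l2 : k2 - A' < L' := by omega
        simp only [] at hf
        rw [dif_pos l1, dif_pos l2] at hf
        have hval := congrArg Fin.val hf
        simp only [] at hval
        omega
    -- count bound from hut
    have hcnt_lt : (cnt:ℝ) < (1/(r:ℝ)^p + ε) * (L':ℝ) := by
      have hd : r^p - 1 < r^p := by omega
      have h := abs_occ_le_discrepN hrp2
        (fun i : Fin L' => rdigit (r^p) q (A' + i.val)) ⟨r^p - 1, hd⟩
      have h2 := lt_of_le_of_lt h hut
      have hc : ((r^p:ℕ):ℝ) = (r:ℝ)^p := by push_cast; ring
      rw [hc] at h2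
      have h3 : (cnt:ℝ)/(L':ℝ) - 1/(r:ℝ)^p < ε :=
        lt_of_le_of_lt (le_abs_self _) h2
      have h4 : (cnt:ℝ)/(L':ℝ) < 1/(r:ℝ)^p + ε := by linarith
      exact (div_lt_iff₀ hL'r).mp h4
    -- p * L' ≤ L + 2p
    have hpM' : p * M' < M + p := by
      have h1 := nal_ub hb hrp2
      rw [← hM'def, hlogp] at h1
      have h2 := nal_lb hb hr
      rw [← hMdef] at h2
      have h3 : (p:ℝ) * ((b:ℝ)/((p:ℝ)*Real.log r) + 1) = (b:ℝ)/Real.log r + p := by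
        field_simp
      have h4 : (p:ℝ) * (M':ℝ) < (M:ℝ) + p := by
        have h5 := mul_lt_mul_of_pos_left h1 hp0
        linarith
      have h6 : ((p * M' : ℕ):ℝ) < ((M + p : ℕ):ℝ) := by push_cast; linarith
      exact_mod_cast h6
    have hpA' : A ≤ p * A' + 1 := by
      have h1 := nal_lb ha hrp2
      rw [← hA'def, hlogp] at h1
      have h2 := nal_ub ha hr
      rw [← hAdef] at h2
      have h3 : (a:ℝ)/Real.log r ≤ (p:ℝ)*(A':ℝ) := by
        rw [div_le_iff₀ hlr]
        rw [div_le_iff₀ (by positivity)] at h1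
        have hb2 : (A':ℝ) * ((p:ℝ) * Real.log r) = (p:ℝ)*(A':ℝ)*Real.log r := by ring
        linarith
      have h5 : ((A:ℕ):ℝ) < ((p*A':ℕ):ℝ) + 1 := by push_cast; linarith
      have h6 : A < p*A' + 1 := by exact_mod_cast h5
      omega
    -- key counting inequality (natural numbers)
    have hkeyN : M1 - J + 2 ≤ p * cnt + 2 * p := by
      rcases le_or_gt lo hi with hllo | hllo
      · have c1 : hi + 1 - lo ≤ cnt := by
          have := hIcc_le_cnt
          rwa [Nat.card_Icc] at this
        have c2 : p * (hi + 1 - lo) ≤ p * cnt := Nat.mul_le_mul_left _ c1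
        have hsum : (hi + 1 - lo) + lo = hi + 1 := by omega
        have ce : p * (hi + 1 - lo) + p * lo = p * (hi + 1) := by
          rw [← Nat.mul_add, hsum]
        have ce2 : p * (hi+1) = p*hi + p := Nat.mul_succ p hi
        omega
      · have cf : p * (hi+1) ≤ p * lo := Nat.mul_le_mul_left p (by omega)
        have ce2 : p * (hi+1) = p*hi + p := Nat.mul_succ p hi
        omega
    -- final assembly
    have hclose := discrepN_le_of_close hr hLpos
      (fun i : Fin L => rdigit r x (A + i.val)) (fun i : Fin L => rdigit r q (A + i.val))
      Δ hΔmem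
    have hΔcnt : (Δ.card : ℝ) ≤ (p:ℝ) * cnt + 2*(p:ℝ) := by
      have h1 : Δ.card + J ≤ M1 + 2 ∨ Δ.card ≤ 2 := by omega
      have h2 : Δ.card ≤ M1 - J + 2 := by omega
      have h3 : ((Δ.card : ℕ):ℝ) ≤ ((p * cnt + 2*p : ℕ):ℝ) := by
        exact_mod_cast le_trans h2 hkeyN
      push_cast at h3
      linarith
    have hL2p : (p:ℝ) * (L':ℝ) ≤ (L:ℝ) + 2*(p:ℝ) := by
      have hc1 : (L':ℝ) = (M':ℝ) - (A':ℝ) + 1 := by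
        rw [hL'def]
        push_cast [hA'M']
        ring
      have hc2 : (L:ℝ) = (M:ℝ) - (A:ℝ) + 1 := by
        rw [hLdef]
        push_cast [hAM]
        ring
      have hc3 : ((p * M' : ℕ):ℝ) < ((M + p : ℕ):ℝ) := by exact_mod_cast hpM'
      push_cast at hc3
      have hc4 : ((A:ℕ):ℝ) ≤ ((p * A' + 1 : ℕ):ℝ) := by exact_mod_cast hpA'
      push_cast at hc4
      have hc5 : (p:ℝ) * (L':ℝ) = (p:ℝ)*(M':ℝ) - (p:ℝ)*(A':ℝ) + p := by
        rw [hc1]; ring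
      linarith
    have hfin : (Δ.card : ℝ)/(L:ℝ) < 4*ε := by
      rw [div_lt_iff₀ hLr]
      have hb1 : (p:ℝ)*(cnt:ℝ) < (1/(r:ℝ)^p + ε) * ((L:ℝ) + 2*(p:ℝ)) := by
        have h1 : (p:ℝ)*(cnt:ℝ) < (p:ℝ) * ((1/(r:ℝ)^p + ε) * (L':ℝ)) :=
          mul_lt_mul_of_pos_left hcnt_lt hp0
        have h2 : (p:ℝ) * ((1/(r:ℝ)^p + ε) * (L':ℝ)) =
            (1/(r:ℝ)^p + ε) * ((p:ℝ)*(L':ℝ)) := by ring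
        have h3 : (1/(r:ℝ)^p + ε) * ((p:ℝ)*(L':ℝ)) ≤
            (1/(r:ℝ)^p + ε) * ((L:ℝ) + 2*(p:ℝ)) := by
          apply mul_le_mul_of_nonneg_left hL2p (by positivity)
        linarith
      have hrphalf : 1/(r:ℝ)^p < ε/2 := by
        have he : 1/(r:ℝ)^p = (2/(r:ℝ)^p)/2 := by ring
        linarith
      have h3p : 3*(p:ℝ) < ε * (L:ℝ) := by
        rw [div_lt_iff₀ hLr] at hlen
        linarith
      have hL2p0 : (0:ℝ) ≤ (L:ℝ) + 2*(p:ℝ) := by positivity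
      have hq1' : (1/(r:ℝ)^p + ε) * ((L:ℝ) + 2*(p:ℝ)) ≤
          (3*ε/2) * ((L:ℝ)+2*(p:ℝ)) :=
        mul_le_mul_of_nonneg_right (by linarith) hL2p0
      have hexp : (3*ε/2) * ((L:ℝ)+2*(p:ℝ)) = (3/2)*(ε*(L:ℝ)) + ε*(3*(p:ℝ)) := by ring
      have hεp : ε * (3*(p:ℝ)) < ε * (ε * (L:ℝ)) := mul_lt_mul_of_pos_left h3p hε
      have hεL0 : (0:ℝ) ≤ ε * (L:ℝ) := by positivity
      have hε2 : ε * (ε * (L:ℝ)) ≤ (1/5) * (ε * (L:ℝ)) :=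
        mul_le_mul_of_nonneg_right hε5 hεL0
      have h2p : 2*(p:ℝ) < (2/3) * (ε*(L:ℝ)) := by linarith
      linarith
    calc discrepN r (fun i : Fin L => rdigit r x (A + i.val))
        ≤ discrepN r (fun i : Fin L => rdigit r q (A + i.val)) + (Δ.card : ℝ)/(L:ℝ) :=
          hclose
      _ < 5*ε := by linarith
  · -- Case 1: digits agree except possibly at position M
    push_neg at hex
    have hagree : ∀ i : Fin L, rdigit r x (A + i.val) ≠ rdigit r q (A + i.val) →
        A + i.val = M := by
      intro i hne
      by_contra hiM
      have hjM : A + i.val ≤ M1 := by have := i.isLt; omega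
      have hj1 : 1 ≤ A + i.val := by omega
      have hFGj : F (A+i.val) = G (A+i.val) := by
        have h1 := hGF (A+i.val)
        have h2 := hex (A+i.val) ⟨hj1, hjM⟩
        omega
      exact hne (hdig_eq _ hFGj)
    set Δ : Finset (Fin L) := Finset.univ.filter (fun i => A + i.val = M) with hΔdef
    have hΔcard : Δ.card ≤ 1 := by
      apply Finset.card_le_one.mpr
      intro i hi j hj
      rw [hΔdef, Finset.mem_filter] at hi hj
      apply Fin.ext
      omega
    have hclose := discrepN_le_of_close hr hLpos
      (fun i : Fin L => rdigit r x (A + i.val)) (fun i : Fin L => rdigit r q (A + i.val)) Δ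
      (fun i hne => by
        rw [hΔdef, Finset.mem_filter]
        exact ⟨Finset.mem_univ i, hagree i hne⟩)
    have hΔr : (Δ.card : ℝ) ≤ 1 := by exact_mod_cast hΔcard
    have h1L : (1:ℝ)/(L:ℝ) ≤ 3*(p:ℝ)/(L:ℝ) := by
      apply div_le_div_of_nonneg_right ?_ hLr.le |>.trans_eq rfl
      have : (1:ℝ) ≤ (p:ℝ) := by exact_mod_cast hp
      linarith
    have hΔL : (Δ.card : ℝ)/(L:ℝ) ≤ 1/(L:ℝ) :=
      div_le_div_of_nonneg_right hΔr hLr.le |>.trans_eq rfl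
    calc discrepN r (fun i : Fin L => rdigit r x (A + i.val))
        ≤ discrepN r (fun i : Fin L => rdigit r q (A + i.val)) + (Δ.card : ℝ)/(L:ℝ) := hclose
      _ < 5 * ε := by linarith
end

section
/- Let s and t be bases and let I be an s-adic interval of length s^{−⟨b;s⟩} for a positive integer b. For a = b + ⌈log s + 3 log t⌉, there is a t-adic subinterval of I of length t^{−⟨a;t⟩}. -/
/-- Key inequality: `2 * s^⟨b;s⟩ ≤ t^⟨a;t⟩`. -/
lemma key15 (s t : ℕ) (hs : 2 ≤ s) (ht : 2 ≤ t) (b : ℕ)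
    (a : ℕ) (ha : a = b + (⌈Real.log s + 3 * Real.log t⌉).toNat) :
    2 * (s : ℝ) ^ (nal b s) ≤ (t : ℝ) ^ (nal a t) := by
  have hs1 : (1 : ℝ) < s := by exact_mod_cast Nat.lt_of_lt_of_le one_lt_two hs
  have ht1 : (1 : ℝ) < t := by exact_mod_cast Nat.lt_of_lt_of_le one_lt_two ht
  have hls : 0 < Real.log s := Real.log_pos hs1
  have hlt : 0 < Real.log t := Real.log_pos ht1
  set M := nal b s with hM
  set N := nal a t with hN
  -- M * log s ≤ b + log s
  have hMle : (M : ℝ) * Real.log s ≤ (b : ℝ) + Real.log s := by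
    have h1 : ((⌈(b : ℝ) / Real.log s⌉ : ℤ) : ℝ) < (b : ℝ) / Real.log s + 1 :=
      Int.ceil_lt_add_one _
    have h0 : (0 : ℤ) ≤ ⌈(b : ℝ) / Real.log s⌉ :=
      Int.ceil_nonneg (by positivity)
    have h2 : ((M : ℕ) : ℝ) = ((⌈(b : ℝ) / Real.log s⌉ : ℤ) : ℝ) := by
      rw [hM, nal]; exact_mod_cast Int.toNat_of_nonneg h0
    have h3 : (M : ℝ) ≤ (b : ℝ) / Real.log s + 1 := by rw [h2]; linarith
    have h4 : (b : ℝ) / Real.log s * Real.log s = b := div_mul_cancel₀ _ (ne_of_gt hls)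
    nlinarith
  -- a ≤ N * log t
  have hNge : (a : ℝ) ≤ (N : ℝ) * Real.log t := by
    have h1 : (a : ℝ) / Real.log t ≤ ((⌈(a : ℝ) / Real.log t⌉ : ℤ) : ℝ) := Int.le_ceil _
    have h2 : ((⌈(a : ℝ) / Real.log t⌉ : ℤ) : ℝ) ≤ (N : ℝ) := by
      rw [hN, nal]; exact_mod_cast Int.self_le_toNat _
    have h3 : (a : ℝ) / Real.log t ≤ (N : ℝ) := le_trans h1 h2
    have h4 : (a : ℝ) / Real.log t * Real.log t = a := div_mul_cancel₀ _ (ne_of_gt hlt)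
    nlinarith
  -- b + log s + 3 log t ≤ a
  have haa : (b : ℝ) + (Real.log s + 3 * Real.log t) ≤ (a : ℝ) := by
    have h1 : Real.log s + 3 * Real.log t ≤
        ((⌈Real.log s + 3 * Real.log t⌉ : ℤ) : ℝ) := Int.le_ceil _
    have h2 : ((⌈Real.log s + 3 * Real.log t⌉ : ℤ) : ℝ) ≤
        (((⌈Real.log s + 3 * Real.log t⌉).toNat : ℕ) : ℝ) := by
      exact_mod_cast Int.self_le_toNat _
    have : (a : ℝ) = (b : ℝ) + (((⌈Real.log s + 3 * Real.log t⌉).toNat : ℕ) : ℝ) := by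
      rw [ha]; push_cast; ring
    linarith
  -- exponential comparisons
  have hsM : (s : ℝ) ^ M = Real.exp ((M : ℝ) * Real.log s) := by
    rw [Real.exp_nat_mul, Real.exp_log (by linarith)]
  have htN : (t : ℝ) ^ N = Real.exp ((N : ℝ) * Real.log t) := by
    rw [Real.exp_nat_mul, Real.exp_log (by linarith)]
  rw [hsM, htN]
  have step1 : Real.exp ((M : ℝ) * Real.log s) ≤ Real.exp ((b : ℝ) + Real.log s) :=
    Real.exp_le_exp.mpr hMle
  have step2 : Real.exp ((b : ℝ) + Real.log s + 3 * Real.log t) ≤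
      Real.exp ((N : ℝ) * Real.log t) := Real.exp_le_exp.mpr (by linarith)
  have hexp : Real.exp ((b : ℝ) + Real.log s + 3 * Real.log t) =
      Real.exp ((b : ℝ) + Real.log s) * (t : ℝ) ^ 3 := by
    rw [show (b : ℝ) + Real.log s + 3 * Real.log t
        = ((b : ℝ) + Real.log s) + (3 : ℕ) * Real.log t by push_cast; ring,
      Real.exp_add, Real.exp_nat_mul, Real.exp_log (by linarith)]
  have ht2 : (2 : ℝ) ≤ (t : ℝ) := by exact_mod_cast ht
  have ht3 : (8 : ℝ) ≤ (t : ℝ) ^ 3 := by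
    calc (8 : ℝ) = 2 ^ 3 := by norm_num
      _ ≤ (t : ℝ) ^ 3 := pow_le_pow_left₀ (by norm_num) ht2 3
  have hpos : 0 < Real.exp ((b : ℝ) + Real.log s) := Real.exp_pos _
  nlinarith

/-- Let `I = [a₀/s^⟨b;s⟩, (a₀+1)/s^⟨b;s⟩)` be an `s`-adic interval of length
`s^{-⟨b;s⟩}`.  For `a = b + ⌈log s + 3 log t⌉` there is a `t`-adic subinterval of `I`
of length `t^{-⟨a;t⟩}`. -/
theorem statement15 (s t : ℕ) (hs : 2 ≤ s) (ht : 2 ≤ t) (b : ℕ) (hb : 0 < b)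
    (a : ℕ) (ha : a = b + (⌈Real.log s + 3 * Real.log t⌉).toNat) (a₀ : ℕ) :
    ∃ c : ℕ,
      Set.Ico ((c : ℝ) / (t : ℝ) ^ (nal a t)) (((c : ℝ) + 1) / (t : ℝ) ^ (nal a t)) ⊆
        Set.Ico ((a₀ : ℝ) / (s : ℝ) ^ (nal b s)) (((a₀ : ℝ) + 1) / (s : ℝ) ^ (nal b s)) := by
  have key := key15 s t hs ht b a ha
  set M := nal b s
  set N := nal a t
  have hsM : (0 : ℝ) < (s : ℝ) ^ M := by positivity
  have htN : (0 : ℝ) < (t : ℝ) ^ N := by positivity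
  set x : ℝ := (a₀ : ℝ) * (t : ℝ) ^ N / (s : ℝ) ^ M with hx
  have hxnn : 0 ≤ x := by positivity
  refine ⟨(⌈x⌉).toNat, ?_⟩
  have hceq : (((⌈x⌉).toNat : ℕ) : ℝ) = ((⌈x⌉ : ℤ) : ℝ) := by
    exact_mod_cast Int.toNat_of_nonneg (Int.ceil_nonneg hxnn)
  have hc1 : x ≤ (((⌈x⌉).toNat : ℕ) : ℝ) := by rw [hceq]; exact Int.le_ceil _
  have hc2 : (((⌈x⌉).toNat : ℕ) : ℝ) < x + 1 := by rw [hceq]; exact Int.ceil_lt_add_one _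
  intro y hy
  obtain ⟨hy1, hy2⟩ := hy
  constructor
  · -- a₀ / s^M ≤ y
    have h1 : (a₀ : ℝ) / (s : ℝ) ^ M ≤ (((⌈x⌉).toNat : ℕ) : ℝ) / (t : ℝ) ^ N := by
      rw [div_le_div_iff₀ hsM htN]
      have := mul_le_mul_of_nonneg_right hc1 (le_of_lt hsM)
      rw [hx, div_mul_cancel₀ _ (ne_of_gt hsM)] at this
      linarith
    linarith
  · -- y < (a₀ + 1) / s^M
    have h2 : ((((⌈x⌉).toNat : ℕ) : ℝ) + 1) / (t : ℝ) ^ N ≤ ((a₀ : ℝ) + 1) / (s : ℝ) ^ M := by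
      rw [div_le_div_iff₀ htN hsM]
      have h3 : ((((⌈x⌉).toNat : ℕ) : ℝ) + 1) * (s : ℝ) ^ M < (x + 2) * (s : ℝ) ^ M := by
        nlinarith
      have h4 : x * (s : ℝ) ^ M = (a₀ : ℝ) * (t : ℝ) ^ N := by
        rw [hx, div_mul_cancel₀ _ (ne_of_gt hsM)]
      nlinarith
    linarith
end

section
/- Let ε be a positive real, r a base, (w_j)_{j≥0} an infinite sequence of elements of {0,1,...,r−1}, and (b_t)_{t≥0} an increasing sequence of positive integers. Suppose there is an integer t_0 such that for all t > t_0: b_{t+1} − b_t ≤ ε·b_t and D((w_{b_t+1},...,w_{b_{t+1}}), B_r) < ε. Then limsup_{k→∞} D((w_0,...,w_k), B_r) ≤ 2ε. -/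
/-- The simple discrepancy of a block `w` of length `L` over the digit set `B_r`:
`D(w,B_r) = max_{d < r} |occ(w,d)/L − 1/r|`. -/
noncomputable def discrepancy {r : ℕ} {L : ℕ} (w : Fin L → Fin r) : ℝ :=
  ⨆ d : Fin r, |((Finset.univ.filter (fun i => w i = d)).card : ℝ) / (L : ℝ) - 1 / (r : ℝ)|

/-- Splitting a digit count over `range (m + s)`. -/
lemma count_split (p : ℕ → Prop) [DecidablePred p] (m s : ℕ) :
    ((Finset.range (m + s)).filter p).card
      = ((Finset.range m).filter p).card
        + ((Finset.range s).filter (fun i => p (m + i))).card := by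
  induction s with
  | zero => simp
  | succ s ih =>
    rw [← Nat.add_assoc, Finset.range_add_one, Finset.range_add_one, Finset.filter_insert,
      Finset.filter_insert]
    by_cases h : p (m + s)
    · rw [if_pos h, if_pos h, Finset.card_insert_of_notMem (by simp),
        Finset.card_insert_of_notMem (by simp), ih]
      omega
    · rw [if_neg h, if_neg h, ih]

/-- Counting over `Fin n` equals counting over `range n`. -/
lemma fin_count {r : ℕ} (n : ℕ) (W : ℕ → Fin r) (d : Fin r) :
    (Finset.univ.filter (fun i : Fin n => W i.val = d)).card
      = ((Finset.range n).filter (fun i => W i = d)).card := by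
  rw [Finset.card_filter, Finset.card_filter]
  exact Fin.sum_univ_eq_sum_range (fun i => if W i = d then 1 else 0) n

lemma disc_eq {r : ℕ} (n : ℕ) (W : ℕ → Fin r) :
    discrepancy (fun i : Fin n => W i.val)
      = ⨆ d : Fin r,
          |(((Finset.range n).filter (fun i => W i = d)).card : ℝ) / (n : ℝ) - 1 / (r : ℝ)| := by
  unfold discrepancy
  congr 1
  ext d
  rw [fin_count]

theorem statement17 (ε : ℝ) (hε : 0 < ε) (r : ℕ) (hr : 2 ≤ r)
    (w : ℕ → Fin r) (b : ℕ → ℕ) (hb : StrictMono b) (hb0 : ∀ t, 0 < b t)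
    (t₀ : ℕ)
    (hgap : ∀ t > t₀, ((b (t + 1) - b t : ℕ) : ℝ) ≤ ε * (b t : ℝ))
    (hdisc : ∀ t > t₀,
      discrepancy (fun i : Fin (b (t + 1) - b t) => w (b t + 1 + i.val)) < ε) :
    Filter.limsup (fun k : ℕ => discrepancy (fun i : Fin (k + 1) => w i.val))
      Filter.atTop ≤ 2 * ε := by
  have hrpos : (0 : ℝ) < r := by positivity
  have hr1 : (1 : ℝ) ≤ r := by exact_mod_cast Nat.one_le_of_lt hr
  haveI : Nonempty (Fin r) := ⟨⟨0, by omega⟩⟩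
  set T : ℕ := t₀ + 1 with hT
  set C : ℝ := (b T : ℝ) + 1 with hC
  have hCpos : 0 < C := by positivity
  set g : ℕ → Fin r → ℕ := fun n d => ((Finset.range n).filter (fun i => w i = d)).card
    with hg
  have hgle : ∀ n d, g n d ≤ n := by
    intro n d
    simpa using (Finset.card_filter_le (Finset.range n) (fun i => w i = d))
  -- crude bound: any count p ≤ m satisfies |p - m/r| ≤ m
  have crude : ∀ (m p : ℕ), p ≤ m → |(p : ℝ) - (m : ℝ) / r| ≤ (m : ℝ) := by
    intro m p hpm
    have h1 : (p : ℝ) ≤ m := by exact_mod_cast hpm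
    have h2 : 0 ≤ (m : ℝ) / r := by positivity
    have h3 : (m : ℝ) / r ≤ m := div_le_self (Nat.cast_nonneg m) hr1
    have hp0 : (0 : ℝ) ≤ (p : ℝ) := Nat.cast_nonneg p
    rw [abs_le]
    constructor <;> linarith
  -- per-digit bound from discrepancy of blocks
  have block : ∀ t > t₀, ∀ d : Fin r,
      |(((Finset.range (b (t+1) - b t)).filter
            (fun i => w (b t + 1 + i) = d)).card : ℝ)
          - ((b (t+1) - b t : ℕ) : ℝ) / r| ≤ ε * ((b (t+1) - b t : ℕ) : ℝ) := by
    intro t ht d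
    set L : ℕ := b (t+1) - b t with hL
    have hLpos : 0 < L := by have := hb (by omega : t < t + 1); omega
    have hLR : (0 : ℝ) < L := by exact_mod_cast hLpos
    set c : ℕ := ((Finset.range L).filter (fun i => w (b t + 1 + i) = d)).card with hc
    set F : Fin r → ℝ := fun e =>
      |(((Finset.range L).filter (fun i => w (b t + 1 + i) = e)).card : ℝ) / L - 1 / r|
      with hF
    have hdt := hdisc t ht
    rw [disc_eq L (fun j => w (b t + 1 + j))] at hdt
    have hdt' : (⨆ e, F e) < ε := hdt
    have hlt : |(c : ℝ) / L - 1 / r| < ε :=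
      lt_of_le_of_lt (le_ciSup (f := F) (Set.Finite.bddAbove (Set.finite_range F)) d) hdt'
    have key : |(c : ℝ) - (L : ℝ) / r| = |(c : ℝ) / L - 1 / r| * L := by
      rw [← abs_of_pos hLR, ← abs_mul]
      congr 1
      field_simp
      rw [abs_of_pos hLR]; ring
    rw [key]
    exact mul_le_mul_of_nonneg_right hlt.le hLR.le
  -- counting chain: g (b (t+1) + 1) d = g (b t + 1) d + block count
  have chain : ∀ t > t₀, ∀ d : Fin r,
      g (b (t+1) + 1) d = g (b t + 1) d
        + ((Finset.range (b (t+1) - b t)).filter (fun i => w (b t + 1 + i) = d)).card := by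
    intro t ht d
    have hlt : b t < b (t+1) := hb (Nat.lt_succ_self t)
    have : b (t+1) + 1 = (b t + 1) + (b (t+1) - b t) := by omega
    rw [hg]
    simp only
    rw [this, count_split]
  -- main induction
  have main : ∀ t, T ≤ t → ∀ d : Fin r,
      |(g (b t + 1) d : ℝ) - ((b t + 1 : ℕ) : ℝ) / r|
        ≤ ε * ((b t : ℝ) - (b T : ℝ)) + C := by
    intro t ht
    induction t, ht using Nat.le_induction with
    | base =>
      intro d
      have h := crude (b T + 1) (g (b T + 1) d) (hgle _ _)
      have : ε * ((b T : ℝ) - (b T : ℝ)) = 0 := by ring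
      rw [this, zero_add, hC]
      calc |(g (b T + 1) d : ℝ) - ((b T + 1 : ℕ) : ℝ) / r| ≤ ((b T + 1 : ℕ) : ℝ) := h
        _ = (b T : ℝ) + 1 := by push_cast; ring
    | succ t ht ih =>
      intro d
      have htgt : t > t₀ := by omega
      have hlt : b t < b (t+1) := hb (Nat.lt_succ_self t)
      have hLcast : ((b (t+1) - b t : ℕ) : ℝ) = (b (t+1) : ℝ) - (b t : ℝ) := by
        rw [Nat.cast_sub hlt.le]
      set c : ℕ :=
        ((Finset.range (b (t+1) - b t)).filter (fun i => w (b t + 1 + i) = d)).card with hc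
      have hch := chain t htgt d
      have hb1 := block t htgt d
      rw [← hc] at hch hb1
      have hsplit : (g (b (t+1) + 1) d : ℝ) - ((b (t+1) + 1 : ℕ) : ℝ) / r
          = ((g (b t + 1) d : ℝ) - ((b t + 1 : ℕ) : ℝ) / r)
            + ((c : ℝ) - ((b (t+1) - b t : ℕ) : ℝ) / r) := by
        rw [hch]
        push_cast [Nat.cast_sub hlt.le]
        field_simp
        ring
      calc |(g (b (t+1) + 1) d : ℝ) - ((b (t+1) + 1 : ℕ) : ℝ) / r|
          ≤ |(g (b t + 1) d : ℝ) - ((b t + 1 : ℕ) : ℝ) / r|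
            + |(c : ℝ) - ((b (t+1) - b t : ℕ) : ℝ) / r| := by
            rw [hsplit]; exact abs_add_le _ _
        _ ≤ (ε * ((b t : ℝ) - (b T : ℝ)) + C) + ε * ((b (t+1) - b t : ℕ) : ℝ) :=
            add_le_add (ih d) hb1
        _ = ε * ((b (t+1) : ℝ) - (b T : ℝ)) + C := by rw [hLcast]; ring
  -- prefix bound for arbitrary k ≥ b T
  have prefixbd : ∀ k, b T ≤ k → ∀ d : Fin r,
      |(g (k+1) d : ℝ) - ((k + 1 : ℕ) : ℝ) / r| ≤ 2 * ε * ((k : ℝ) + 1) + C := by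
    intro k hk d
    -- find t with b t ≤ k < b (t+1), T ≤ t
    set t : ℕ := Nat.findGreatest (fun t => b t ≤ k) k with ht
    have hTk : T ≤ k := le_trans hb.le_apply hk
    have hTt : T ≤ t := Nat.le_findGreatest hTk hk
    have hbtk : b t ≤ k := by
      have := Nat.findGreatest_spec (P := fun t => b t ≤ k) hTk hk
      exact this
    have hkbt1 : k < b (t+1) := by
      by_contra h
      push_neg at h
      have h1 : t + 1 ≤ k := le_trans hb.le_apply h
      exact Nat.findGreatest_is_greatest (Nat.lt_succ_self t) h1 h
    have htgt : t > t₀ := by omega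
    set m : ℕ := k - b t with hm
    have hkm : k + 1 = (b t + 1) + m := by omega
    set p : ℕ := ((Finset.range m).filter (fun i => w (b t + 1 + i) = d)).card with hp
    have hpm : p ≤ m := by
      simpa using (Finset.card_filter_le (Finset.range m) (fun i => w (b t + 1 + i) = d))
    have hsplitn : g (k+1) d = g (b t + 1) d + p := by
      rw [hg]; simp only; rw [hkm, count_split]
    have hmL : (m : ℝ) ≤ ε * (b t : ℝ) := by
      have h1 : (m : ℝ) ≤ ((b (t+1) - b t : ℕ) : ℝ) := by
        have : m ≤ b (t+1) - b t := by omega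
        exact_mod_cast this
      exact le_trans h1 (hgap t htgt)
    have hbtle : (b t : ℝ) ≤ (k : ℝ) + 1 := by
      have : (b t : ℝ) ≤ (k : ℝ) := by exact_mod_cast hbtk
      linarith
    have hbT0 : (0 : ℝ) ≤ (b T : ℝ) := Nat.cast_nonneg _
    have hsplit : (g (k+1) d : ℝ) - ((k + 1 : ℕ) : ℝ) / r
        = ((g (b t + 1) d : ℝ) - ((b t + 1 : ℕ) : ℝ) / r) + ((p : ℝ) - (m : ℝ) / r) := by
      rw [hsplitn, hkm]
      push_cast
      field_simp
      ring
    calc |(g (k+1) d : ℝ) - ((k + 1 : ℕ) : ℝ) / r|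
        ≤ |(g (b t + 1) d : ℝ) - ((b t + 1 : ℕ) : ℝ) / r| + |(p : ℝ) - (m : ℝ) / r| := by
          rw [hsplit]; exact abs_add_le _ _
      _ ≤ (ε * ((b t : ℝ) - (b T : ℝ)) + C) + (m : ℝ) :=
          add_le_add (main t hTt d) (crude m p hpm)
      _ ≤ (ε * ((k : ℝ) + 1) + C) + ε * ((k : ℝ) + 1) := by
          have h1 : ε * ((b t : ℝ) - (b T : ℝ)) ≤ ε * ((k : ℝ) + 1) := by
            apply mul_le_mul_of_nonneg_left _ hε.le
            linarith
          have h2 : (m : ℝ) ≤ ε * ((k : ℝ) + 1) :=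
            le_trans hmL (mul_le_mul_of_nonneg_left hbtle hε.le)
          linarith
      _ = 2 * ε * ((k : ℝ) + 1) + C := by ring
  -- pointwise bound on the discrepancy of prefixes
  set f : ℕ → ℝ := fun k => discrepancy (fun i : Fin (k + 1) => w i.val) with hf
  have hfb : ∀ k, b T ≤ k → f k ≤ 2 * ε + C / ((k : ℝ) + 1) := by
    intro k hk
    have hn : (0 : ℝ) < (k : ℝ) + 1 := by positivity
    show discrepancy (fun i : Fin (k + 1) => w i.val) ≤ 2 * ε + C / ((k : ℝ) + 1)
    rw [disc_eq (k+1) w]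
    apply ciSup_le
    intro d
    have hkc : ((k + 1 : ℕ) : ℝ) = (k : ℝ) + 1 := by push_cast; ring
    have h1 : |(g (k+1) d : ℝ) / ((k+1 : ℕ) : ℝ) - 1 / r|
        = |(g (k+1) d : ℝ) - ((k+1 : ℕ) : ℝ) / r| / ((k : ℝ) + 1) := by
      rw [hkc]
      have e1 : (g (k+1) d : ℝ) / ((k : ℝ) + 1) - 1 / r
          = ((g (k+1) d : ℝ) - ((k : ℝ) + 1) / r) / ((k : ℝ) + 1) := by
        field_simp
      rw [e1, abs_div, abs_of_pos hn]
    have h2 := prefixbd k hk d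
    calc |(g (k+1) d : ℝ) / ((k+1 : ℕ) : ℝ) - 1 / r|
        = |(g (k+1) d : ℝ) - ((k+1 : ℕ) : ℝ) / r| / ((k : ℝ) + 1) := h1
      _ ≤ (2 * ε * ((k : ℝ) + 1) + C) / ((k : ℝ) + 1) := by
          gcongr
      _ = 2 * ε + C / ((k : ℝ) + 1) := by field_simp
  -- f is nonnegative
  have hfnn : ∀ k, 0 ≤ f k := by
    intro k
    show (0 : ℝ) ≤ discrepancy (fun i : Fin (k + 1) => w i.val)
    rw [disc_eq (k+1) w]
    exact Real.iSup_nonneg (fun d => abs_nonneg _)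
  have hcb : Filter.IsCoboundedUnder (· ≤ ·) Filter.atTop f :=
    Filter.isCoboundedUnder_le_of_le Filter.atTop hfnn
  -- conclude
  apply le_of_forall_pos_le_add
  intro δ hδ
  apply Filter.limsup_le_of_le hcb
  obtain ⟨N, hN⟩ := exists_nat_ge (C / δ)
  filter_upwards [Filter.eventually_ge_atTop (max (b T) N)] with k hk
  have hk1 : b T ≤ k := le_trans (le_max_left _ _) hk
  have hk2 : (N : ℝ) ≤ (k : ℝ) := by exact_mod_cast le_trans (le_max_right _ _) hk
  have hkpos : (0 : ℝ) < (k : ℝ) + 1 := by positivity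
  have hCd : C / ((k : ℝ) + 1) ≤ δ := by
    rw [div_le_iff₀ hkpos]
    have : C / δ ≤ (k : ℝ) := le_trans hN hk2
    rw [div_le_iff₀ hδ] at this
    nlinarith
  calc f k ≤ 2 * ε + C / ((k : ℝ) + 1) := hfb k hk1
    _ ≤ 2 * ε + δ := by linarith
end
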